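/- arXiv:2508.18178 — 11 statements merged into one kernel-verified Lean document; each statement's English description precedes it below -/
import Mathlib

section
/- Let U and V be real Hilbert spaces and A : U → V a nonzero compact bounded linear operator. Then there exist N ∈ ℕ ∪ {∞}, a nonincreasing sequence (σ_i)_{i<N} of positive real numbers (which is a null sequence if N = ∞), an orthonormal family (u_i)_{i<N} in U whose closed linear span is ker(A)^⊥, and an orthonormal family (v_i)_{i<N} in V whose closed linear span is the closure of range(A), such that A u_i = σ_i v_i and A* v_i = σ_i u_i for every i < N, and moreover A u = Σ_{i<N} σ_i ⟨u, u_i⟩ v_i for every u ∈ U. -/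
open scoped Topology RealInnerProductSpace
open Filter

set_option maxHeartbeats 1000000
set_option synthInstance.maxHeartbeats 400000

namespace SVDProof

variable {H : Type*} [NormedAddCommGroup H] [InnerProductSpace ℝ H]

lemma form_cs (T : H →L[ℝ] H) (hsym : ∀ x y : H, ⟪T x, y⟫ = ⟪x, T y⟫)
    (hpos : ∀ x : H, 0 ≤ ⟪T x, x⟫) (x y : H) :
    ⟪T x, y⟫ ^ 2 ≤ ⟪T x, x⟫ * ⟪T y, y⟫ := by
  have hyx : ⟪T y, x⟫ = ⟪T x, y⟫ := by rw [hsym y x, real_inner_comm]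
  have key : ∀ t : ℝ, 0 ≤ ⟪T y, y⟫ * (t * t) + (2 * ⟪T x, y⟫) * t + ⟪T x, x⟫ := by
    intro t
    have h0 := hpos (x + t • y)
    have expand : ⟪T (x + t • y), x + t • y⟫
        = ⟪T x, x⟫ + t * ⟪T x, y⟫ + t * ⟪T y, x⟫ + t ^ 2 * ⟪T y, y⟫ := by
      simp only [map_add, map_smul, inner_add_left, inner_add_right,
        real_inner_smul_left, real_inner_smul_right]
      ring
    rw [expand, hyx] at h0
    nlinarith [h0]
  have hd := discrim_le_zero key
  rw [discrim] at hd
  nlinarith [hd]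

lemma opnorm_le_of_unit {H' : Type*} [NormedAddCommGroup H'] [NormedSpace ℝ H']
    (T : H →L[ℝ] H') {c : ℝ} (hc : 0 ≤ c) (h : ∀ x : H, ‖x‖ = 1 → ‖T x‖ ≤ c) :
    ‖T‖ ≤ c := by
  refine T.opNorm_le_bound hc fun x => ?_
  rcases eq_or_ne x 0 with rfl | hx
  · simp [hc]
  · have hx' : ‖x‖ ≠ 0 := norm_ne_zero_iff.mpr hx
    have h1 : ‖T ((‖x‖⁻¹ : ℝ) • x)‖ ≤ c := h _ (norm_smul_inv_norm hx)
    rw [map_smul, norm_smul, norm_inv, norm_norm] at h1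
    rw [mul_comm]
    calc ‖T x‖ = ‖x‖ * (‖x‖⁻¹ * ‖T x‖) := by field_simp
    _ ≤ ‖x‖ * c := by
        apply mul_le_mul_of_nonneg_left h1 (norm_nonneg x)

lemma opnorm_le_of_inner_le (T : H →L[ℝ] H) (hsym : ∀ x y : H, ⟪T x, y⟫ = ⟪x, T y⟫)
    (hpos : ∀ x : H, 0 ≤ ⟪T x, x⟫) {c : ℝ} (hc : 0 ≤ c)
    (h : ∀ x : H, ‖x‖ = 1 → ⟪T x, x⟫ ≤ c) : ‖T‖ ≤ c := by
  refine opnorm_le_of_unit T hc fun x hx => ?_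
  by_cases hTx : T x = 0
  · simp [hTx, hc]
  · have hTx' : ‖T x‖ ≠ 0 := norm_ne_zero_iff.mpr hTx
    set y := (‖T x‖⁻¹ : ℝ) • T x with hy
    have hy1 : ‖y‖ = 1 := norm_smul_inv_norm hTx
    have h1 : ⟪T x, y⟫ = ‖T x‖ := by
      rw [hy, real_inner_smul_right, real_inner_self_eq_norm_sq]
      field_simp
    have h2 : ⟪T x, y⟫ ^ 2 ≤ c * c := by
      refine (form_cs T hsym hpos x y).trans ?_
      exact mul_le_mul (h x hx) (h y hy1) (hpos y) hc
    rw [h1] at h2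
    nlinarith [norm_nonneg (T x), h2]


lemma exists_eigen [CompleteSpace H] (T : H →L[ℝ] H) (hcpt : IsCompactOperator ⇑T)
    (hsym : ∀ x y : H, ⟪T x, y⟫ = ⟪x, T y⟫) (hpos : ∀ x : H, 0 ≤ ⟪T x, x⟫)
    (hT : T ≠ 0) : ∃ u : H, ‖u‖ = 1 ∧ T u = ‖T‖ • u := by
  set M := ‖T‖ with hM
  have hM0 : 0 < M := norm_pos_iff.mpr hT
  -- maximizing sequence
  have happrox : ∀ n : ℕ, ∃ x : H, ‖x‖ = 1 ∧ M - 1 / (n + 1) < ⟪T x, x⟫ := by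
    intro n
    by_contra hcon
    push_neg at hcon
    obtain ⟨z, hz⟩ : ∃ z, T z ≠ 0 := by
      by_contra h
      push_neg at h
      exact hT (ContinuousLinearMap.ext fun z => by simp [h z])
    have hz0 : z ≠ 0 := fun h => hz (by simp [h])
    have hunit : ‖((‖z‖⁻¹ : ℝ) • z : H)‖ = 1 := norm_smul_inv_norm hz0
    have hc0 : (0 : ℝ) ≤ M - 1 / (n + 1) := le_trans (hpos _) (hcon _ hunit)
    have hb := opnorm_le_of_inner_le T hsym hpos hc0 hcon
    have hpos' : (0 : ℝ) < 1 / (n + 1 : ℝ) := by positivity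
    rw [← hM] at hb
    linarith
  choose x hx1 hx2 using happrox
  have hTxle : ∀ n, ‖T (x n)‖ ≤ M := fun n => by
    simpa [hx1 n] using T.le_opNorm (x n)
  have hupper : ∀ n, ⟪T (x n), x n⟫ ≤ M := fun n =>
    le_trans (real_inner_le_norm _ _) (by simpa [hx1 n] using hTxle n)
  have hlower : Tendsto (fun n : ℕ => M - 1 / (n + 1)) atTop (𝓝 M) := by
    have := tendsto_one_div_add_atTop_nhds_zero_nat (𝕜 := ℝ)
    simpa using tendsto_const_nhds.sub this
  have hlim : Tendsto (fun n => ⟪T (x n), x n⟫) atTop (𝓝 M) :=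
    tendsto_of_tendsto_of_tendsto_of_le_of_le hlower tendsto_const_nhds
      (fun n => (hx2 n).le) hupper
  -- T xₙ - M xₙ → 0
  have hdiffsq : ∀ n, ‖T (x n) - M • x n‖ ^ 2 ≤ 2 * M ^ 2 - 2 * M * ⟪T (x n), x n⟫ := by
    intro n
    have hexp := @norm_sub_sq_real H _ _ (T (x n)) (M • x n)
    have h1 : ⟪T (x n), M • x n⟫ = M * ⟪T (x n), x n⟫ := real_inner_smul_right _ _ _
    have h2 : ‖M • x n‖ = M := by rw [norm_smul, hx1 n]; simp [abs_of_pos hM0]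
    have h3 : ‖T (x n)‖ ^ 2 ≤ M ^ 2 := by nlinarith [hTxle n, norm_nonneg (T (x n))]
    rw [hexp, h1, h2]
    nlinarith
  have hsqlim : Tendsto (fun n => ‖T (x n) - M • x n‖ ^ 2) atTop (𝓝 0) := by
    have hub : Tendsto (fun n => 2 * M ^ 2 - 2 * M * ⟪T (x n), x n⟫) atTop (𝓝 0) := by
      have h := (tendsto_const_nhds (x := (2 * M ^ 2 : ℝ))).sub
        (hlim.const_mul (2 * M))
      have he : 2 * M ^ 2 - 2 * M * M = 0 := by ring
      rwa [he] at h
    exact tendsto_of_tendsto_of_tendsto_of_le_of_le tendsto_const_nhds hub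
      (fun n => sq_nonneg _) hdiffsq
  have hdiff : Tendsto (fun n => T (x n) - M • x n) atTop (𝓝 0) := by
    rw [tendsto_zero_iff_norm_tendsto_zero]
    have := (Real.continuous_sqrt.tendsto 0).comp hsqlim
    simpa [Function.comp_def, Real.sqrt_sq (norm_nonneg _)] using this
  -- compactness
  have hcpt' : IsCompactOperator ⇑(T : H →ₗ[ℝ] H) := hcpt
  have hK : IsCompact (closure (⇑(T : H →ₗ[ℝ] H) '' Metric.closedBall 0 1)) :=
    hcpt'.isCompact_closure_image_closedBall 1
  have hmem : ∀ n, T (x n) ∈ closure (⇑(T : H →ₗ[ℝ] H) '' Metric.closedBall 0 1) := by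
    intro n
    exact subset_closure ⟨x n, by simp [mem_closedBall_zero_iff, hx1 n], rfl⟩
  obtain ⟨w, -, φ, hφ, hw⟩ := hK.tendsto_subseq hmem
  have hMx : Tendsto (fun n => M • x (φ n)) atTop (𝓝 w) := by
    have h1 : Tendsto (fun n => T (x (φ n)) - M • x (φ n)) atTop (𝓝 0) :=
      hdiff.comp hφ.tendsto_atTop
    have := hw.sub h1
    simpa using this
  have hxφ : Tendsto (fun n => x (φ n)) atTop (𝓝 (M⁻¹ • w)) := by
    have := hMx.const_smul (M⁻¹ : ℝ)
    simpa [inv_smul_smul₀ hM0.ne'] using this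
  refine ⟨M⁻¹ • w, ?_, ?_⟩
  · have h1 : Tendsto (fun n => ‖x (φ n)‖) atTop (𝓝 ‖M⁻¹ • w‖) := hxφ.norm
    have h2 : Tendsto (fun n => ‖x (φ n)‖) atTop (𝓝 1) := by
      simp only [hx1]
      exact tendsto_const_nhds
    exact (tendsto_nhds_unique h1 h2)
  · have h1 : Tendsto (fun n => T (x (φ n))) atTop (𝓝 (T (M⁻¹ • w))) :=
      (T.continuous.tendsto _).comp hxφ
    have h2 : T (M⁻¹ • w) = w := tendsto_nhds_unique h1 hw
    rw [h2, smul_inv_smul₀ hM0.ne']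

/-- The property of a "good pair" (eigenvector, eigenvalue) on a subspace. -/
def Good (T : H →L[ℝ] H) (E : Submodule ℝ H) (p : H × ℝ) : Prop :=
  p.1 ∈ E ∧ ‖p.1‖ = 1 ∧ 0 < p.2 ∧ T p.1 = p.2 • p.1 ∧
    ∀ x ∈ E, ‖T x‖ ≤ p.2 * ‖x‖

lemma exists_good [CompleteSpace H] (T : H →L[ℝ] H) (hcpt : IsCompactOperator ⇑T)
    (hsym : ∀ x y : H, ⟪T x, y⟫ = ⟪x, T y⟫) (hpos : ∀ x : H, 0 ≤ ⟪T x, x⟫)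
    (E : Submodule ℝ H) (hE : IsClosed (E : Set H)) (hinv : ∀ x ∈ E, T x ∈ E)
    (hnz : ¬ ∀ x ∈ E, T x = 0) : ∃ p : H × ℝ, Good T E p := by
  haveI : CompleteSpace E := hE.completeSpace_coe
  set TE : E →L[ℝ] E := (T.comp E.subtypeL).codRestrict E
    (fun x => hinv x x.2) with hTE
  have hTEapp : ∀ x : E, (TE x : H) = T x := fun x => rfl
  have hcptE : IsCompactOperator ⇑TE := by
    have h1 : IsCompactOperator ⇑(T.comp E.subtypeL) := hcpt.comp_clm E.subtypeL
    exact h1.codRestrict (fun x => hinv x x.2) hE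
  have hsymE : ∀ x y : E, ⟪TE x, y⟫ = ⟪x, TE y⟫ := by
    intro x y
    rw [Submodule.coe_inner, Submodule.coe_inner, hTEapp, hTEapp]
    exact hsym x y
  have hposE : ∀ x : E, 0 ≤ ⟪TE x, x⟫ := by
    intro x
    rw [Submodule.coe_inner, hTEapp]
    exact hpos x
  have hTEne : TE ≠ 0 := by
    intro h
    apply hnz
    intro x hx
    have : (TE ⟨x, hx⟩ : H) = 0 := by rw [h]; rfl
    rwa [hTEapp] at this
  obtain ⟨u, hu1, hu2⟩ := exists_eigen TE hcptE hsymE hposE hTEne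
  refine ⟨((u : H), ‖TE‖), u.2, ?_, ?_, ?_, ?_⟩
  · simpa using hu1
  · rcases (norm_nonneg TE).lt_or_eq with h | h
    · exact h
    · exact absurd (ContinuousLinearMap.opNorm_zero_iff TE |>.mp h.symm) hTEne
  · have := congrArg (Subtype.val) hu2
    simpa [hTEapp] using this
  · intro x hx
    have h1 : ‖TE ⟨x, hx⟩‖ ≤ ‖TE‖ * ‖(⟨x, hx⟩ : E)‖ := TE.le_opNorm _
    simpa [hTEapp] using h1

/-- Condition under which the construction can continue. -/
def Cond (T : H →L[ℝ] H) (E : Submodule ℝ H) : Prop :=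
  IsCompactOperator ⇑T ∧ (∀ x y : H, ⟪T x, y⟫ = ⟪x, T y⟫) ∧ (∀ x : H, 0 ≤ ⟪T x, x⟫) ∧
    IsClosed (E : Set H) ∧ (∀ x ∈ E, T x ∈ E) ∧ ¬ ∀ x ∈ E, T x = 0

noncomputable def nextPair [CompleteSpace H] (T : H →L[ℝ] H) (E : Submodule ℝ H) : H × ℝ :=
  @dite _ (Cond T E) (Classical.dec _) (fun h =>
    (exists_good T h.1 h.2.1 h.2.2.1 E h.2.2.2.1 h.2.2.2.2.1 h.2.2.2.2.2).choose)
    (fun _ => (0, 0))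

lemma nextPair_good [CompleteSpace H] {T : H →L[ℝ] H} {E : Submodule ℝ H} (h : Cond T E) :
    Good T E (nextPair T E) := by
  rw [nextPair, dif_pos h]
  exact (exists_good T h.1 h.2.1 h.2.2.1 E h.2.2.2.1 h.2.2.2.2.1 h.2.2.2.2.2).choose_spec

lemma nextPair_zero [CompleteSpace H] {T : H →L[ℝ] H} {E : Submodule ℝ H} (h : ¬ Cond T E) :
    nextPair T E = (0, 0) := by rw [nextPair, dif_neg h]

noncomputable def chain [CompleteSpace H] (T : H →L[ℝ] H) : ℕ → Submodule ℝ H × H × ℝ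
  | 0 => (⊤, nextPair T ⊤)
  | n + 1 =>
    ((chain T n).1 ⊓ (ℝ ∙ (chain T n).2.1)ᗮ,
      nextPair T ((chain T n).1 ⊓ (ℝ ∙ (chain T n).2.1)ᗮ))

variable [CompleteSpace H]

noncomputable def En (T : H →L[ℝ] H) (n : ℕ) : Submodule ℝ H := (chain T n).1
noncomputable def uv (T : H →L[ℝ] H) (n : ℕ) : H := (chain T n).2.1
noncomputable def lam (T : H →L[ℝ] H) (n : ℕ) : ℝ := (chain T n).2.2

lemma En_zero (T : H →L[ℝ] H) : En T 0 = ⊤ := rfl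
lemma En_succ (T : H →L[ℝ] H) (n : ℕ) : En T (n + 1) = En T n ⊓ (ℝ ∙ uv T n)ᗮ := rfl

lemma chain_pair (T : H →L[ℝ] H) (n : ℕ) : (uv T n, lam T n) = nextPair T (En T n) := by
  cases n <;> rfl

variable {T : H →L[ℝ] H}

lemma uv_lam_good {n : ℕ} (h : Cond T (En T n)) : Good T (En T n) (uv T n, lam T n) := by
  rw [chain_pair]; exact nextPair_good h

lemma uv_lam_zero {n : ℕ} (h : ¬ Cond T (En T n)) : uv T n = 0 ∧ lam T n = 0 := by
  have := chain_pair T n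
  rw [nextPair_zero h] at this
  exact ⟨congrArg Prod.fst this, congrArg Prod.snd this⟩

lemma eigen_eq (n : ℕ) : T (uv T n) = lam T n • uv T n := by
  by_cases h : Cond T (En T n)
  · exact (uv_lam_good h).2.2.2.1
  · obtain ⟨h1, h2⟩ := uv_lam_zero h
    simp [h1, h2]

lemma uv_mem (n : ℕ) : uv T n ∈ En T n := by
  by_cases h : Cond T (En T n)
  · exact (uv_lam_good h).1
  · rw [(uv_lam_zero h).1]; exact zero_mem _

lemma En_isClosed (n : ℕ) : IsClosed (En T n : Set H) := by
  induction n with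
  | zero => rw [En_zero]; simp only [Submodule.top_coe]; exact isClosed_univ
  | succ n ih =>
    rw [En_succ]
    rw [Submodule.coe_inf]
    exact ih.inter (Submodule.isClosed_orthogonal _)

lemma En_invariant (hsym : ∀ x y : H, ⟪T x, y⟫ = ⟪x, T y⟫) (n : ℕ) :
    ∀ x ∈ En T n, T x ∈ En T n := by
  induction n with
  | zero => intro x _; exact Submodule.mem_top
  | succ n ih =>
    intro x hx
    rw [En_succ, Submodule.mem_inf] at hx ⊢
    obtain ⟨hx1, hx2⟩ := hx
    refine ⟨ih x hx1, ?_⟩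
    rw [Submodule.mem_orthogonal_singleton_iff_inner_right] at hx2 ⊢
    rw [← hsym, eigen_eq, real_inner_smul_left, hx2, mul_zero]

lemma En_antitone {m n : ℕ} (h : m ≤ n) : En T n ≤ En T m := by
  induction n with
  | zero => rw [Nat.le_zero.mp h]
  | succ n ih =>
    rcases Nat.lt_or_ge m (n+1) with h' | h'
    · exact le_trans (by rw [En_succ]; exact inf_le_left) (ih (Nat.lt_succ_iff.mp h'))
    · rw [Nat.le_antisymm h h']

lemma notCond_succ {n : ℕ} (h : ¬ Cond T (En T n)) : En T (n + 1) = En T n := by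
  rw [En_succ, (uv_lam_zero h).1, Submodule.span_zero_singleton,
    Submodule.bot_orthogonal_eq_top, inf_top_eq]

lemma notCond_mono {m n : ℕ} (h : ¬ Cond T (En T m)) (hmn : m ≤ n) : ¬ Cond T (En T n) := by
  induction n, hmn using Nat.le_induction with
  | base => exact h
  | succ n _ ih => rwa [notCond_succ ih]

lemma cond_mono {m n : ℕ} (h : Cond T (En T n)) (hmn : m ≤ n) : Cond T (En T m) := by
  by_contra h'
  exact (notCond_mono h' hmn) h


end SVDProof

open SVDProof Filter

/-- Singular value decomposition of a nonzero compact operator between real Hilbert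
spaces: there exist `N ∈ ℕ ∪ {∞}`, a nonincreasing (null if `N = ∞`) sequence of positive
singular values `σ_i`, an orthonormal family `(u_i)_{i<N}` with closed span `ker(A)ᗮ` and
an orthonormal family `(v_i)_{i<N}` with closed span `closure (range A)`, such that
`A u_i = σ_i v_i`, `A* v_i = σ_i u_i` and `A u = Σ_{i<N} σ_i ⟨u, u_i⟩ v_i` for all `u`. -/
theorem stmt_4 {U V : Type*}
    [NormedAddCommGroup U] [InnerProductSpace ℝ U] [CompleteSpace U]
    [NormedAddCommGroup V] [InnerProductSpace ℝ V] [CompleteSpace V]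
    (A : U →L[ℝ] V) (hA : IsCompactOperator (⇑A)) (hne : A ≠ 0) :
    ∃ (N : ℕ∞) (σ : ℕ → ℝ) (uu : ℕ → U) (vv : ℕ → V),
      (∀ i : ℕ, (i : ℕ∞) < N → 0 < σ i) ∧
      (∀ i j : ℕ, i ≤ j → (j : ℕ∞) < N → σ j ≤ σ i) ∧
      (N = ⊤ → Filter.Tendsto σ Filter.atTop (𝓝 0)) ∧
      Orthonormal ℝ (fun i : {i : ℕ // (i : ℕ∞) < N} => uu i.1) ∧
      Orthonormal ℝ (fun i : {i : ℕ // (i : ℕ∞) < N} => vv i.1) ∧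
      (Submodule.span ℝ
          (Set.range (fun i : {i : ℕ // (i : ℕ∞) < N} => uu i.1))).topologicalClosure =
        (LinearMap.ker (A : U →ₗ[ℝ] V))ᗮ ∧
      (Submodule.span ℝ
          (Set.range (fun i : {i : ℕ // (i : ℕ∞) < N} => vv i.1))).topologicalClosure =
        (LinearMap.range (A : U →ₗ[ℝ] V)).topologicalClosure ∧
      (∀ i : ℕ, (i : ℕ∞) < N → A (uu i) = σ i • vv i) ∧
      (∀ i : ℕ, (i : ℕ∞) < N → (ContinuousLinearMap.adjoint A) (vv i) = σ i • uu i) ∧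
      (∀ u : U, HasSum
        (fun i : {i : ℕ // (i : ℕ∞) < N} => (σ i.1 * ⟪u, uu i.1⟫) • vv i.1) (A u)) := by
  classical
  set T : U →L[ℝ] U := (ContinuousLinearMap.adjoint A).comp A with hTdef
  have hTapp : ∀ x : U, T x = ContinuousLinearMap.adjoint A (A x) := fun x => rfl
  have hinnerT : ∀ x y : U, ⟪T x, y⟫ = ⟪A x, A y⟫ := fun x y => by
    rw [hTapp, ContinuousLinearMap.adjoint_inner_left]
  have hsym : ∀ x y : U, ⟪T x, y⟫ = ⟪x, T y⟫ := by
    intro x y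
    rw [hinnerT, hTapp, ContinuousLinearMap.adjoint_inner_right]
  have hpos : ∀ x : U, 0 ≤ ⟪T x, x⟫ := fun x => by
    rw [hinnerT]; exact real_inner_self_nonneg
  have hTnorm : ∀ x : U, ⟪T x, x⟫ = ‖A x‖ ^ 2 := fun x => by
    rw [hinnerT, real_inner_self_eq_norm_sq]
  have hcpt : IsCompactOperator ⇑T := by
    have h : ⇑T = ⇑(ContinuousLinearMap.adjoint A) ∘ ⇑A := rfl
    rw [h]
    exact hA.continuous_comp (ContinuousLinearMap.adjoint A).continuous
  have hker : ∀ x : U, T x = 0 ↔ A x = 0 := by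
    intro x
    constructor
    · intro h
      have h0 : ‖A x‖ ^ 2 = 0 := by rw [← hTnorm x, h, inner_zero_left]
      exact norm_eq_zero.mp (pow_eq_zero_iff two_ne_zero |>.mp h0)
    · intro h
      rw [hTapp, h, map_zero]
  -- basic facts about the constructed sequences
  have horth0 : ∀ i j : ℕ, i < j → ⟪uv T i, uv T j⟫ = 0 := by
    intro i j hij
    have h1 : uv T j ∈ En T (i + 1) := En_antitone hij (uv_mem j)
    rw [En_succ, Submodule.mem_inf] at h1
    exact Submodule.mem_orthogonal_singleton_iff_inner_right.mp h1.2
  have hnorm1 : ∀ n, Cond T (En T n) → ‖uv T n‖ = 1 := fun n h => (uv_lam_good h).2.1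
  have hlampos : ∀ n, Cond T (En T n) → 0 < lam T n := fun n h => (uv_lam_good h).2.2.1
  have hbound : ∀ n, Cond T (En T n) → ∀ x ∈ En T n, ‖T x‖ ≤ lam T n * ‖x‖ :=
    fun n h => (uv_lam_good h).2.2.2.2
  have hlam_anti : ∀ m n : ℕ, m ≤ n → Cond T (En T n) → lam T n ≤ lam T m := by
    intro m n hmn hn
    have hm : Cond T (En T m) := cond_mono hn hmn
    have h1 : uv T n ∈ En T m := En_antitone hmn (uv_mem n)
    have h2 := hbound m hm _ h1
    rw [eigen_eq, norm_smul, hnorm1 n hn, Real.norm_eq_abs, abs_of_pos (hlampos n hn)] at h2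
    simpa [hnorm1 n hn] using h2
  have hlamtend : (∀ n, Cond T (En T n)) → Tendsto (lam T) atTop (𝓝 0) := by
    intro hall
    have hanti : Antitone (lam T) := fun m n hmn => hlam_anti m n hmn (hall n)
    have hbdd : BddBelow (Set.range (lam T)) := by
      refine ⟨0, ?_⟩
      rintro _ ⟨n, rfl⟩
      exact (hlampos n (hall n)).le
    have htend : Tendsto (lam T) atTop (𝓝 (⨅ n, lam T n)) :=
      tendsto_atTop_ciInf hanti hbdd
    have hc0 : 0 ≤ ⨅ n, lam T n := le_ciInf fun n => (hlampos n (hall n)).le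
    rcases hc0.eq_or_lt with h | h
    · rwa [← h] at htend
    · exfalso
      set c := ⨅ n, lam T n with hcdef
      have hlamc : ∀ n, c ≤ lam T n := fun n => ciInf_le hbdd n
      have hcpt' : IsCompactOperator ⇑(T : U →ₗ[ℝ] U) := hcpt
      have hK : IsCompact (closure (⇑(T : U →ₗ[ℝ] U) '' Metric.closedBall 0 1)) :=
        hcpt'.isCompact_closure_image_closedBall 1
      have hmem : ∀ n, T (uv T n) ∈ closure (⇑(T : U →ₗ[ℝ] U) '' Metric.closedBall 0 1) := by
        intro n
        exact subset_closure ⟨uv T n, by simp [mem_closedBall_zero_iff, hnorm1 n (hall n)], rfl⟩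
      obtain ⟨w, -, φ, hφ, hw⟩ := hK.tendsto_subseq hmem
      have hcauchy : CauchySeq ((fun n => T (uv T n)) ∘ φ) := hw.cauchySeq
      obtain ⟨n₀, hn₀⟩ := Metric.cauchySeq_iff.mp hcauchy c h
      have hd := hn₀ (n₀ + 1) (by omega) n₀ (by omega)
      simp only [Function.comp_apply] at hd
      set i := φ n₀ with hidef
      set j := φ (n₀ + 1) with hjdef
      have hij : i < j := hφ (Nat.lt_succ_self _)
      have e1 : ‖lam T j • uv T j‖ = lam T j := by
        rw [norm_smul, hnorm1 j (hall j), Real.norm_eq_abs,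
          abs_of_pos (hlampos j (hall j)), mul_one]
      have e2 : ‖lam T i • uv T i‖ = lam T i := by
        rw [norm_smul, hnorm1 i (hall i), Real.norm_eq_abs,
          abs_of_pos (hlampos i (hall i)), mul_one]
      have e3 : ⟪lam T j • uv T j, lam T i • uv T i⟫ = 0 := by
        rw [real_inner_smul_left, real_inner_smul_right, real_inner_comm,
          horth0 i j hij, mul_zero, mul_zero]
      have hdist : dist (T (uv T j)) (T (uv T i)) ^ 2 = lam T j ^ 2 + lam T i ^ 2 := by
        rw [dist_eq_norm, eigen_eq, eigen_eq, norm_sub_sq_real, e1, e2, e3]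
        ring
      have hdlt : dist (T (uv T j)) (T (uv T i)) < c := hd
      nlinarith [hlamc i, hlamc j, dist_nonneg (x := T (uv T j)) (y := T (uv T i)),
        hdist, hdlt, h]
  have hWperp_key : ∀ x : U, (∀ n : ℕ, ⟪uv T n, x⟫ = 0) → T x = 0 := by
    intro x hx
    have hmemEn : ∀ n, x ∈ En T n := by
      intro n
      induction n with
      | zero => exact Submodule.mem_top
      | succ n ih =>
        rw [En_succ, Submodule.mem_inf]
        exact ⟨ih, Submodule.mem_orthogonal_singleton_iff_inner_right.mpr (hx n)⟩
    by_cases hall : ∀ n, Cond T (En T n)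
    · have h1 : ∀ n, ‖T x‖ ≤ lam T n * ‖x‖ := fun n => hbound n (hall n) x (hmemEn n)
      have h2 : Tendsto (fun n => lam T n * ‖x‖) atTop (𝓝 0) := by
        simpa using (hlamtend hall).mul_const ‖x‖
      have h3 : ‖T x‖ ≤ 0 := ge_of_tendsto h2 (Eventually.of_forall h1)
      exact norm_le_zero_iff.mp h3
    · obtain ⟨n₀, hn₀⟩ := not_forall.mp hall
      have hzero : ∀ y ∈ En T n₀, T y = 0 := by
        by_contra hy
        exact hn₀ ⟨hcpt, hsym, hpos, En_isClosed n₀, En_invariant hsym n₀, hy⟩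
      exact hzero x (hmemEn n₀)
  -- the length of the decomposition
  set N : ℕ∞ := dite (∀ n, Cond T (En T n)) (fun _ => (⊤ : ℕ∞))
    (fun h => (Nat.find (not_forall.mp h) : ℕ∞)) with hNdef
  have hN : ∀ i : ℕ, ((i : ℕ∞) < N ↔ Cond T (En T i)) := by
    intro i
    by_cases hall : ∀ n, Cond T (En T n)
    · rw [hNdef, dif_pos hall]
      simpa using hall i
    · rw [hNdef, dif_neg hall, Nat.cast_lt]
      constructor
      · intro hik
        by_contra hc
        exact absurd (Nat.find_le hc) (Nat.not_le.mpr hik)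
      · intro hc
        by_contra h'
        push_neg at h'
        exact (notCond_mono (Nat.find_spec (not_forall.mp hall)) h') hc
  set σ : ℕ → ℝ := fun n => Real.sqrt (lam T n) with hσdef
  set uu : ℕ → U := fun n => uv T n with huudef
  set vv : ℕ → V := fun n => (Real.sqrt (lam T n))⁻¹ • A (uv T n) with hvvdef
  have hσpos : ∀ i : ℕ, (i : ℕ∞) < N → 0 < σ i :=
    fun i hi => Real.sqrt_pos.mpr (hlampos i ((hN i).mp hi))
  have hσsq : ∀ i, Cond T (En T i) → σ i ^ 2 = lam T i :=
    fun i hi => Real.sq_sqrt (hlampos i hi).le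
  have hAinner : ∀ i j : ℕ, ⟪A (uv T i), A (uv T j)⟫ = lam T i * ⟪uv T i, uv T j⟫ := by
    intro i j
    rw [← hinnerT, eigen_eq, real_inner_smul_left]
  have hAuu : ∀ i : ℕ, (i : ℕ∞) < N → A (uu i) = σ i • vv i := by
    intro i hi
    have hσ0 : σ i ≠ 0 := (hσpos i hi).ne'
    show A (uv T i) = σ i • (Real.sqrt (lam T i))⁻¹ • A (uv T i)
    rw [smul_smul]
    rw [show σ i * (Real.sqrt (lam T i))⁻¹ = 1 by
      rw [hσdef]; field_simp; exact div_self hσ0]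
    rw [one_smul]
  have horthuu : Orthonormal ℝ (fun i : {i : ℕ // (i : ℕ∞) < N} => uu i.1) := by
    rw [orthonormal_iff_ite]
    intro i j
    by_cases h : i = j
    · subst h
      simp only [if_pos rfl]
      rw [real_inner_self_eq_norm_sq, hnorm1 i.1 ((hN i.1).mp i.2)]
      norm_num
    · rw [if_neg h]
      have hne' : i.1 ≠ j.1 := fun hc => h (Subtype.ext hc)
      rcases hne'.lt_or_gt with h' | h'
      · exact horth0 _ _ h'
      · rw [real_inner_comm]; exact horth0 _ _ h'
  have horthvv : Orthonormal ℝ (fun i : {i : ℕ // (i : ℕ∞) < N} => vv i.1) := by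
    rw [orthonormal_iff_ite]
    intro i j
    have hci : Cond T (En T i.1) := (hN i.1).mp i.2
    have hcj : Cond T (En T j.1) := (hN j.1).mp j.2
    show ⟪(Real.sqrt (lam T i.1))⁻¹ • A (uv T i.1),
        (Real.sqrt (lam T j.1))⁻¹ • A (uv T j.1)⟫ = _
    rw [real_inner_smul_left, real_inner_smul_right, hAinner]
    by_cases h : i = j
    · subst h
      rw [if_pos rfl]
      have h1 : ⟪uv T i.1, uv T i.1⟫ = 1 := by
        rw [real_inner_self_eq_norm_sq, hnorm1 i.1 hci]; norm_num
      rw [h1, mul_one]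
      have h2 : Real.sqrt (lam T i.1) ≠ 0 := (Real.sqrt_pos.mpr (hlampos _ hci)).ne'
      have h3 := hσsq i.1 hci
      rw [hσdef] at h3
      field_simp
      exact h3.symm
    · rw [if_neg h]
      have hne' : i.1 ≠ j.1 := fun hc => h (Subtype.ext hc)
      have hz : ⟪uv T i.1, uv T j.1⟫ = 0 := by
        rcases hne'.lt_or_gt with h' | h'
        · exact horth0 _ _ h'
        · rw [real_inner_comm]; exact horth0 _ _ h'
      rw [hz, mul_zero, mul_zero, mul_zero]
  have hspanU : (Submodule.span ℝ
      (Set.range (fun i : {i : ℕ // (i : ℕ∞) < N} => uu i.1))).topologicalClosure =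
      (LinearMap.ker (A : U →ₗ[ℝ] V))ᗮ := by
    have hWle : Submodule.span ℝ
        (Set.range (fun i : {i : ℕ // (i : ℕ∞) < N} => uu i.1)) ≤ (LinearMap.ker (A : U →ₗ[ℝ] V))ᗮ := by
      rw [Submodule.span_le]
      rintro _ ⟨i, rfl⟩
      rw [SetLike.mem_coe, Submodule.mem_orthogonal]
      intro y hy
      have hAy : A y = 0 := LinearMap.mem_ker.mp hy
      have hTy : T y = 0 := (hker y).mpr hAy
      have hc : Cond T (En T i.1) := (hN i.1).mp i.2
      have h1 : ⟪y, T (uv T i.1)⟫ = 0 := by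
        rw [← hsym, hTy, inner_zero_left]
      rw [eigen_eq, real_inner_smul_right] at h1
      exact (mul_eq_zero.mp h1).resolve_left (hlampos _ hc).ne'
    refine le_antisymm
      (Submodule.topologicalClosure_minimal _ hWle (Submodule.isClosed_orthogonal _)) ?_
    have h1 : (Submodule.span ℝ
        (Set.range (fun i : {i : ℕ // (i : ℕ∞) < N} => uu i.1)))ᗮ ≤ LinearMap.ker (A : U →ₗ[ℝ] V) := by
      intro x hx
      refine LinearMap.mem_ker.mpr ((hker x).mp (hWperp_key x fun n => ?_))
      by_cases hc : Cond T (En T n)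
      · have hmem : uv T n ∈ Submodule.span ℝ
            (Set.range (fun i : {i : ℕ // (i : ℕ∞) < N} => uu i.1)) :=
          Submodule.subset_span ⟨⟨n, (hN n).mpr hc⟩, rfl⟩
        exact (Submodule.mem_orthogonal _ x).mp hx _ hmem
      · rw [(uv_lam_zero hc).1, inner_zero_left]
    have h2 := Submodule.orthogonal_le h1
    rwa [Submodule.orthogonal_orthogonal_eq_closure] at h2
  have hadj : ∀ i : ℕ, (i : ℕ∞) < N →
      (ContinuousLinearMap.adjoint A) (vv i) = σ i • uu i := by
    intro i hi
    have hc := (hN i).mp hi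
    have hσ0 : σ i ≠ 0 := (hσpos i hi).ne'
    show ContinuousLinearMap.adjoint A ((Real.sqrt (lam T i))⁻¹ • A (uv T i)) = σ i • uv T i
    rw [map_smul]
    have h1 : ContinuousLinearMap.adjoint A (A (uv T i)) = T (uv T i) := rfl
    rw [h1, eigen_eq, smul_smul, ← hσsq i hc]
    congr 1
    rw [hσdef]
    field_simp
    rw [Real.sqrt_sq (Real.sqrt_nonneg _), pow_two,
      mul_div_cancel_right₀ _ (hσ0 : √(lam T i) ≠ 0)]
  have hsumAll : ∀ u : U, HasSum
      (fun i : {i : ℕ // (i : ℕ∞) < N} => (σ i.1 * ⟪u, uu i.1⟫) • vv i.1) (A u) := by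
    intro u
    set K : Submodule ℝ U := (LinearMap.ker (A : U →ₗ[ℝ] V))ᗮ with hKdef
    haveI : CompleteSpace K := (Submodule.isClosed_orthogonal _).completeSpace_coe
    have hmemK : ∀ i : {i : ℕ // (i : ℕ∞) < N}, uu i.1 ∈ K := by
      intro i
      rw [← hspanU]
      exact Submodule.le_topologicalClosure _ (Submodule.subset_span ⟨i, rfl⟩)
    set g : {i : ℕ // (i : ℕ∞) < N} → K := fun i => ⟨uu i.1, hmemK i⟩ with hgdef
    have horthg : Orthonormal ℝ g := by
      rw [orthonormal_iff_ite]
      intro i j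
      have h0 := orthonormal_iff_ite.mp horthuu i j
      rw [Submodule.coe_inner]
      exact h0
    have hbot : (Submodule.span ℝ (Set.range g))ᗮ = ⊥ := by
      rw [Submodule.eq_bot_iff]
      intro y hy
      have hyi : ∀ n : ℕ, ⟪uv T n, (y : U)⟫ = 0 := by
        intro n
        by_cases hc : Cond T (En T n)
        · have hmem : g ⟨n, (hN n).mpr hc⟩ ∈ Submodule.span ℝ (Set.range g) :=
            Submodule.subset_span ⟨_, rfl⟩
          have h0 := (Submodule.mem_orthogonal _ y).mp hy _ hmem
          rw [Submodule.coe_inner] at h0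
          exact h0
        · rw [(uv_lam_zero hc).1, inner_zero_left]
      have hTy : T (y : U) = 0 := hWperp_key _ hyi
      have hyker : (y : U) ∈ LinearMap.ker (A : U →ₗ[ℝ] V) := LinearMap.mem_ker.mpr ((hker _).mp hTy)
      have hyKperp : (y : U) ∈ Kᗮ :=
        Submodule.le_orthogonal_orthogonal _ hyker
      have h0 : (y : U) = 0 :=
        (Submodule.disjoint_def.mp K.orthogonal_disjoint) _ y.2 hyKperp
      exact Subtype.ext h0
    set b := HilbertBasis.mkOfOrthogonalEqBot horthg hbot with hbdef
    have hb : ⇑b = g := HilbertBasis.coe_mkOfOrthogonalEqBot _ _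
    have h1 := b.hasSum_orthogonalProjection u
    rw [hb] at h1
    have h2 := K.subtypeL.hasSum h1
    simp only [Submodule.subtypeL_apply, Submodule.coe_smul] at h2
    have h3 := A.hasSum h2
    have hproj : A ((K.orthogonalProjectionOnto u : U)) = A u := by
      have hd : u - (K.orthogonalProjectionOnto u : U) ∈ Kᗮ :=
        Submodule.sub_starProjection_mem_orthogonal u
      have hKperp : Kᗮ = LinearMap.ker (A : U →ₗ[ℝ] V) := by
        rw [hKdef, Submodule.orthogonal_orthogonal_eq_closure,
          IsClosed.submodule_topologicalClosure_eq (ContinuousLinearMap.isClosed_ker A)]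
      rw [hKperp, LinearMap.mem_ker, map_sub] at hd
      exact (sub_eq_zero.mp hd).symm
    rw [hproj] at h3
    have hfun : (fun i : {i : ℕ // (i : ℕ∞) < N} => A (⟪(g i : U), u⟫ • (g i : U)))
        = fun i : {i : ℕ // (i : ℕ∞) < N} => (σ i.1 * ⟪u, uu i.1⟫) • vv i.1 := by
      funext i
      have hgu : (g i : U) = uu i.1 := rfl
      rw [hgu, map_smul, hAuu i.1 i.2, smul_smul, real_inner_comm, mul_comm]
    rw [← hfun]
    exact h3
  have hspanV : (Submodule.span ℝ
      (Set.range (fun i : {i : ℕ // (i : ℕ∞) < N} => vv i.1))).topologicalClosure =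
      (LinearMap.range (A : U →ₗ[ℝ] V)).topologicalClosure := by
    refine le_antisymm
      (Submodule.topologicalClosure_minimal _ ?_ (Submodule.isClosed_topologicalClosure _))
      (Submodule.topologicalClosure_minimal _ ?_ (Submodule.isClosed_topologicalClosure _))
    · rw [Submodule.span_le]
      rintro _ ⟨i, rfl⟩
      refine SetLike.mem_coe.mpr (Submodule.le_topologicalClosure _ ?_)
      refine LinearMap.mem_range.mpr ⟨(Real.sqrt (lam T i.1))⁻¹ • uv T i.1, ?_⟩
      rw [map_smul]; rfl
    · intro y hy
      obtain ⟨x, rfl⟩ := LinearMap.mem_range.mp hy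
      have hs := hsumAll x
      refine (Submodule.isClosed_topologicalClosure _).mem_of_tendsto hs
        (Eventually.of_forall fun F => ?_)
      refine SetLike.mem_coe.mpr (Submodule.le_topologicalClosure _
        (Submodule.sum_mem _ fun i _ => Submodule.smul_mem _ _
          (Submodule.subset_span ⟨i, rfl⟩)))
  refine ⟨N, σ, uu, vv, hσpos, ?_, ?_, horthuu, horthvv, hspanU, hspanV, hAuu, hadj, hsumAll⟩
  · intro i j hij hj
    exact Real.sqrt_le_sqrt (hlam_anti i j hij ((hN j).mp hj))
  · intro hNtop
    have hall : ∀ n, Cond T (En T n) := by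
      by_contra h
      rw [hNdef, dif_neg h] at hNtop
      exact (ENat.coe_ne_top _) hNtop
    have h1 := (Real.continuous_sqrt.tendsto 0).comp (hlamtend hall)
    simpa [hσdef, Function.comp_def, Real.sqrt_zero] using h1
end

section
/- Let U and V be real Hilbert spaces, A : U → V a compact bounded linear operator with singular system ((σ_i, u_i, v_i))_{i∈ℕ}, where (v_i) is an orthonormal basis of the closure of range(A), and let f belong to the closure of range(A). Then f ∈ range(A) if and only if the Picard criterion Σ_{i=1}^∞ |⟨f, v_i⟩|² / σ_i² < ∞ is satisfied. -/
open scoped Topology RealInnerProductSpace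
open Filter

private lemma coeff_of_hasSum {V : Type*} [NormedAddCommGroup V] [InnerProductSpace ℝ V]
    {ι : Type*} {vv : ι → V} (hvON : Orthonormal ℝ vv) {c : ι → ℝ} {x : V}
    (hx : HasSum (fun i => c i • vv i) x) (j : ι) : ⟪x, vv j⟫ = c j := by
  classical
  have h := hx.mapL (innerSL ℝ (vv j))
  have h2 : HasSum (fun i => if i = j then c j else 0) ⟪vv j, x⟫ := by
    convert h using 1
    · rfl
    funext i
    simp only [innerSL_apply_apply, real_inner_smul_right]
    rw [orthonormal_iff_ite.mp hvON j i]
    rcases eq_or_ne i j with rfl | hij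
    · simp
    · simp [hij, Ne.symm hij]
    · rfl
  rw [real_inner_comm]
  exact h2.unique (hasSum_ite_eq j (c j))

private lemma summable_smul_of_sq {V : Type*} [NormedAddCommGroup V] [InnerProductSpace ℝ V]
    [CompleteSpace V] {ι : Type*} {vv : ι → V} (hvON : Orthonormal ℝ vv) {c : ι → ℝ}
    (hc : Summable fun i => c i ^ 2) : Summable fun i => c i • vv i := by
  have := (hvON.orthogonalFamily.summable_iff_norm_sq_summable c).mpr (by
    simpa [Real.norm_eq_abs, sq_abs] using hc)
  simpa [LinearIsometry.toSpanSingleton_apply] using this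

/-- Picard criterion: for a compact operator `A` with singular system
`((σ_i, u_i, v_i))_{i∈ℕ}` where `(v_i)` is an orthonormal basis of the closure of the
range of `A`, and `f` in the closure of the range of `A`, one has `f ∈ range A` iff
`Σ_i ⟨f, v_i⟩² / σ_i² < ∞`. -/
theorem stmt_5 {U V : Type*}
    [NormedAddCommGroup U] [InnerProductSpace ℝ U] [CompleteSpace U]
    [NormedAddCommGroup V] [InnerProductSpace ℝ V] [CompleteSpace V]
    (A : U →L[ℝ] V) (hA : IsCompactOperator (⇑A))
    (σ : ℕ → ℝ) (uu : ℕ → U) (vv : ℕ → V)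
    (hσpos : ∀ i, 0 < σ i) (hσanti : Antitone σ)
    (hσ0 : Tendsto σ atTop (𝓝 0))
    (huON : Orthonormal ℝ uu) (hvON : Orthonormal ℝ vv)
    (huspan : (Submodule.span ℝ (Set.range uu)).topologicalClosure = (LinearMap.ker (A : U →ₗ[ℝ] V))ᗮ)
    (hvspan : (Submodule.span ℝ (Set.range vv)).topologicalClosure =
        (LinearMap.range (A : U →ₗ[ℝ] V)).topologicalClosure)
    (hAu : ∀ i, A (uu i) = σ i • vv i)
    (hAv : ∀ i, (ContinuousLinearMap.adjoint A) (vv i) = σ i • uu i)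
    (hrep : ∀ w : U, HasSum (fun i => (σ i * ⟪w, uu i⟫) • vv i) (A w))
    (f : V) (hf : f ∈ closure (Set.range (⇑A))) :
    f ∈ Set.range (⇑A) ↔ Summable (fun i => ⟪f, vv i⟫ ^ 2 / σ i ^ 2) := by
  constructor
  · rintro ⟨w, rfl⟩
    have h1 : ∀ i, ⟪A w, vv i⟫ = σ i * ⟪w, uu i⟫ := fun i => by
      rw [← ContinuousLinearMap.adjoint_inner_right A w (vv i), hAv i, real_inner_smul_right]
    have h2 : (fun i => ⟪A w, vv i⟫ ^ 2 / σ i ^ 2) = fun i => ⟪w, uu i⟫ ^ 2 := by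
      funext i
      have hne : σ i ≠ 0 := (hσpos i).ne'
      rw [h1]
      field_simp
    rw [h2]
    have := huON.inner_products_summable w
    simpa [Real.norm_eq_abs, sq_abs, real_inner_comm] using this
  · intro hsum
    set c : ℕ → ℝ := fun i => ⟪f, vv i⟫ / σ i with hc
    have hcsum : Summable fun i => c i ^ 2 := by
      simpa [hc, div_pow] using hsum
    have hsmul := summable_smul_of_sq huON hcsum
    set w : U := ∑' i, c i • uu i with hw
    have hws : HasSum (fun i => c i • uu i) w := hsmul.hasSum
    have hwin : ∀ j, ⟪w, uu j⟫ = c j := coeff_of_hasSum huON hws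
    have hAw : HasSum (fun i => ⟪f, vv i⟫ • vv i) (A w) := by
      have h := hrep w
      have : (fun i => (σ i * ⟪w, uu i⟫) • vv i) = fun i => ⟪f, vv i⟫ • vv i := by
        funext i
        have hne : σ i ≠ 0 := (hσpos i).ne'
        rw [hwin i, hc]
        congr 1
        field_simp
      rwa [this] at h
    -- show f = A w
    have hrange : (↑((LinearMap.range (A : U →ₗ[ℝ] V)).topologicalClosure) : Set V)
        = closure (Set.range (⇑A)) := by
      rw [Submodule.topologicalClosure_coe]
      rfl
    have hfK : f ∈ (Submodule.span ℝ (Set.range vv)).topologicalClosure := by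
      rw [hvspan, ← SetLike.mem_coe, hrange]
      exact hf
    have hAwK : A w ∈ (Submodule.span ℝ (Set.range vv)).topologicalClosure := by
      rw [hvspan]
      exact Submodule.le_topologicalClosure _ ⟨w, rfl⟩
    have hDK : f - A w ∈ (Submodule.span ℝ (Set.range vv)).topologicalClosure :=
      sub_mem hfK hAwK
    have hker : (Submodule.span ℝ (Set.range vv)).topologicalClosure
        ≤ LinearMap.ker (innerSL ℝ (f - A w) : V →ₗ[ℝ] ℝ) := by
      refine Submodule.topologicalClosure_minimal _ ?_
        (ContinuousLinearMap.isClosed_ker (innerSL ℝ (f - A w)))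
      rw [Submodule.span_le]
      rintro - ⟨i, rfl⟩
      have : innerSL ℝ (f - A w) (vv i) = 0 := by
        simp only [innerSL_apply_apply]
        rw [inner_sub_left, coeff_of_hasSum hvON hAw i]
        ring
      exact this
    have hzero : ⟪f - A w, f - A w⟫ = 0 := hker hDK
    have hfeq : f - A w = 0 := by
      rwa [inner_self_eq_zero] at hzero
    exact ⟨w, (sub_eq_zero.mp hfeq).symm⟩
end

section
/- (Bakushinskii) Let U and V be real Hilbert spaces, A : U → V a bounded linear operator, D := range(A) + range(A)^⊥, and let A† : D → U denote the Moore–Penrose generalized inverse, i.e. A†f is the unique minimal-norm least-squares solution of Au = f. Suppose there is an index set I, a family (R_α)_{α∈I} of continuous linear operators V → U, and a parameter choice α : V → I depending only on the data, such that for every f ∈ D: lim_{δ→0⁺} sup{ ‖R_{α(g)} g − A†f‖ : g ∈ V, ‖g − f‖ ≤ δ } = 0. Then A† is a bounded linear map on D, and hence extends to a continuous linear operator on all of V. -/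
open scoped Topology

/-- `u` is a least-squares solution of `A u = f`. -/
def IsLSS {U V : Type*} [NormedAddCommGroup U] [InnerProductSpace ℝ U]
    [NormedAddCommGroup V] [InnerProductSpace ℝ V]
    (A : U →L[ℝ] V) (f : V) (u : U) : Prop :=
  ‖A u - f‖ = ⨅ w : U, ‖A w - f‖

open scoped RealInnerProductSpace

section Aux

variable {U V : Type*} [NormedAddCommGroup U] [InnerProductSpace ℝ U]
  [NormedAddCommGroup V] [InnerProductSpace ℝ V] (A : U →L[ℝ] V)

/-- For `f = A v + h` with `h ⊥ range A`, the least-squares solutions of `A u = f`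
are exactly the `u` with `A u = A v`. -/
lemma aux_lss_iff (v : U) (h : V) (hh : h ∈ (LinearMap.range (A : U →ₗ[ℝ] V))ᗮ) (u : U) :
    IsLSS A (A v + h) u ↔ A u = A v := by
  have key : ∀ w : U, ‖A w - (A v + h)‖ ^ 2 = ‖A w - A v‖ ^ 2 + ‖h‖ ^ 2 := by
    intro w
    have h1 : A w - (A v + h) = (A w - A v) - h := by abel
    have h2 : ⟪A w - A v, h⟫ = 0 := by
      refine (Submodule.mem_orthogonal _ h).1 hh (A w - A v) ⟨w - v, ?_⟩
      simp [map_sub]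
    rw [h1, norm_sub_sq_real, h2]; ring
  have hb : ∀ w : U, ‖h‖ ≤ ‖A w - (A v + h)‖ := by
    intro w
    nlinarith [key w, norm_nonneg (A w - (A v + h)), norm_nonneg (A w - A v), norm_nonneg h]
  have hv : ‖A v - (A v + h)‖ = ‖h‖ := by
    rw [show A v - (A v + h) = -h by abel, norm_neg]
  have hinf : (⨅ w : U, ‖A w - (A v + h)‖) = ‖h‖ := by
    refine le_antisymm ?_ (le_ciInf hb)
    calc (⨅ w : U, ‖A w - (A v + h)‖) ≤ ‖A v - (A v + h)‖ :=
          ciInf_le ⟨0, by rintro x ⟨w, rfl⟩; positivity⟩ v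
      _ = ‖h‖ := hv
  constructor
  · intro hu
    have h1 : ‖A u - (A v + h)‖ = ‖h‖ := by rw [IsLSS] at hu; rw [hu, hinf]
    have hk2 := key u
    rw [h1] at hk2
    have h2 : ‖A u - A v‖ = 0 := by nlinarith [norm_nonneg (A u - A v)]
    exact sub_eq_zero.1 (norm_eq_zero.1 h2)
  · intro hu
    unfold IsLSS
    rw [hinf, show A u - (A v + h) = -h by rw [hu]; abel, norm_neg]

/-- Uniqueness of an element `u` with `A u - f ⊥ range A` and `u ⊥ ker A`. -/
lemma aux_unique (u₁ u₂ : U) (f : V)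
    (h₁ : u₁ ∈ (LinearMap.ker (A : U →ₗ[ℝ] V))ᗮ ∧ A u₁ - f ∈ (LinearMap.range (A : U →ₗ[ℝ] V))ᗮ)
    (h₂ : u₂ ∈ (LinearMap.ker (A : U →ₗ[ℝ] V))ᗮ ∧ A u₂ - f ∈ (LinearMap.range (A : U →ₗ[ℝ] V))ᗮ) : u₁ = u₂ := by
  have hr : A u₁ - A u₂ ∈ (LinearMap.range (A : U →ₗ[ℝ] V))ᗮ := by
    have := Submodule.sub_mem _ h₁.2 h₂.2
    simpa using this
  have hker : u₁ - u₂ ∈ LinearMap.ker (A : U →ₗ[ℝ] V) := by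
    have h0 : ⟪A u₁ - A u₂, A u₁ - A u₂⟫ = 0 :=
      (Submodule.mem_orthogonal _ _).1 hr (A u₁ - A u₂) ⟨u₁ - u₂, by simp [map_sub]⟩
    have : A u₁ - A u₂ = 0 := by
      have := inner_self_eq_zero (𝕜 := ℝ).1 h0
      exact this
    rw [LinearMap.mem_ker]
    simpa [sub_eq_zero] using this
  have hperp : u₁ - u₂ ∈ (LinearMap.ker (A : U →ₗ[ℝ] V))ᗮ := Submodule.sub_mem _ h₁.1 h₂.1
  have h0 : ⟪u₁ - u₂, u₁ - u₂⟫ = 0 :=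
    (Submodule.mem_orthogonal _ _).1 hperp (u₁ - u₂) hker
  have : u₁ - u₂ = 0 := inner_self_eq_zero (𝕜 := ℝ).1 h0
  exact sub_eq_zero.1 this

end Aux

/-- (Bakushinskii) If the Moore–Penrose inverse `A†` (the map sending `f` in
`D = range(A) + range(A)ᗮ` to the unique minimal-norm least-squares solution) can be
approximated by a family of continuous linear operators `(R_α)` with a parameter choice
`α` depending only on the data `g`, uniformly over `‖g - f‖ ≤ δ` as `δ → 0`, for every
`f ∈ D`, then `A†` extends to a continuous linear operator on all of `V`. -/
theorem stmt_6 {U V : Type*}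
    [NormedAddCommGroup U] [InnerProductSpace ℝ U] [CompleteSpace U]
    [NormedAddCommGroup V] [InnerProductSpace ℝ V] [CompleteSpace V]
    (A : U →L[ℝ] V) (Adag : V → U)
    (hAdag : ∀ f ∈ (LinearMap.range (A : U →ₗ[ℝ] V) + (LinearMap.range (A : U →ₗ[ℝ] V))ᗮ : Submodule ℝ V),
      IsLSS A f (Adag f) ∧ ∀ w : U, IsLSS A f w → ‖Adag f‖ ≤ ‖w‖)
    {I : Type*} (R : I → (V →L[ℝ] U)) (αc : V → I)
    (hconv : ∀ f ∈ (LinearMap.range (A : U →ₗ[ℝ] V) + (LinearMap.range (A : U →ₗ[ℝ] V))ᗮ : Submodule ℝ V),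
      ∀ ε > (0 : ℝ), ∃ δ > (0 : ℝ), ∀ g : V, ‖g - f‖ ≤ δ → ‖R (αc g) g - Adag f‖ ≤ ε) :
    ∃ B : V →L[ℝ] U,
      ∀ f ∈ (LinearMap.range (A : U →ₗ[ℝ] V) + (LinearMap.range (A : U →ₗ[ℝ] V))ᗮ : Submodule ℝ V), B f = Adag f := by
  classical
  set D : Submodule ℝ V := LinearMap.range (A : U →ₗ[ℝ] V) + (LinearMap.range (A : U →ₗ[ℝ] V))ᗮ with hD
  -- characterization of `Adag f` for `f ∈ D`
  have hchar : ∀ f ∈ D, Adag f ∈ (LinearMap.ker (A : U →ₗ[ℝ] V))ᗮ ∧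
      A (Adag f) - f ∈ (LinearMap.range (A : U →ₗ[ℝ] V))ᗮ := by
    intro f hf
    rw [hD, Submodule.add_eq_sup] at hf
    obtain ⟨y, hy, h, hh, rfl⟩ := Submodule.mem_sup.1 hf
    obtain ⟨v, rfl⟩ := hy
    have hfD : (A v + h : V) ∈ D := by
      rw [hD, Submodule.add_eq_sup]
      exact Submodule.mem_sup.2 ⟨A v, ⟨v, rfl⟩, h, hh, rfl⟩
    obtain ⟨hlss, hmin⟩ := hAdag _ hfD
    have hAu : A (Adag (A v + h)) = A v := (aux_lss_iff A v h hh _).1 hlss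
    constructor
    · -- orthogonality to the kernel, via minimality of the norm
      rw [Submodule.mem_orthogonal]
      intro k hk
      by_contra ht
      have hk0 : k ≠ 0 := by rintro rfl; simp at ht
      have hknorm : (0:ℝ) < ‖k‖ := norm_pos_iff.2 hk0
      set u := Adag (A v + h) with hu
      set t : ℝ := ⟪k, u⟫ with htdef
      set c : ℝ := t / ‖k‖ ^ 2 with hcdef
      have hAk : A k = 0 := hk
      have hw : A (u - c • k) = A v := by
        rw [map_sub, map_smul, hAk, smul_zero, sub_zero, hAu]
      have hwlss : IsLSS A (A v + h) (u - c • k) := (aux_lss_iff A v h hh _).2 hw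
      have hle : ‖u‖ ≤ ‖u - c • k‖ := hmin _ hwlss
      have hnormw : ‖u - c • k‖ ^ 2 = ‖u‖ ^ 2 - 2 * c * t + c ^ 2 * ‖k‖ ^ 2 := by
        have hcomm : ⟪u, k⟫ = t := by rw [htdef]; exact real_inner_comm k u
        rw [norm_sub_sq_real, real_inner_smul_right, hcomm, norm_smul, mul_pow,
          Real.norm_eq_abs, sq_abs]
        ring
      have hcval : c * ‖k‖ ^ 2 = t := by
        rw [hcdef]; field_simp
      have : ‖u - c • k‖ ^ 2 = ‖u‖ ^ 2 - t ^ 2 / ‖k‖ ^ 2 := by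
        rw [hnormw, hcdef]; field_simp; ring
      have ht2 : 0 < t ^ 2 / ‖k‖ ^ 2 := by positivity
      nlinarith [norm_nonneg u, norm_nonneg (u - c • k)]
    · change A (Adag (A v + h)) - (A v + h) ∈ _
      rw [show A (Adag (A v + h)) - (A v + h) = -h by rw [hAu]; abel]
      exact Submodule.neg_mem _ hh
  -- additivity and homogeneity of `Adag` on `D`
  have hadd : ∀ f ∈ D, ∀ g ∈ D, Adag (f + g) = Adag f + Adag g := by
    intro f hf g hg
    refine aux_unique A _ _ (f + g) (hchar _ (Submodule.add_mem D hf hg)) ⟨?_, ?_⟩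
    · exact Submodule.add_mem _ (hchar f hf).1 (hchar g hg).1
    · have := Submodule.add_mem _ (hchar f hf).2 (hchar g hg).2
      have heq : A (Adag f) - f + (A (Adag g) - g) = A (Adag f + Adag g) - (f + g) := by
        rw [map_add]; abel
      rwa [heq] at this
  have hsmul : ∀ (c : ℝ), ∀ f ∈ D, Adag (c • f) = c • Adag f := by
    intro c f hf
    refine aux_unique A _ _ (c • f) (hchar _ (Submodule.smul_mem D c hf)) ⟨?_, ?_⟩
    · exact Submodule.smul_mem _ c (hchar f hf).1
    · have := Submodule.smul_mem _ c (hchar f hf).2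
      have heq : c • (A (Adag f) - f) = A (c • Adag f) - c • f := by
        rw [map_smul, smul_sub]
      rwa [heq] at this
  -- `Adag 0 = 0`
  have hA0 : Adag 0 = 0 := by
    refine aux_unique A _ _ (0 : V) (hchar 0 (Submodule.zero_mem D)) ⟨?_, ?_⟩
    · exact Submodule.zero_mem _
    · simp
  -- on `D`, `Adag g` agrees with `R (αc g) g`
  have hfix : ∀ g ∈ D, Adag g = R (αc g) g := by
    intro g hg
    have hle : ∀ ε > (0:ℝ), ‖R (αc g) g - Adag g‖ ≤ ε := by
      intro ε hε
      obtain ⟨δ, hδ, hδ'⟩ := hconv g hg ε hε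
      exact hδ' g (by simp [le_of_lt hδ])
    have h0 : ‖R (αc g) g - Adag g‖ = 0 := by
      by_contra hne
      have hpos : 0 < ‖R (αc g) g - Adag g‖ :=
        lt_of_le_of_ne (norm_nonneg _) (Ne.symm hne)
      have := hle (‖R (αc g) g - Adag g‖ / 2) (by linarith)
      linarith
    exact (sub_eq_zero.1 (norm_eq_zero.1 h0)).symm
  -- boundedness on `D` via `hconv` at `f = 0`
  obtain ⟨δ, hδpos, hδ'⟩ := hconv 0 (Submodule.zero_mem D) 1 one_pos
  have hbound : ∀ f ∈ D, ‖Adag f‖ ≤ δ⁻¹ * ‖f‖ := by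
    intro f hf
    rcases eq_or_ne f 0 with rfl | hne
    · simp [hA0]
    · have hnf : (0:ℝ) < ‖f‖ := norm_pos_iff.2 hne
      set g : V := (δ / ‖f‖) • f with hgdef
      have hgD : g ∈ D := Submodule.smul_mem D _ hf
      have hgnorm : ‖g‖ = δ := by
        rw [hgdef, norm_smul, Real.norm_eq_abs, abs_of_pos (by positivity)]
        field_simp
      have h1 : ‖Adag g‖ ≤ 1 := by
        rw [hfix g hgD]
        have := hδ' g (by rw [sub_zero, hgnorm])
        simpa [hA0] using this
      have h2 : Adag g = (δ / ‖f‖) • Adag f := hsmul _ f hf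
      rw [h2, norm_smul, Real.norm_eq_abs, abs_of_pos (by positivity)] at h1
      rw [div_mul_eq_mul_div, div_le_one hnf] at h1
      calc ‖Adag f‖ = δ⁻¹ * (δ * ‖Adag f‖) := by field_simp
        _ ≤ δ⁻¹ * ‖f‖ := by
            apply mul_le_mul_of_nonneg_left h1 (by positivity)
  -- the continuous linear map on `D`
  let L₀ : D →ₗ[ℝ] U :=
    { toFun := fun f => Adag f.val
      map_add' := fun f g => hadd f.val f.2 g.val g.2
      map_smul' := fun c f => hsmul c f.val f.2 }
  let L : D →L[ℝ] U := LinearMap.mkContinuous L₀ δ⁻¹ (fun f => by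
    exact hbound f.val f.2)
  -- density of `D` in `V`
  have hDtop : D.topologicalClosure = ⊤ := by
    rw [Submodule.topologicalClosure_eq_top_iff]
    rw [Submodule.eq_bot_iff]
    intro x hx
    rw [Submodule.mem_orthogonal] at hx
    have hx1 : x ∈ (LinearMap.range (A : U →ₗ[ℝ] V))ᗮ := by
      rw [Submodule.mem_orthogonal]
      intro u hu
      refine hx u ?_
      rw [hD, Submodule.add_eq_sup]
      exact Submodule.mem_sup_left hu
    have hx2 : ⟪x, x⟫ = 0 := by
      refine hx x ?_
      rw [hD, Submodule.add_eq_sup]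
      exact Submodule.mem_sup_right hx1
    exact inner_self_eq_zero (𝕜 := ℝ).1 hx2
  have hdense : DenseRange (D.subtypeL : D → V) := by
    have : Dense (D : Set V) := Submodule.dense_iff_topologicalClosure_eq_top.2 hDtop
    simpa [DenseRange, Subtype.range_coe] using this
  have hui : IsUniformInducing (D.subtypeL : D →L[ℝ] V) :=
    isUniformEmbedding_subtype_val.toIsUniformInducing
  refine ⟨L.extend D.subtypeL, ?_⟩
  intro f hf
  have := ContinuousLinearMap.extend_eq L hdense hui ⟨f, hf⟩
  exact this
end

section
/- Let U and V be real Hilbert spaces, A : U → V a bounded linear operator, D := range(A) + range(A)^⊥, and A† : D → U the Moore–Penrose generalized inverse. Let (R_α)_{α>0} be a family of continuous (linear) operators V → U such that R_α f → A†f as α → 0 for every f ∈ D. Then for every fixed f ∈ D there exists an a-priori parameter choice rule α : ℝ_{>0} → ℝ_{>0} with lim_{δ→0} α(δ) = 0 such that lim_{δ→0} sup{ ‖R_{α(δ)} g − A†f‖ : g ∈ V, ‖g − f‖ ≤ δ } = 0; that is, (R_α, α) is a convergent regularization method for Au = f. -/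
open scoped Topology
open Filter

/-- If a family `(R_α)_{α>0}` of continuous linear operators converges pointwise on
`D = range(A) + range(A)ᗮ` to the Moore–Penrose inverse `A†` as `α → 0`, then for every
`f ∈ D` there is an a-priori parameter choice rule `α(δ) → 0` making `(R_α, α)` a
convergent regularization method for `A u = f`. -/
theorem stmt_7 {U V : Type*}
    [NormedAddCommGroup U] [InnerProductSpace ℝ U] [CompleteSpace U]
    [NormedAddCommGroup V] [InnerProductSpace ℝ V] [CompleteSpace V]
    (A : U →L[ℝ] V) (Adag : V → U)
    (hAdag : ∀ f ∈ (LinearMap.range (A : U →ₗ[ℝ] V) + (LinearMap.range (A : U →ₗ[ℝ] V))ᗮ : Submodule ℝ V),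
      IsLSS A f (Adag f) ∧ ∀ w : U, IsLSS A f w → ‖Adag f‖ ≤ ‖w‖)
    (R : ℝ → (V →L[ℝ] U))
    (hptw : ∀ f ∈ (LinearMap.range (A : U →ₗ[ℝ] V) + (LinearMap.range (A : U →ₗ[ℝ] V))ᗮ : Submodule ℝ V),
      Tendsto (fun α => R α f) (𝓝[>] (0 : ℝ)) (𝓝 (Adag f))) :
    ∀ f ∈ (LinearMap.range (A : U →ₗ[ℝ] V) + (LinearMap.range (A : U →ₗ[ℝ] V))ᗮ : Submodule ℝ V),
      ∃ αr : ℝ → ℝ,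
        (∀ δ > (0 : ℝ), 0 < αr δ) ∧
        Tendsto αr (𝓝[>] (0 : ℝ)) (𝓝 0) ∧
        ∀ ε > (0 : ℝ), ∃ δ₀ > (0 : ℝ), ∀ δ : ℝ, 0 < δ → δ ≤ δ₀ →
          ∀ g : V, ‖g - f‖ ≤ δ → ‖R (αr δ) g - Adag f‖ ≤ ε := by
  intro f hf
  classical
  have hptwf := hptw f hf
  -- choose β
  have hβ : ∀ k : ℕ, ∃ α : ℝ, 0 < α ∧ α < 1/(k+1) ∧ ‖R α f - Adag f‖ ≤ 1/(2*(k+1)) := by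
    intro k
    have hk : (0:ℝ) < 1/(2*(k+1)) := by positivity
    have h1 : ∀ᶠ α in 𝓝[>] (0:ℝ), ‖R α f - Adag f‖ ≤ 1/(2*(k+1)) := by
      have := hptwf.eventually (Metric.ball_mem_nhds (Adag f) hk)
      filter_upwards [this] with α hα
      rw [dist_eq_norm] at hα
      exact hα.le
    have h2 : ∀ᶠ α in 𝓝[>] (0:ℝ), α ∈ Set.Ioo (0:ℝ) (1/(k+1)) := by
      have hk1 : (0:ℝ) < 1/(k+1) := by positivity
      exact Ioo_mem_nhdsGT_of_mem ⟨le_refl _, hk1⟩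
    obtain ⟨α, hα1, hα2⟩ := (h1.and h2).exists
    exact ⟨α, hα2.1, hα2.2, hα1⟩
  choose β hβpos hβlt hβnorm using hβ
  set d : ℕ → ℝ := fun k => min (1/(k+1)) (1/(2*(k+1)*(‖R (β k)‖+1))) with hd
  have hdpos : ∀ k, 0 < d k := by
    intro k
    have h1 : (0:ℝ) < 1/((k:ℝ)+1) := by positivity
    have h2 : (0:ℝ) < 1/(2*((k:ℝ)+1)*(‖R (β k)‖+1)) := by positivity
    exact lt_min h1 h2
  have hdfind : ∀ δ : ℝ, 0 < δ → ∃ k, d k < δ := by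
    intro δ hδ
    obtain ⟨k, hk⟩ := exists_nat_one_div_lt hδ
    exact ⟨k, lt_of_le_of_lt (min_le_left _ _) hk⟩
  set αr : ℝ → ℝ := fun δ => if h : ∃ k, d k < δ then β (Nat.find h - 1) else 1 with hαr
  have hαrpos : ∀ δ > (0:ℝ), 0 < αr δ := by
    intro δ hδ
    rw [hαr]
    simp only
    split
    · exact hβpos _
    · exact one_pos
  -- key estimate
  have key : ∀ k : ℕ, ∀ δ : ℝ, 0 < δ → (∀ j ≤ k, δ ≤ d j) →
      ∀ g : V, ‖g - f‖ ≤ δ → ‖R (αr δ) g - Adag f‖ ≤ 1/(k+1) := by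
    intro k δ hδ hdk g hg
    have h : ∃ j, d j < δ := hdfind δ hδ
    set m := Nat.find h with hm
    have hmk : k + 1 ≤ m := by
      by_contra hc
      push_neg at hc
      have : d m < δ := Nat.find_spec h
      exact absurd (hdk m (by omega)) (not_le.mpr this)
    set j := m - 1 with hj
    have hjk : k ≤ j := by omega
    have hjm : j < m := by omega
    have hdj : δ ≤ d j := le_of_not_gt (Nat.find_min h hjm)
    have hαrδ : αr δ = β j := by rw [hαr]; simp only; rw [dif_pos h]
    have hnorm1 : ‖R (β j) (g - f)‖ ≤ ‖R (β j)‖ * δ := by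
      calc ‖R (β j) (g - f)‖ ≤ ‖R (β j)‖ * ‖g - f‖ := (R (β j)).le_opNorm _
        _ ≤ ‖R (β j)‖ * δ := by
            exact mul_le_mul_of_nonneg_left hg (norm_nonneg _)
    have hδd : δ ≤ 1/(2*((j:ℝ)+1)*(‖R (β j)‖+1)) := hdj.trans (min_le_right _ _)
    have hbound : ‖R (β j)‖ * δ ≤ 1/(2*((j:ℝ)+1)) := by
      have h1 : ‖R (β j)‖ * δ ≤ ‖R (β j)‖ * (1/(2*((j:ℝ)+1)*(‖R (β j)‖+1))) :=
        mul_le_mul_of_nonneg_left hδd (norm_nonneg _)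
      refine h1.trans ?_
      rw [mul_one_div, div_le_div_iff₀ (by positivity) (by positivity)]
      nlinarith [norm_nonneg (R (β j)), Nat.cast_nonneg (α := ℝ) j]
    have hsplit : ‖R (αr δ) g - Adag f‖ ≤ ‖R (β j) (g - f)‖ + ‖R (β j) f - Adag f‖ := by
      rw [hαrδ]
      have : R (β j) g - Adag f = R (β j) (g - f) + (R (β j) f - Adag f) := by
        rw [map_sub]; abel
      rw [this]
      exact norm_add_le _ _
    have hsum : ‖R (β j) (g - f)‖ + ‖R (β j) f - Adag f‖ ≤ 1/(2*((j:ℝ)+1)) + 1/(2*((j:ℝ)+1)) := by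
      exact add_le_add (hnorm1.trans hbound) (hβnorm j)
    have hfin : (1:ℝ)/(2*((j:ℝ)+1)) + 1/(2*((j:ℝ)+1)) = 1/((j:ℝ)+1) := by
      rw [← two_mul, mul_one_div, div_eq_div_iff (by positivity) (by positivity)]
      ring
    have hjk' : (1:ℝ)/((j:ℝ)+1) ≤ 1/((k:ℝ)+1) := by
      apply one_div_le_one_div_of_le (by positivity)
      exact_mod_cast Nat.succ_le_succ hjk
    calc ‖R (αr δ) g - Adag f‖ ≤ 1/(2*((j:ℝ)+1)) + 1/(2*((j:ℝ)+1)) := hsplit.trans hsum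
      _ = 1/((j:ℝ)+1) := hfin
      _ ≤ 1/((k:ℝ)+1) := hjk'
  -- lower bound δ₀ for given k
  have hδ₀ : ∀ k : ℕ, ∃ δ₀ > (0:ℝ), ∀ δ : ℝ, δ ≤ δ₀ → ∀ j ≤ k, δ ≤ d j := by
    intro k
    refine ⟨(Finset.range (k+1)).inf' ⟨0, by simp⟩ d, ?_, ?_⟩
    · show (0:ℝ) < _
      apply (Finset.lt_inf'_iff _).mpr
      intro j _
      exact hdpos j
    · intro δ hδ j hj
      exact hδ.trans (Finset.inf'_le d (Finset.mem_range.mpr (by omega)))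
  refine ⟨αr, hαrpos, ?_, ?_⟩
  · -- tendsto
    rw [Metric.tendsto_nhds]
    intro ε hε
    obtain ⟨k, hk⟩ := exists_nat_one_div_lt hε
    obtain ⟨δ₀, hδ₀pos, hδ₀k⟩ := hδ₀ k
    have hmem : Set.Ioc (0:ℝ) δ₀ ∈ 𝓝[>] (0:ℝ) := Ioc_mem_nhdsGT_of_mem ⟨le_refl _, hδ₀pos⟩
    filter_upwards [hmem] with δ hδ
    have hδpos : 0 < δ := hδ.1
    have h : ∃ j, d j < δ := hdfind δ hδpos
    have hαrδ : αr δ = β (Nat.find h - 1) := by rw [hαr]; simp only; rw [dif_pos h]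
    set m := Nat.find h with hm
    have hmk : k + 1 ≤ m := by
      by_contra hc
      push_neg at hc
      have h1 : d m < δ := Nat.find_spec h
      have h2 : δ ≤ d m := hδ₀k δ hδ.2 m (by omega)
      linarith
    have hle : (1:ℝ)/(((m-1:ℕ):ℝ)+1) ≤ 1/((k:ℝ)+1) := by
      apply one_div_le_one_div_of_le (by positivity)
      have : k ≤ m - 1 := by omega
      exact_mod_cast Nat.succ_le_succ this
    rw [Real.dist_eq, sub_zero, abs_of_pos (hαrpos δ hδpos), hαrδ]
    calc β (m - 1) < 1/(((m-1:ℕ):ℝ)+1) := hβlt _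
      _ ≤ 1/((k:ℝ)+1) := hle
      _ < ε := hk
  · -- regularization property
    intro ε hε
    obtain ⟨k, hk⟩ := exists_nat_one_div_lt hε
    obtain ⟨δ₀, hδ₀pos, hδ₀k⟩ := hδ₀ k
    refine ⟨δ₀, hδ₀pos, ?_⟩
    intro δ hδpos hδle g hg
    have := key k δ hδpos (hδ₀k δ hδle) g hg
    exact this.trans hk.le
end

section
/- Let U and V be real Hilbert spaces, A : U → V a bounded linear operator, D := range(A) + range(A)^⊥, and A† : D → U the Moore–Penrose generalized inverse. Let (R_α)_{α>0} be a family of continuous linear operators V → U such that R_α f → A†f as α → 0 for every f ∈ D, and suppose sup_{α>0} ‖A ∘ R_α‖ < ∞ (uniform boundedness of the operators A R_α). Then for every f ∈ V \ D and every sequence (α_n) of positive reals with α_n → 0, the norms ‖R_{α_n} f‖ tend to +∞. -/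
open scoped Topology
open Filter
open scoped RealInnerProductSpace
set_option linter.unusedSectionVars false
set_option linter.unusedVariables false

section Aux
variable {U V : Type*}
    [NormedAddCommGroup U] [InnerProductSpace ℝ U] [CompleteSpace U]
    [NormedAddCommGroup V] [InnerProductSpace ℝ V] [CompleteSpace V]

-- Pythagoras-type computation
lemma norm_sq_split (A : U →L[ℝ] V) (a b : V) (ha : a ∈ LinearMap.range (A : U →ₗ[ℝ] V))
    (hb : b ∈ (LinearMap.range (A : U →ₗ[ℝ] V))ᗮ) (w : U) :
    ‖A w - (a + b)‖ ^ 2 = ‖A w - a‖ ^ 2 + ‖b‖ ^ 2 := by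
  have hAwa : A w - a ∈ LinearMap.range (A : U →ₗ[ℝ] V) := by
    obtain ⟨w₀, rfl⟩ := ha
    exact ⟨w - w₀, by simp⟩
  have hinner : ⟪A w - a, b⟫ = 0 := (Submodule.mem_orthogonal _ b).mp hb _ hAwa
  have hABeq : A w - (a + b) = (A w - a) - b := by abel
  rw [hABeq, norm_sub_sq_real, hinner]
  ring

-- for g ∈ D, A (Adag g) is the orthogonal projection of g
lemma lss_eq_proj (A : U →L[ℝ] V) (g : V) (a b : V) (ha : a ∈ LinearMap.range (A : U →ₗ[ℝ] V))
    (hb : b ∈ (LinearMap.range (A : U →ₗ[ℝ] V))ᗮ) (hg : g = a + b) (u : U)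
    (hu : ‖A u - g‖ = ⨅ w : U, ‖A w - g‖) : A u = a := by
  subst hg
  obtain ⟨w₀, hw₀⟩ := id ha
  have hbdd : BddBelow (Set.range fun w : U => ‖A w - (a + b)‖) := by
    refine ⟨0, ?_⟩
    rintro x ⟨w, rfl⟩
    positivity
  have hlow : ∀ w : U, ‖b‖ ≤ ‖A w - (a + b)‖ := by
    intro w
    have h := norm_sq_split A a b ha hb w
    nlinarith [norm_nonneg (A w - (a + b)), norm_nonneg (A w - a), sq_nonneg (‖A w - a‖),
      norm_nonneg b]
  have hinf : (⨅ w : U, ‖A w - (a + b)‖) = ‖b‖ := by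
    refine le_antisymm ?_ (le_ciInf hlow)
    have : ‖A w₀ - (a + b)‖ = ‖b‖ := by
      rw [show A w₀ = a from hw₀]
      simp [norm_neg, sub_add_eq_sub_sub]
    calc (⨅ w : U, ‖A w - (a + b)‖) ≤ ‖A w₀ - (a + b)‖ := ciInf_le hbdd w₀
      _ = ‖b‖ := this
  rw [hinf] at hu
  have h := norm_sq_split A a b ha hb u
  rw [hu] at h
  have h0 : ‖A u - a‖ ^ 2 = 0 := by linarith
  have h1 : ‖A u - a‖ = 0 := by
    have := sq_nonneg ‖A u - a‖
    nlinarith [norm_nonneg (A u - a)]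
  exact sub_eq_zero.mp (norm_eq_zero.mp h1)

end Aux

lemma mem_range_of_bounded_ultra {U V : Type*}
    [NormedAddCommGroup U] [InnerProductSpace ℝ U] [CompleteSpace U]
    [NormedAddCommGroup V] [InnerProductSpace ℝ V] [CompleteSpace V]
    (A : U →L[ℝ] V) (F : Ultrafilter ℕ) (u : ℕ → U) (C : ℝ)
    (hC : ∀ᶠ n in (F : Filter ℕ), ‖u n‖ ≤ C) (g : V)
    (hg : Tendsto (fun n => A (u n)) (F : Filter ℕ) (𝓝 g)) :
    g ∈ LinearMap.range (A : U →ₗ[ℝ] V) := by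
  -- ultrafilter limits of inner products
  have hlim : ∀ v : U, ∃ a : ℝ, Tendsto (fun n => ⟪u n, v⟫) (F : Filter ℕ) (𝓝 a) := by
    intro v
    have hmem : ∀ᶠ n in (F : Filter ℕ),
        (fun n => ⟪u n, v⟫) n ∈ Set.Icc (-(C * ‖v‖)) (C * ‖v‖) := by
      filter_upwards [hC] with n hn
      have h1 : |⟪u n, v⟫| ≤ ‖u n‖ * ‖v‖ := abs_real_inner_le_norm _ _
      have h2 : ‖u n‖ * ‖v‖ ≤ C * ‖v‖ := by
        gcongr
      have := h1.trans h2
      constructor <;> [linarith [neg_abs_le ⟪u n, v⟫]; linarith [le_abs_self ⟪u n, v⟫]]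
    have hle : (F.map (fun n => ⟪u n, v⟫) : Filter ℝ) ≤ 𝓟 (Set.Icc (-(C * ‖v‖)) (C * ‖v‖)) := by
      rw [Filter.le_principal_iff]
      exact hmem
    obtain ⟨a, _, ha⟩ := (isCompact_Icc (a := -(C * ‖v‖)) (b := C * ‖v‖)).ultrafilter_le_nhds
      (F.map (fun n => ⟪u n, v⟫)) hle
    exact ⟨a, ha⟩
  choose L hL using hlim
  have hadd : ∀ v w : U, L (v + w) = L v + L w := by
    intro v w
    refine tendsto_nhds_unique (hL (v + w)) ?_
    have := (hL v).add (hL w)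
    simpa [inner_add_right] using this
  have hsmul : ∀ (c : ℝ) (v : U), L (c • v) = c * L v := by
    intro c v
    refine tendsto_nhds_unique (hL (c • v)) ?_
    have := (hL v).const_mul c
    simpa [inner_smul_right] using this
  have hbound : ∀ v : U, ‖L v‖ ≤ C * ‖v‖ := by
    intro v
    have habs : Tendsto (fun n => |⟪u n, v⟫|) (F : Filter ℕ) (𝓝 |L v|) := (hL v).abs
    refine le_of_tendsto habs ?_
    filter_upwards [hC] with n hn
    calc |⟪u n, v⟫| ≤ ‖u n‖ * ‖v‖ := abs_real_inner_le_norm _ _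
      _ ≤ C * ‖v‖ := by gcongr
  let φlin : U →ₗ[ℝ] ℝ :=
    { toFun := L
      map_add' := hadd
      map_smul' := hsmul }
  let φ : U →L[ℝ] ℝ := φlin.mkContinuous C hbound
  set x : U := (InnerProductSpace.toDual ℝ U).symm φ with hx
  have hxv : ∀ v : U, ⟪x, v⟫ = L v := by
    intro v
    rw [hx, InnerProductSpace.toDual_symm_apply]; rfl
  refine ⟨x, ?_⟩
  apply ext_inner_right ℝ
  intro w
  have h1 : ⟪A x, w⟫ = L ((ContinuousLinearMap.adjoint A) w) := by
    rw [← ContinuousLinearMap.adjoint_inner_right, hxv]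
  have h2 : Tendsto (fun n => ⟪A (u n), w⟫) (F : Filter ℕ) (𝓝 ⟪g, w⟫) :=
    hg.inner tendsto_const_nhds
  have h3 : Tendsto (fun n => ⟪u n, (ContinuousLinearMap.adjoint A) w⟫) (F : Filter ℕ)
      (𝓝 ⟪g, w⟫) := by
    refine h2.congr fun n => ?_
    rw [ContinuousLinearMap.adjoint_inner_right]
  rw [ContinuousLinearMap.coe_coe, h1, tendsto_nhds_unique (hL _) h3]

set_option maxHeartbeats 1000000 in
set_option synthInstance.maxHeartbeats 400000 in
/-- If `(R_α)_{α>0}` converges pointwise to `A†` on `D = range(A) + range(A)ᗮ` as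
`α → 0` and the operators `A ∘ R_α` are uniformly bounded, then for every
`f ∈ V \ D` and every positive null sequence `(α_n)`, the norms `‖R_{α_n} f‖` tend
to `+∞`. -/
theorem stmt_8 {U V : Type*}
    [NormedAddCommGroup U] [InnerProductSpace ℝ U] [CompleteSpace U]
    [NormedAddCommGroup V] [InnerProductSpace ℝ V] [CompleteSpace V]
    (A : U →L[ℝ] V) (Adag : V → U)
    (hAdag : ∀ f ∈ (LinearMap.range (A : U →ₗ[ℝ] V) + (LinearMap.range (A : U →ₗ[ℝ] V))ᗮ : Submodule ℝ V),
      IsLSS A f (Adag f) ∧ ∀ w : U, IsLSS A f w → ‖Adag f‖ ≤ ‖w‖)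
    (R : ℝ → (V →L[ℝ] U))
    (hptw : ∀ f ∈ (LinearMap.range (A : U →ₗ[ℝ] V) + (LinearMap.range (A : U →ₗ[ℝ] V))ᗮ : Submodule ℝ V),
      Tendsto (fun α => R α f) (𝓝[>] (0 : ℝ)) (𝓝 (Adag f)))
    (hbnd : ∃ M : ℝ, ∀ α > (0 : ℝ), ‖A.comp (R α)‖ ≤ M) :
    ∀ f : V, f ∉ (LinearMap.range (A : U →ₗ[ℝ] V) + (LinearMap.range (A : U →ₗ[ℝ] V))ᗮ : Submodule ℝ V) →
      ∀ αs : ℕ → ℝ, (∀ n, 0 < αs n) → Tendsto αs atTop (𝓝 0) →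
        Tendsto (fun n => ‖R (αs n) f‖) atTop atTop := by
  obtain ⟨M, hM⟩ := hbnd
  have hM0 : 0 ≤ M := le_trans (norm_nonneg _) (hM 1 one_pos)
  intro f hf αs hpos h0
  haveI : CompleteSpace (LinearMap.range (A : U →ₗ[ℝ] V))ᗮ :=
    (Submodule.isClosed_orthogonal _).completeSpace_coe
  haveI hop1 : Submodule.HasOrthogonalProjection (LinearMap.range (A : U →ₗ[ℝ] V))ᗮ :=
    Submodule.HasOrthogonalProjection.ofCompleteSpace _
  haveI hop2 : Submodule.HasOrthogonalProjection (LinearMap.range (A : U →ₗ[ℝ] V))ᗮᗮ := inferInstance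
  have hKperp : ((LinearMap.range (A : U →ₗ[ℝ] V))ᗮᗮ)ᗮ = (LinearMap.range (A : U →ₗ[ℝ] V))ᗮ :=
    Submodule.orthogonal_orthogonal _
  have hrAK : LinearMap.range (A : U →ₗ[ℝ] V) ≤ (LinearMap.range (A : U →ₗ[ℝ] V))ᗮᗮ :=
    Submodule.le_orthogonal_orthogonal _
  set Pf : V := (Submodule.orthogonalProjectionOnto ((LinearMap.range (A : U →ₗ[ℝ] V))ᗮᗮ) f : V) with hPfdef
  have hαs : Tendsto αs atTop (𝓝[>] (0:ℝ)) := by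
    rw [tendsto_nhdsWithin_iff]; exact ⟨h0, Eventually.of_forall hpos⟩
  -- pointwise convergence of A ∘ R on D
  have hDlim : ∀ g ∈ (LinearMap.range (A : U →ₗ[ℝ] V) + (LinearMap.range (A : U →ₗ[ℝ] V))ᗮ : Submodule ℝ V),
      Tendsto (fun n => A (R (αs n) g)) atTop
        (𝓝 ((Submodule.orthogonalProjectionOnto ((LinearMap.range (A : U →ₗ[ℝ] V))ᗮᗮ) g : V))) := by
    intro g hg
    have hg' := hg
    rw [Submodule.add_eq_sup, Submodule.mem_sup] at hg'
    obtain ⟨a, ha, b, hb, hab⟩ := hg'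
    have hAu : A (Adag g) = a :=
      lss_eq_proj A g a b ha hb hab.symm (Adag g) (hAdag g hg).1
    have hproj : ((Submodule.orthogonalProjectionOnto ((LinearMap.range (A : U →ₗ[ℝ] V))ᗮᗮ) g : V)) = a := by
      rw [← hab, map_add]
      have h1 : Submodule.orthogonalProjectionOnto ((LinearMap.range (A : U →ₗ[ℝ] V))ᗮᗮ) a = ⟨a, hrAK ha⟩ :=
        Submodule.orthogonalProjectionOnto_mem_subspace_eq_self (⟨a, hrAK ha⟩ : ((LinearMap.range (A : U →ₗ[ℝ] V))ᗮᗮ))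
      have hbK : b ∈ ((LinearMap.range (A : U →ₗ[ℝ] V))ᗮᗮ)ᗮ := by rw [hKperp]; exact hb
      have h2 : Submodule.orthogonalProjectionOnto ((LinearMap.range (A : U →ₗ[ℝ] V))ᗮᗮ) b = 0 :=
        Submodule.orthogonalProjectionOnto_apply_of_mem_orthogonal hbK
      rw [h1, h2]; simp
    have htend : Tendsto (fun n => A (R (αs n) g)) atTop (𝓝 (A (Adag g))) :=
      ((A.continuous.tendsto _).comp (hptw g hg)).comp hαs
    rw [hproj, ← hAu]
    exact htend
  -- density of D
  have hdense : ∀ ε > (0:ℝ),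
      ∃ g ∈ (LinearMap.range (A : U →ₗ[ℝ] V) + (LinearMap.range (A : U →ₗ[ℝ] V))ᗮ : Submodule ℝ V), ‖f - g‖ < ε := by
    intro ε hε
    have hsup : (LinearMap.range (A : U →ₗ[ℝ] V))ᗮᗮ ⊔ ((LinearMap.range (A : U →ₗ[ℝ] V))ᗮᗮ)ᗮ = ⊤ :=
      Submodule.sup_orthogonal_of_hasOrthogonalProjection
    have hfmem : f ∈ (LinearMap.range (A : U →ₗ[ℝ] V))ᗮᗮ ⊔ ((LinearMap.range (A : U →ₗ[ℝ] V))ᗮᗮ)ᗮ := by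
      rw [hsup]; trivial
    rw [Submodule.mem_sup] at hfmem
    obtain ⟨k, hk, b, hb, hkb⟩ := hfmem
    have hkcl : k ∈ closure ((LinearMap.range (A : U →ₗ[ℝ] V) : Submodule ℝ V) : Set V) := by
      rw [Submodule.orthogonal_orthogonal_eq_closure] at hk
      exact hk
    rw [Metric.mem_closure_iff] at hkcl
    obtain ⟨a, haS, hdist⟩ := hkcl ε hε
    refine ⟨a + b, ?_, ?_⟩
    · rw [Submodule.add_eq_sup]
      rw [hKperp] at hb
      exact Submodule.add_mem _ (Submodule.mem_sup_left haS) (Submodule.mem_sup_right hb)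
    · have heq : f - (a + b) = k - a := by rw [← hkb]; abel
      rw [heq, ← dist_eq_norm]
      exact hdist
  -- convergence of A (R (αs n) f) to Pf
  have hAR : Tendsto (fun n => A (R (αs n) f)) atTop (𝓝 Pf) := by
    rw [Metric.tendsto_atTop]
    intro ε hε
    have hε' : (0:ℝ) < ε / (M + 3) := by positivity
    obtain ⟨g, hg, hfg⟩ := hdense (ε / (M + 3)) hε'
    have hgl := hDlim g hg
    rw [Metric.tendsto_atTop] at hgl
    obtain ⟨N, hN⟩ := hgl (ε / (M + 3)) hε'
    refine ⟨N, fun n hn => ?_⟩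
    have h1 : ‖A (R (αs n) f) - A (R (αs n) g)‖ ≤ M * (ε / (M + 3)) := by
      have heq : A (R (αs n) f) - A (R (αs n) g) = (A.comp (R (αs n))) (f - g) := by
        simp [map_sub]
      rw [heq]
      calc ‖(A.comp (R (αs n))) (f - g)‖ ≤ ‖A.comp (R (αs n))‖ * ‖f - g‖ :=
            ContinuousLinearMap.le_opNorm _ _
        _ ≤ M * (ε / (M + 3)) :=
            mul_le_mul (hM _ (hpos n)) hfg.le (norm_nonneg _) hM0
    have h2 : dist (A (R (αs n) g))
        ((Submodule.orthogonalProjectionOnto ((LinearMap.range (A : U →ₗ[ℝ] V))ᗮᗮ) g : V)) < ε / (M + 3) := hN n hn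
    have h3 : ‖((Submodule.orthogonalProjectionOnto ((LinearMap.range (A : U →ₗ[ℝ] V))ᗮᗮ) g : V)) - Pf‖ ≤ ε / (M + 3) := by
      have hco : ((Submodule.orthogonalProjectionOnto ((LinearMap.range (A : U →ₗ[ℝ] V))ᗮᗮ) g : V)) - Pf
          = ((Submodule.orthogonalProjectionOnto ((LinearMap.range (A : U →ₗ[ℝ] V))ᗮᗮ) (g - f) : V)) := by
        rw [hPfdef, map_sub]
        simp
      rw [hco]
      calc ‖((Submodule.orthogonalProjectionOnto ((LinearMap.range (A : U →ₗ[ℝ] V))ᗮᗮ) (g - f) : V))‖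
          = ‖Submodule.orthogonalProjectionOnto ((LinearMap.range (A : U →ₗ[ℝ] V))ᗮᗮ) (g - f)‖ := rfl
        _ ≤ ‖(Submodule.orthogonalProjectionOnto ((LinearMap.range (A : U →ₗ[ℝ] V))ᗮᗮ) : V →L[ℝ] _)‖ * ‖g - f‖ :=
            ContinuousLinearMap.le_opNorm _ _
        _ ≤ 1 * ‖g - f‖ := by
            gcongr
            exact Submodule.orthogonalProjectionOnto_norm_le _
        _ = ‖g - f‖ := one_mul _
        _ = ‖f - g‖ := norm_sub_rev _ _
        _ ≤ ε / (M + 3) := hfg.le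
    have htri : dist (A (R (αs n) f)) Pf ≤
        ‖A (R (αs n) f) - A (R (αs n) g)‖
        + dist (A (R (αs n) g)) ((Submodule.orthogonalProjectionOnto ((LinearMap.range (A : U →ₗ[ℝ] V))ᗮᗮ) g : V))
        + ‖((Submodule.orthogonalProjectionOnto ((LinearMap.range (A : U →ₗ[ℝ] V))ᗮᗮ) g : V)) - Pf‖ := by
      rw [dist_eq_norm, dist_eq_norm]
      exact norm_sub_le_norm_sub_add_norm_sub _ _ _ |>.trans (by
        gcongr
        exact norm_sub_le_norm_sub_add_norm_sub _ _ _)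
    have hd : (M + 3) * (ε / (M + 3)) = ε := by field_simp
    linarith
  -- Pf is not in the range of A
  have hPfr : Pf ∉ LinearMap.range (A : U →ₗ[ℝ] V) := by
    intro hmem
    apply hf
    have hsub : f - Pf ∈ ((LinearMap.range (A : U →ₗ[ℝ] V))ᗮᗮ)ᗮ :=
      Submodule.sub_starProjection_mem_orthogonal f
    rw [hKperp] at hsub
    have hfe : f = Pf + (f - Pf) := by abel
    rw [hfe, Submodule.add_eq_sup]
    exact Submodule.add_mem _ (Submodule.mem_sup_left hmem) (Submodule.mem_sup_right hsub)
  -- contradiction via ultrafilter weak limit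
  by_contra hcon
  rw [tendsto_atTop] at hcon
  push_neg at hcon
  obtain ⟨C, hC⟩ := hcon
  have hne : NeBot (atTop ⊓ 𝓟 {n | ‖R (αs n) f‖ < C}) := frequently_iff_neBot.mp hC
  obtain ⟨F, hF⟩ := Ultrafilter.exists_le (atTop ⊓ 𝓟 {n | ‖R (αs n) f‖ < C})
  have hFtop : (F : Filter ℕ) ≤ atTop := hF.trans inf_le_left
  have hFC : ∀ᶠ n in (F : Filter ℕ), ‖R (αs n) f‖ ≤ C := by
    have hle := hF.trans inf_le_right
    rw [le_principal_iff] at hle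
    filter_upwards [hle] with n hn using le_of_lt hn
  have hgF : Tendsto (fun n => A (R (αs n) f)) (F : Filter ℕ) (𝓝 Pf) :=
    hAR.mono_left hFtop
  exact hPfr (mem_range_of_bounded_ultra A F (fun n => R (αs n) f) C hFC Pf hgF)
end

section
/- Let U and V be real Hilbert spaces, A : U → V a bounded linear operator, D := range(A) + range(A)^⊥, and A† : D → U the Moore–Penrose generalized inverse. Let (R_α)_{α>0} be a family of continuous linear operators V → U with R_α f → A†f as α → 0 for every f ∈ D, and let α : ℝ_{>0} → ℝ_{>0} be an a-priori parameter choice rule. Then the following are equivalent: (i) for every f ∈ D, lim_{δ→0} sup{ ‖R_{α(δ)} g − A†f‖ : g ∈ V, ‖g − f‖ ≤ δ } = 0 and lim_{δ→0} α(δ) = 0 (i.e. (R_α, α) is a convergent regularization method for every f ∈ D); (ii) lim_{δ→0} α(δ) = 0 and lim_{δ→0} δ · ‖R_{α(δ)}‖ = 0, where ‖R_{α(δ)}‖ denotes the operator norm. -/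
open scoped Topology
open Filter

/-- For a family `(R_α)_{α>0}` of continuous linear operators converging pointwise to
`A†` on `D = range(A) + range(A)ᗮ` and an a-priori parameter choice rule
`αr : ℝ_{>0} → ℝ_{>0}`, the pair `(R_α, αr)` is a convergent regularization method for
every `f ∈ D` iff `αr(δ) → 0` and `δ·‖R_{αr(δ)}‖ → 0` as `δ → 0`. -/
theorem stmt_9 {U V : Type*}
    [NormedAddCommGroup U] [InnerProductSpace ℝ U] [CompleteSpace U]
    [NormedAddCommGroup V] [InnerProductSpace ℝ V] [CompleteSpace V]
    (A : U →L[ℝ] V) (Adag : V → U)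
    (hAdag : ∀ f ∈ (LinearMap.range (A : U →ₗ[ℝ] V) + (LinearMap.range (A : U →ₗ[ℝ] V))ᗮ :
        Submodule ℝ V),
      IsLSS A f (Adag f) ∧ ∀ w : U, IsLSS A f w → ‖Adag f‖ ≤ ‖w‖)
    (R : ℝ → (V →L[ℝ] U))
    (hptw : ∀ f ∈ (LinearMap.range (A : U →ₗ[ℝ] V) + (LinearMap.range (A : U →ₗ[ℝ] V))ᗮ :
        Submodule ℝ V),
      Tendsto (fun α => R α f) (𝓝[>] (0 : ℝ)) (𝓝 (Adag f)))
    (αr : ℝ → ℝ) (hαr : ∀ δ > (0 : ℝ), 0 < αr δ) :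
    ((Tendsto αr (𝓝[>] (0 : ℝ)) (𝓝 0) ∧
      ∀ f ∈ (LinearMap.range (A : U →ₗ[ℝ] V) + (LinearMap.range (A : U →ₗ[ℝ] V))ᗮ :
          Submodule ℝ V),
        ∀ ε > (0 : ℝ), ∃ δ₀ > (0 : ℝ), ∀ δ : ℝ, 0 < δ → δ ≤ δ₀ →
          ∀ g : V, ‖g - f‖ ≤ δ → ‖R (αr δ) g - Adag f‖ ≤ ε) ↔
      (Tendsto αr (𝓝[>] (0 : ℝ)) (𝓝 0) ∧
        Tendsto (fun δ : ℝ => δ * ‖R (αr δ)‖) (𝓝[>] (0 : ℝ)) (𝓝 0))) := by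
  have h0mem : (0 : V) ∈ (LinearMap.range (A : U →ₗ[ℝ] V) + (LinearMap.range (A : U →ₗ[ℝ] V))ᗮ :
      Submodule ℝ V) :=
    Submodule.zero_mem _
  have hAdag0 : Adag 0 = 0 := by
    obtain ⟨h1, h2⟩ := hAdag 0 h0mem
    have hLSS0 : IsLSS A 0 0 := by
      unfold IsLSS
      simp only [sub_zero, map_zero, norm_zero]
      refine le_antisymm (le_ciInf fun w => norm_nonneg _) ?_
      have := ciInf_le (f := fun w : U => ‖A w‖)
        ⟨0, by rintro x ⟨w, rfl⟩; exact norm_nonneg _⟩ 0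
      simpa using this
    have := h2 0 hLSS0
    simpa using this
  constructor
  · rintro ⟨hα, hconv⟩
    refine ⟨hα, ?_⟩
    rw [Metric.tendsto_nhdsWithin_nhds]
    intro ε hε
    obtain ⟨δ₀, hδ₀, H⟩ := hconv 0 h0mem (ε/2) (by positivity)
    refine ⟨δ₀, hδ₀, fun {δ} hδ hdist => ?_⟩
    have hδpos : 0 < δ := hδ
    have hδle : δ ≤ δ₀ := by
      rw [Real.dist_eq, sub_zero, abs_of_pos hδpos] at hdist
      linarith
    have key : ∀ g : V, ‖g‖ ≤ δ → ‖R (αr δ) g‖ ≤ ε/2 := by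
      intro g hg
      have := H δ hδpos hδle g (by simpa using hg)
      rwa [hAdag0, sub_zero] at this
    have hnorm : ‖R (αr δ)‖ ≤ (ε/2)/δ := by
      refine ContinuousLinearMap.opNorm_le_bound _ (by positivity) fun x => ?_
      rcases eq_or_ne x 0 with rfl | hx
      · simp
      have hxn : (0:ℝ) < ‖x‖ := norm_pos_iff.mpr hx
      have hg : ‖(δ / ‖x‖) • x‖ ≤ δ := by
        rw [norm_smul, Real.norm_eq_abs, abs_of_pos (by positivity)]
        field_simp; exact le_refl _
      have := key _ hg
      rw [map_smul, norm_smul, Real.norm_eq_abs, abs_of_pos (by positivity)] at this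
      rw [div_mul_eq_mul_div, div_le_iff₀ hxn] at this
      rw [div_mul_eq_mul_div, le_div_iff₀ hδpos]
      nlinarith
    have : δ * ‖R (αr δ)‖ ≤ ε/2 := by
      calc δ * ‖R (αr δ)‖ ≤ δ * ((ε/2)/δ) :=
            mul_le_mul_of_nonneg_left hnorm hδpos.le
        _ = ε/2 := by field_simp
    rw [Real.dist_eq, sub_zero, abs_of_nonneg (by positivity)]
    linarith
  · rintro ⟨hα, hn⟩
    refine ⟨hα, ?_⟩
    intro f hf ε hε
    have hαpos : Tendsto αr (𝓝[>] (0:ℝ)) (𝓝[>] (0:ℝ)) := by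
      rw [tendsto_nhdsWithin_iff]
      exact ⟨hα, eventually_mem_nhdsWithin.mono fun δ hδ => hαr δ hδ⟩
    have h1 : ∀ᶠ δ in 𝓝[>] (0:ℝ), ‖R (αr δ) f - Adag f‖ < ε/2 := by
      have := (hptw f hf).comp hαpos
      have := Metric.tendsto_nhds.mp this (ε/2) (by positivity)
      simpa [Function.comp, dist_eq_norm] using this
    have h2 : ∀ᶠ δ in 𝓝[>] (0:ℝ), δ * ‖R (αr δ)‖ < ε/2 := by
      have := Metric.tendsto_nhds.mp hn (ε/2) (by positivity)
      filter_upwards [this, eventually_mem_nhdsWithin] with δ hd hδ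
      rw [Real.dist_eq, sub_zero, abs_of_nonneg
        (mul_nonneg (le_of_lt hδ) (norm_nonneg _))] at hd
      exact hd
    obtain ⟨δ₀, hδ₀, hsub⟩ := mem_nhdsGT_iff_exists_Ioc_subset.mp (h1.and h2)
    refine ⟨δ₀, hδ₀, fun δ hδpos hδle g hg => ?_⟩
    obtain ⟨H1, H2⟩ := hsub ⟨hδpos, hδle⟩
    calc ‖R (αr δ) g - Adag f‖
        = ‖R (αr δ) (g - f) + (R (αr δ) f - Adag f)‖ := by rw [map_sub]; congr 1; abel
      _ ≤ ‖R (αr δ) (g - f)‖ + ‖R (αr δ) f - Adag f‖ := norm_add_le _ _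
      _ ≤ ‖R (αr δ)‖ * δ + ε/2 := add_le_add
            (le_trans (ContinuousLinearMap.le_opNorm _ _)
              (mul_le_mul_of_nonneg_left hg (norm_nonneg _))) H1.le
      _ ≤ ε := by nlinarith
end

section
/- Let J : ℝⁿ → ℝ be convex and differentiable with L-Lipschitz continuous gradient (L > 0), and suppose the set S of global minimizers of J is nonempty. Let (u^k) be the gradient descent iterates u^{k+1} = u^k − τ ∇J(u^k) from an arbitrary initial point u^0. (i) If τ = 1/L, then for every u* ∈ S and every k ≥ 1, J(u^k) − J(u*) ≤ ‖u^0 − u*‖² / (2τk). (ii) If in addition J is ν-strongly convex for some ν > 0 and τ < 1/L, then ‖u^k − u*‖² ≤ (1 − ντ)^k ‖u^0 − u*‖² for every k ≥ 0, where u* is the (unique) global minimizer. -/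
open scoped Topology


open Set InnerProductSpace

variable {E : Type*} [NormedAddCommGroup E] [InnerProductSpace ℝ E] [CompleteSpace E]

local notation "⟪" x ", " y "⟫" => @inner ℝ _ _ x y

/-- directional derivative along a line from the gradient -/
lemma gd_lineDeriv (f : E → ℝ) (Gf : E → E) (hf : ∀ x, HasGradientAt f (Gf x) x)
    (x v : E) (t : ℝ) :
    HasDerivAt (fun s : ℝ => f (x + s • v)) ⟪Gf (x + t • v), v⟫ t := by
  have hc : HasDerivAt (fun s : ℝ => x + s • v) v t := by
    simpa using ((hasDerivAt_id t).smul_const v).const_add x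
  have h := (hasGradientAt_iff_hasFDerivAt.mp (hf (x + t • v))).comp_hasDerivAt t hc
  simpa [InnerProductSpace.toDual_apply_apply, Function.comp_def] using h

/-- first-order condition for convexity -/
lemma gd_convex_lower (f : E → ℝ) (Gf : E → E) (hconv : ConvexOn ℝ Set.univ f)
    (hf : ∀ x, HasGradientAt f (Gf x) x) (x y : E) :
    f x + ⟪Gf x, y - x⟫ ≤ f y := by
  have hφc : ConvexOn ℝ Set.univ (fun s : ℝ => f (x + s • (y - x))) := by
    have := hconv.comp_affineMap (AffineMap.lineMap x y)
    simpa [Function.comp_def, AffineMap.lineMap_apply, add_comm] using this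
  have hd : HasDerivAt (fun s : ℝ => f (x + s • (y - x))) ⟪Gf (x + (0:ℝ) • (y - x)), y - x⟫ 0 :=
    gd_lineDeriv f Gf hf x (y - x) 0
  have hs := hφc.le_slope_of_hasDerivAt (Set.mem_univ (0:ℝ)) (Set.mem_univ (1:ℝ)) one_pos
    (by simpa using hd)
  simp [slope_def_field, zero_smul, one_smul] at hs
  linarith

/-- monotone gradient implies convex -/
lemma gd_convexOn_of_monotone (f : E → ℝ) (Gf : E → E)
    (hf : ∀ x, HasGradientAt f (Gf x) x)
    (hmono : ∀ x y, 0 ≤ ⟪Gf x - Gf y, x - y⟫) :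
    ConvexOn ℝ Set.univ f := by
  refine ⟨convex_univ, ?_⟩
  intro x _ y _ a b ha hb hab
  set φ := fun s : ℝ => f (x + s • (y - x)) with hφdef
  have hd : ∀ t : ℝ, HasDerivAt φ ⟪Gf (x + t • (y - x)), y - x⟫ t :=
    fun t => gd_lineDeriv f Gf hf x (y - x) t
  have hdiff : Differentiable ℝ φ := fun t => (hd t).differentiableAt
  have hderiv : deriv φ = fun t => ⟪Gf (x + t • (y - x)), y - x⟫ :=
    funext fun t => (hd t).deriv
  have hmonoφ : Monotone (deriv φ) := by
    rw [hderiv]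
    intro s t hst
    have h := hmono (x + t • (y - x)) (x + s • (y - x))
    have he : (x + t • (y - x)) - (x + s • (y - x)) = (t - s) • (y - x) := by
      rw [sub_smul]; abel
    rw [he, real_inner_smul_right, inner_sub_left] at h
    rcases eq_or_lt_of_le hst with rfl | hlt
    · exact le_refl _
    · nlinarith [sub_pos.mpr hlt]
  have hφc : ConvexOn ℝ Set.univ φ := hmonoφ.convexOn_univ_of_deriv hdiff
  have h2 := hφc.2 (Set.mem_univ (0:ℝ)) (Set.mem_univ (1:ℝ)) ha hb hab
  have he0 : x + ((a * 0 + b * 1) : ℝ) • (y - x) = a • x + b • y := by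
    have : a = 1 - b := by linarith
    rw [this]; module
  have he1 : φ 0 = f x := by simp [hφdef]
  have he2 : φ 1 = f y := by simp [hφdef]
  simp only [smul_eq_mul] at h2
  rw [he1, he2] at h2
  calc f (a • x + b • y) = φ (a * 0 + b * 1) := by rw [hφdef]; simp only []; rw [he0]
    _ ≤ a * f x + b * f y := h2

/-- build a gradient from an fderiv whose action is an inner product -/
lemma gd_hasGradientAt_of (f : E → ℝ) (F' : E →L[ℝ] ℝ) (a x : E)
    (h : HasFDerivAt f F' x) (ha : ∀ v, F' v = ⟪a, v⟫) : HasGradientAt f a x := by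
  rw [hasGradientAt_iff_hasFDerivAt]
  have hF : InnerProductSpace.toDual ℝ E a = F' := by
    ext v
    simp [InnerProductSpace.toDual_apply_apply, (ha v).symm]
  rw [hF]; exact h

/-- gradient of `z ↦ c * ‖z‖²` is `(2c) • z` -/
lemma gd_grad_norm_sq (c : ℝ) (z : E) :
    HasGradientAt (fun w : E => c * ‖w‖ ^ 2) ((2 * c) • z) z := by
  have h : HasFDerivAt (fun w : E => ‖w‖ ^ 2) (2 • (innerSL ℝ z)) z := by
    simpa using (hasFDerivAt_id z).norm_sq
  refine gd_hasGradientAt_of _ (c • (2 • (innerSL ℝ z))) _ _ (h.const_mul c) ?_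
  intro v
  simp [real_inner_smul_left, innerSL_apply_apply]
  ring

/-- gradient of a linear functional `z ↦ ⟪c, z⟫` -/
lemma gd_grad_inner (c z : E) :
    HasGradientAt (fun w : E => ⟪c, w⟫) c z := by
  refine gd_hasGradientAt_of _ (InnerProductSpace.toDual ℝ E c) _ _ ?_ ?_
  · exact (InnerProductSpace.toDual ℝ E c).hasFDerivAt
  · intro v; simp [InnerProductSpace.toDual_apply_apply]

/-- difference of gradients -/
lemma gd_grad_sub {f₁ f₂ : E → ℝ} {a₁ a₂ x : E}
    (h₁ : HasGradientAt f₁ a₁ x) (h₂ : HasGradientAt f₂ a₂ x) :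
    HasGradientAt (fun w => f₁ w - f₂ w) (a₁ - a₂) x := by
  rw [hasGradientAt_iff_hasFDerivAt] at *
  have := h₁.sub h₂
  have e : InnerProductSpace.toDual ℝ E (a₁ - a₂)
      = InnerProductSpace.toDual ℝ E a₁ - InnerProductSpace.toDual ℝ E a₂ := map_sub _ _ _
  rw [e]; exact this

/-- descent lemma for an L-Lipschitz gradient -/
lemma gd_descent (f : E → ℝ) (Gf : E → E) (hf : ∀ x, HasGradientAt f (Gf x) x)
    (L : ℝ) (hL : 0 < L) (hlip : ∀ x y, ‖Gf x - Gf y‖ ≤ L * ‖x - y‖) (x y : E) :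
    f y ≤ f x + ⟪Gf x, y - x⟫ + L / 2 * ‖y - x‖ ^ 2 := by
  set h := fun z : E => L / 2 * ‖z‖ ^ 2 - f z with hdef
  have hgh : ∀ z, HasGradientAt h (L • z - Gf z) z := by
    intro z
    have h1 := gd_grad_norm_sq (E := E) (L / 2) z
    have h2 := gd_grad_sub h1 (hf z)
    convert h2 using 2
    rw [show (2 * (L / 2)) = L by ring]
  have hmono : ∀ a b : E, 0 ≤ ⟪(L • a - Gf a) - (L • b - Gf b), a - b⟫ := by
    intro a b
    have hcs : ⟪Gf a - Gf b, a - b⟫ ≤ ‖Gf a - Gf b‖ * ‖a - b‖ := real_inner_le_norm _ _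
    have hl := hlip a b
    have he : (L • a - Gf a) - (L • b - Gf b) = L • (a - b) - (Gf a - Gf b) := by module
    rw [he, inner_sub_left, real_inner_smul_left, real_inner_self_eq_norm_sq]
    nlinarith [norm_nonneg (a - b), norm_nonneg (Gf a - Gf b)]
  have hconvh : ConvexOn ℝ Set.univ h := gd_convexOn_of_monotone h _ hgh hmono
  have hlow := gd_convex_lower h _ hconvh hgh x y
  rw [hdef] at hlow
  simp only [] at hlow
  have he1 : ⟪L • x - Gf x, y - x⟫ = L * (⟪x, y⟫ - ‖x‖ ^ 2) - ⟪Gf x, y - x⟫ := by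
    rw [inner_sub_left, real_inner_smul_left, inner_sub_right, real_inner_self_eq_norm_sq]
  have he2 : ‖y - x‖ ^ 2 = ‖y‖ ^ 2 - 2 * ⟪x, y⟫ + ‖x‖ ^ 2 := by
    rw [show (‖y - x‖ ^ 2 : ℝ) = ⟪y - x, y - x⟫ by rw [real_inner_self_eq_norm_sq]]
    rw [inner_sub_left, inner_sub_right, inner_sub_right, real_inner_self_eq_norm_sq,
      real_inner_self_eq_norm_sq, real_inner_comm x y]
    ring
  rw [he1] at hlow
  rw [he2]
  linarith

section Main
variable {n : ℕ}

/-- at a global minimizer the gradient vanishes -/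
lemma gd_grad_min_zero (f : E → ℝ) (Gf : E → E) (hf : ∀ x, HasGradientAt f (Gf x) x)
    (L : ℝ) (hL : 0 < L) (hlip : ∀ x y, ‖Gf x - Gf y‖ ≤ L * ‖x - y‖)
    (ustar : E) (hmin : ∀ w, f ustar ≤ f w) : Gf ustar = 0 := by
  have hd := gd_descent f Gf hf L hL hlip ustar (ustar - (1 / L) • Gf ustar)
  have he : (ustar - (1 / L) • Gf ustar) - ustar = -((1 / L) • Gf ustar) := by abel
  rw [he, inner_neg_right, real_inner_smul_right, real_inner_self_eq_norm_sq, norm_neg,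
    norm_smul, Real.norm_eq_abs, abs_of_pos (by positivity : (0:ℝ) < 1 / L)] at hd
  have hmm := hmin (ustar - (1 / L) • Gf ustar)
  have hc2 : L / 2 * (1 / L * ‖Gf ustar‖) ^ 2 = 1 / (2 * L) * ‖Gf ustar‖ ^ 2 := by
    field_simp
  have hc4 : 1 / L * ‖Gf ustar‖ ^ 2 = 2 * (1 / (2 * L) * ‖Gf ustar‖ ^ 2) := by ring
  have h1 : 1 / (2 * L) * ‖Gf ustar‖ ^ 2 ≤ 0 := by linarith
  have h0 : ‖Gf ustar‖ ^ 2 ≤ 0 := by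
    by_contra hpos
    push_neg at hpos
    have := mul_pos (by positivity : (0:ℝ) < 1 / (2 * L)) hpos
    linarith
  have : ‖Gf ustar‖ = 0 := by nlinarith [norm_nonneg (Gf ustar)]
  exact norm_eq_zero.mp this

end Main


set_option maxHeartbeats 1000000 in
/-- Convergence of gradient descent: for convex differentiable `J : ℝⁿ → ℝ` with
`L`-Lipschitz gradient `g` and nonempty set of global minimizers, the iterates
`u^{k+1} = u^k − τ g(u^k)` satisfy (i) for `τ = 1/L`:
`J(u^k) − J(u*) ≤ ‖u⁰ − u*‖²/(2τk)` for `k ≥ 1`, and (ii) if `J` is moreover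
`ν`-strongly convex and `0 < τ < 1/L`: `‖u^k − u*‖² ≤ (1 − ντ)^k ‖u⁰ − u*‖²`. -/
theorem stmt_12 {n : ℕ} (J : EuclideanSpace ℝ (Fin n) → ℝ)
    (g : EuclideanSpace ℝ (Fin n) → EuclideanSpace ℝ (Fin n))
    (hconv : ConvexOn ℝ Set.univ J)
    (hgrad : ∀ x, HasGradientAt J (g x) x)
    (L : ℝ) (hL : 0 < L)
    (hlip : ∀ x y, ‖g x - g y‖ ≤ L * ‖x - y‖)
    (hS : ∃ z, ∀ w, J z ≤ J w)
    (τ : ℝ) (u : ℕ → EuclideanSpace ℝ (Fin n))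
    (hiter : ∀ k : ℕ, u (k + 1) = u k - τ • g (u k)) :
    (τ = 1 / L →
      ∀ ustar, (∀ w, J ustar ≤ J w) → ∀ k : ℕ, 1 ≤ k →
        J (u k) - J ustar ≤ ‖u 0 - ustar‖ ^ 2 / (2 * τ * (k : ℝ))) ∧
    (∀ ν : ℝ, 0 < ν →
      ConvexOn ℝ Set.univ (fun x => J x - ν / 2 * ‖x‖ ^ 2) →
      0 < τ → τ < 1 / L →
      ∀ ustar, (∀ w, J ustar ≤ J w) → ∀ k : ℕ,
        ‖u k - ustar‖ ^ 2 ≤ (1 - ν * τ) ^ k * ‖u 0 - ustar‖ ^ 2) := by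
  constructor
  · -- Part (i)
    intro hτ ustar hmin k hk
    have hτpos : 0 < τ := by rw [hτ]; positivity
    have hLτ : L * τ = 1 := by rw [hτ]; field_simp
    -- per-step key inequality and descent
    have hkey : ∀ m : ℕ, 2 * τ * (J (u (m + 1)) - J ustar) ≤
        ‖u m - ustar‖ ^ 2 - ‖u (m + 1) - ustar‖ ^ 2 ∧ J (u (m + 1)) ≤ J (u m) := by
      intro m
      have hit : u (m + 1) - ustar = (u m - ustar) - τ • g (u m) := by rw [hiter m]; abel
      have hts : ‖τ • g (u m)‖ ^ 2 = τ ^ 2 * ‖g (u m)‖ ^ 2 := by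
        rw [norm_smul, mul_pow, Real.norm_eq_abs, sq_abs]
      have hnorm : ‖u (m + 1) - ustar‖ ^ 2 = ‖u m - ustar‖ ^ 2
          - 2 * τ * ⟪g (u m), u m - ustar⟫ + τ ^ 2 * ‖g (u m)‖ ^ 2 := by
        rw [hit, norm_sub_sq_real, hts, real_inner_smul_right, real_inner_comm]
        ring
      have hit2 : u (m + 1) - u m = -(τ • g (u m)) := by rw [hiter m]; abel
      have hdesc := gd_descent J g hgrad L hL hlip (u m) (u (m + 1))
      rw [hit2, inner_neg_right, real_inner_smul_right, real_inner_self_eq_norm_sq,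
        norm_neg, hts] at hdesc
      have hconv1 := gd_convex_lower J g hconv hgrad (u m) ustar
      have he3 : ⟪g (u m), ustar - u m⟫ = -⟪g (u m), u m - ustar⟫ := by
        rw [show ustar - u m = -(u m - ustar) by abel, inner_neg_right]
      rw [he3] at hconv1
      constructor
      · nlinarith [sq_nonneg ‖g (u m)‖, hτpos]
      · nlinarith [sq_nonneg ‖g (u m)‖, hτpos]
    -- telescoping by induction
    have htel : ∀ m : ℕ, 2 * τ * ((m : ℝ) * (J (u m) - J ustar)) + ‖u m - ustar‖ ^ 2
        ≤ ‖u 0 - ustar‖ ^ 2 := by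
      intro m
      induction m with
      | zero => simp
      | succ m ih =>
        obtain ⟨h1, h2⟩ := hkey m
        have hm0 : (0 : ℝ) ≤ m := Nat.cast_nonneg m
        push_cast
        nlinarith [mul_le_mul_of_nonneg_left h2
          (by positivity : (0:ℝ) ≤ 2 * τ * (m : ℝ))]
    have hkpos : (0 : ℝ) < (k : ℝ) := by exact_mod_cast Nat.lt_of_lt_of_le Nat.zero_lt_one hk
    rw [le_div_iff₀ (by positivity)]
    nlinarith [htel k, sq_nonneg ‖u k - ustar‖]
  · -- Part (ii)
    intro ν hν hsc hτpos hτL ustar hmin k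
    have hgz : g ustar = 0 := gd_grad_min_zero J g hgrad L hL hlip ustar hmin
    have hτL' : τ * L < 1 := (lt_div_iff₀ hL).mp hτL
    -- gradient of the strongly convex part
    have hgradν : ∀ z, HasGradientAt (fun x => J x - ν / 2 * ‖x‖ ^ 2) (g z - ν • z) z := by
      intro z
      have h1 := gd_grad_norm_sq (E := EuclideanSpace ℝ (Fin n)) (ν / 2) z
      have h2 := gd_grad_sub (hgrad z) h1
      rw [show (2 * (ν / 2)) = ν by ring] at h2
      exact h2
    -- strong monotonicity at ustar
    have hsm : ∀ x, ν * ‖x - ustar‖ ^ 2 ≤ ⟪g x, x - ustar⟫ := by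
      intro x
      have h1 := gd_convex_lower _ _ hsc hgradν x ustar
      have h2 := gd_convex_lower _ _ hsc hgradν ustar x
      have e1 : ⟪g x - ν • x, ustar - x⟫ = -⟪g x, x - ustar⟫ + ν * ⟪x, x - ustar⟫ := by
        rw [show ustar - x = -(x - ustar) by abel]
        rw [inner_neg_right, inner_sub_left, real_inner_smul_left]
        ring
      have e2 : ⟪g ustar - ν • ustar, x - ustar⟫ = -(ν * ⟪ustar, x - ustar⟫) := by
        rw [hgz, zero_sub, inner_neg_left, real_inner_smul_left]
      have t2 : ν * ⟪x, x - ustar⟫ - ν * ⟪ustar, x - ustar⟫ = ν * ‖x - ustar‖ ^ 2 := by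
        have t : ⟪x, x - ustar⟫ - ⟪ustar, x - ustar⟫ = ‖x - ustar‖ ^ 2 := by
          rw [← inner_sub_left, real_inner_self_eq_norm_sq]
        linear_combination ν * t
      rw [e1] at h1
      rw [e2] at h2
      linarith
    -- cocoercivity at ustar
    have hco : ∀ x, ‖g x‖ ^ 2 ≤ L * ⟪g x, x - ustar⟫ := by
      intro x
      have hc : L * (1 / L) = 1 := by field_simp
      -- (a)
      have hda := gd_descent J g hgrad L hL hlip x (x - (1 / L) • g x)
      have ea : (x - (1 / L) • g x) - x = -((1 / L) • g x) := by abel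
      rw [ea, inner_neg_right, real_inner_smul_right, real_inner_self_eq_norm_sq, norm_neg,
        norm_smul, Real.norm_eq_abs, abs_of_pos (by positivity : (0:ℝ) < 1 / L)] at hda
      have hmm := hmin (x - (1 / L) • g x)
      have hc2 : L / 2 * (1 / L * ‖g x‖) ^ 2 = 1 / (2 * L) * ‖g x‖ ^ 2 := by
        field_simp
      have hc4 : 1 / L * ‖g x‖ ^ 2 = 2 * (1 / (2 * L) * ‖g x‖ ^ 2) := by ring
      have hc5 : 2 * L * (1 / (2 * L) * ‖g x‖ ^ 2) = ‖g x‖ ^ 2 := by field_simp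
      have ha' : 1 / (2 * L) * ‖g x‖ ^ 2 ≤ J x - J ustar := by linarith
      have ha : ‖g x‖ ^ 2 ≤ 2 * L * (J x - J ustar) := by
        have h := mul_le_mul_of_nonneg_left ha' (by positivity : (0:ℝ) ≤ 2 * L)
        rw [hc5] at h
        linarith [h]
      -- (b)
      set F : EuclideanSpace ℝ (Fin n) → ℝ := fun z => J z - ⟪g x, z⟫ with hF
      have hGF : ∀ z, HasGradientAt F (g z - g x) z :=
        fun z => gd_grad_sub (hgrad z) (gd_grad_inner (g x) z)
      have hlipF : ∀ a b, ‖(g a - g x) - (g b - g x)‖ ≤ L * ‖a - b‖ := by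
        intro a b; simpa [sub_sub_sub_cancel_right] using hlip a b
      have hdb := gd_descent F _ hGF L hL hlipF ustar (ustar + (1 / L) • g x)
      have eb : (ustar + (1 / L) • g x) - ustar = (1 / L) • g x := by abel
      rw [eb, hgz, zero_sub, inner_neg_left, real_inner_smul_right,
        real_inner_self_eq_norm_sq, norm_smul, Real.norm_eq_abs,
        abs_of_pos (by positivity : (0:ℝ) < 1 / L)] at hdb
      have hFx : F x ≤ F (ustar + (1 / L) • g x) := by
        have hcl := gd_convex_lower J g hconv hgrad x (ustar + (1 / L) • g x)
        have : ⟪g x, (ustar + (1 / L) • g x) - x⟫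
            = ⟪g x, ustar + (1 / L) • g x⟫ - ⟪g x, x⟫ := by rw [inner_sub_right]
        rw [this] at hcl
        simp only [hF]
        linarith
      have hb : J x - ⟪g x, x⟫ ≤ J ustar - ⟪g x, ustar⟫ - 1 / (2 * L) * ‖g x‖ ^ 2 := by
        simp only [hF] at hFx hdb
        linarith
      have hsplit : ⟪g x, x - ustar⟫ = ⟪g x, x⟫ - ⟪g x, ustar⟫ := inner_sub_right _ _ _
      rw [hsplit]
      have hb2 : 2 * L * (J x - J ustar)
          ≤ 2 * L * ((⟪g x, x⟫ - ⟪g x, ustar⟫) - 1 / (2 * L) * ‖g x‖ ^ 2) :=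
        mul_le_mul_of_nonneg_left (by linarith) (by positivity)
      have he : 2 * L * ((⟪g x, x⟫ - ⟪g x, ustar⟫) - 1 / (2 * L) * ‖g x‖ ^ 2)
          = 2 * L * ⟪g x, x⟫ - 2 * L * ⟪g x, ustar⟫ - ‖g x‖ ^ 2 := by
        field_simp
      linarith
    -- base case split
    by_cases h0 : u 0 = ustar
    · have hall : ∀ m, u m = ustar := by
        intro m
        induction m with
        | zero => exact h0
        | succ m ih => rw [hiter m, ih, hgz]; simp
      rw [hall k, hall 0]
      simp
    · have hd0 : 0 < ‖u 0 - ustar‖ := by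
        rw [norm_pos_iff]; exact sub_ne_zero.mpr h0
      have hνL : ν ≤ L := by
        have h1 := hsm (u 0)
        have h2 : ⟪g (u 0), u 0 - ustar⟫ ≤ ‖g (u 0)‖ * ‖u 0 - ustar‖ := real_inner_le_norm _ _
        have h3 : ‖g (u 0)‖ ≤ L * ‖u 0 - ustar‖ := by
          have := hlip (u 0) ustar
          rwa [hgz, sub_zero] at this
        nlinarith [mul_le_mul_of_nonneg_right h3 (norm_nonneg (u 0 - ustar)),
          mul_pos hd0 hd0]
      have hfac : 0 ≤ 1 - ν * τ := by nlinarith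
      -- per-step contraction
      have hstep : ∀ m, ‖u (m + 1) - ustar‖ ^ 2 ≤ (1 - ν * τ) * ‖u m - ustar‖ ^ 2 := by
        intro m
        have hit : u (m + 1) - ustar = (u m - ustar) - τ • g (u m) := by rw [hiter m]; abel
        have hts : ‖τ • g (u m)‖ ^ 2 = τ ^ 2 * ‖g (u m)‖ ^ 2 := by
          rw [norm_smul, mul_pow, Real.norm_eq_abs, sq_abs]
        have hnorm : ‖u (m + 1) - ustar‖ ^ 2 = ‖u m - ustar‖ ^ 2
            - 2 * τ * ⟪g (u m), u m - ustar⟫ + τ ^ 2 * ‖g (u m)‖ ^ 2 := by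
          rw [hit, norm_sub_sq_real, hts, real_inner_smul_right, real_inner_comm]
          ring
        have h1 := hsm (u m)
        have h2 := hco (u m)
        have hA := mul_le_mul_of_nonneg_left h2 (sq_nonneg τ)
        have hB := mul_le_mul_of_nonneg_left h1
          (mul_nonneg hτpos.le (sub_pos.mpr hτL').le)
        have hC := mul_le_mul_of_nonneg_left h1 hτpos.le
        have hD : 0 ≤ ν * τ * ‖u m - ustar‖ ^ 2 * (1 - τ * L) :=
          mul_nonneg (mul_nonneg (mul_nonneg hν.le hτpos.le) (sq_nonneg _))
            (sub_pos.mpr hτL').le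
        nlinarith [hA, hB, hC, hD]
      induction k with
      | zero => simp
      | succ k ih =>
        have h1 := hstep k
        have h2 := mul_le_mul_of_nonneg_left ih hfac
        calc ‖u (k + 1) - ustar‖ ^ 2 ≤ (1 - ν * τ) * ‖u k - ustar‖ ^ 2 := h1
          _ ≤ (1 - ν * τ) * ((1 - ν * τ) ^ k * ‖u 0 - ustar‖ ^ 2) := h2
          _ = (1 - ν * τ) ^ (k + 1) * ‖u 0 - ustar‖ ^ 2 := by ring
end

section
/- Let H be a real Hilbert space, J : H → ℝ ∪ {+∞} proper, convex and lower-semicontinuous with nonempty set S of global minimizers, and let τ > 0. Let (u^k) be the proximal point iterates u^{k+1} = prox_{τJ}(u^k) from an arbitrary initial point u^0 in the domain of J. (i) For every u* ∈ S and every k ≥ 1, J(u^k) − J(u*) ≤ ‖u^0 − u*‖² / (2τk). (ii) If in addition J is ν-strongly convex for some ν > 0, then for its unique global minimizer u* one has ‖u^k − u*‖ ≤ (1 + ντ)^{−k} ‖u^0 − u*‖ for every k ≥ 0. -/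
open scoped Topology

/-- The Moreau–Yosida functional `u ↦ J(u) + (1/(2τ))‖u − v‖²`. -/
noncomputable def moreauYosida {H : Type*} [NormedAddCommGroup H] [InnerProductSpace ℝ H]
    (J : H → EReal) (τ : ℝ) (v u : H) : EReal :=
  J u + (((1 / (2 * τ)) * ‖u - v‖ ^ 2 : ℝ) : EReal)

/-- limit trick: if `A ≤ B + t*C` for all `t ∈ (0,1)` then `A ≤ B`. -/
lemma aux_le_of_small {A B C : ℝ} (h : ∀ t : ℝ, 0 < t → t < 1 → A ≤ B + t * C) : A ≤ B := by
  refine le_of_forall_pos_le_add fun ε hε => ?_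
  have hC : (0:ℝ) < |C| + 1 := by positivity
  set t := min (1/2) (ε / (|C| + 1)) with ht
  have ht0 : 0 < t := lt_min (by norm_num) (by positivity)
  have ht1 : t < 1 := lt_of_le_of_lt (min_le_left _ _) (by norm_num)
  have h1 := h t ht0 ht1
  have h2 : t * C ≤ ε := by
    have h3 : t ≤ ε / (|C| + 1) := min_le_right _ _
    have h4 : t * C ≤ t * |C| := by nlinarith [le_abs_self C]
    have h5 : t * |C| ≤ (ε / (|C| + 1)) * |C| :=
      mul_le_mul_of_nonneg_right h3 (abs_nonneg C)
    have h6 : (ε / (|C| + 1)) * |C| ≤ ε := by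
      rw [div_mul_eq_mul_div, div_le_iff₀ hC]
      nlinarith [abs_nonneg C]
    linarith
  linarith

lemma norm_combo_sq {H : Type*} [NormedAddCommGroup H] [InnerProductSpace ℝ H]
    (w p v : H) (t : ℝ) :
    ‖t • w + (1 - t) • p - v‖ ^ 2
      = ‖p - v‖ ^ 2 + 2 * t * inner ℝ (p - v) (w - p) + t ^ 2 * ‖w - p‖ ^ 2 := by
  have hid : t • w + (1 - t) • p - v = (p - v) + t • (w - p) := by
    rw [smul_sub, sub_smul]; module
  rw [hid, norm_add_sq_real, real_inner_smul_right, norm_smul]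
  simp [mul_pow, sq_abs]
  ring

lemma inner_three_point {H : Type*} [NormedAddCommGroup H] [InnerProductSpace ℝ H]
    (p v w : H) :
    2 * inner ℝ (p - v) (w - p) = ‖w - v‖ ^ 2 - ‖w - p‖ ^ 2 - ‖p - v‖ ^ 2 := by
  have hid : w - v = (w - p) + (p - v) := by abel
  rw [hid, norm_add_sq_real, real_inner_comm]
  ring

set_option maxHeartbeats 1000000 in
/-- Convergence of the proximal point algorithm for a proper, convex, lsc functional `J`
with nonempty set of global minimizers: (i) `J(u^k) − J(u*) ≤ ‖u⁰ − u*‖²/(2τk)` for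
`k ≥ 1` (stated as `J(u^k) ≤ J(u*) + ‖u⁰ − u*‖²/(2τk)`), and (ii) if `J` is moreover
`ν`-strongly convex, `‖u^k − u*‖ ≤ (1 + ντ)^{−k} ‖u⁰ − u*‖`. -/
theorem stmt_15 {H : Type*} [NormedAddCommGroup H] [InnerProductSpace ℝ H]
    [CompleteSpace H] (J : H → EReal)
    (hbot : ∀ u, J u ≠ ⊥)
    (hproper : ∃ u, J u ≠ ⊤)
    (hconv : ∀ x y : H, ∀ t : ℝ, 0 < t → t < 1 →
      J (t • x + (1 - t) • y) ≤ (t : EReal) * J x + ((1 - t : ℝ) : EReal) * J y)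
    (hlsc : LowerSemicontinuous J)
    (hS : ∃ z : H, ∀ w : H, J z ≤ J w)
    (τ : ℝ) (hτ : 0 < τ)
    (u : ℕ → H) (hdom : J (u 0) ≠ ⊤)
    (hiter : ∀ k : ℕ, ∀ w : H, moreauYosida J τ (u k) (u (k + 1)) ≤
      moreauYosida J τ (u k) w) :
    (∀ ustar : H, (∀ w : H, J ustar ≤ J w) → ∀ k : ℕ, 1 ≤ k →
      J (u k) ≤ J ustar + ((‖u 0 - ustar‖ ^ 2 / (2 * τ * (k : ℝ)) : ℝ) : EReal)) ∧
    (∀ ν : ℝ, 0 < ν →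
      (∀ x y : H, ∀ t : ℝ, 0 < t → t < 1 →
        J (t • x + (1 - t) • y) + ((ν / 2 * (t * (1 - t)) * ‖x - y‖ ^ 2 : ℝ) : EReal) ≤
          (t : EReal) * J x + ((1 - t : ℝ) : EReal) * J y) →
      ∀ ustar : H, (∀ w : H, J ustar ≤ J w) → ∀ k : ℕ,
        ‖u k - ustar‖ ≤ ((1 + ν * τ) ^ k)⁻¹ * ‖u 0 - ustar‖) := by
  have hτ' : τ ≠ 0 := ne_of_gt hτ
  have hc0 : (0:ℝ) < 1 / (2 * τ) := by positivity
  -- descent along the iteration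
  have key0 : ∀ k, J (u (k + 1)) ≤ J (u k) := by
    intro k
    have h := hiter k (u k)
    unfold moreauYosida at h
    have h0 : ((1 / (2 * τ)) * ‖u k - u k‖ ^ 2 : ℝ) = 0 := by simp
    rw [h0] at h
    simp only [EReal.coe_zero, add_zero] at h
    refine le_trans (le_add_of_nonneg_right ?_) h
    exact EReal.coe_nonneg.mpr (by positivity)
  have hfin : ∀ k, J (u k) ≠ ⊤ := by
    intro k
    induction k with
    | zero => exact hdom
    | succ n ih => exact ne_top_of_le_ne_top ih (key0 n)
  -- convert EReal bound to real bound
  have toRealOf : ∀ (x : EReal) (r : ℝ), x ≠ ⊥ → x ≤ (r : EReal) → x ≠ ⊤ ∧ x.toReal ≤ r := by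
    intro x r hb h
    have hT : x ≠ ⊤ := (h.trans_lt (EReal.coe_lt_top r)).ne
    refine ⟨hT, ?_⟩
    rw [← EReal.coe_le_coe_iff, EReal.coe_toReal hT hb]
    exact h
  -- the "gradient" inequality at a proximal minimizer
  have grad : ∀ v p : H, (∀ w, moreauYosida J τ v p ≤ moreauYosida J τ v w) →
      J p ≠ ⊤ → ∀ w : H, J w ≠ ⊤ →
      (J p).toReal ≤ (J w).toReal + 2 * (1 / (2 * τ)) * inner ℝ (p - v) (w - p) := by
    intro v p hp hpT w hwT
    set a := (J p).toReal with ha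
    set b := (J w).toReal with hb
    have hpe : J p = (a : EReal) := (EReal.coe_toReal hpT (hbot p)).symm
    have hwe : J w = (b : EReal) := (EReal.coe_toReal hwT (hbot w)).symm
    apply aux_le_of_small (C := (1 / (2 * τ)) * ‖w - p‖ ^ 2)
    intro t ht0 ht1
    have h2 := hconv w p t ht0 ht1
    rw [hpe, hwe, ← EReal.coe_mul, ← EReal.coe_mul, ← EReal.coe_add] at h2
    obtain ⟨hzT, hz⟩ := toRealOf _ _ (hbot _) h2
    have h1 := hp (t • w + (1 - t) • p)
    unfold moreauYosida at h1
    rw [hpe, ← EReal.coe_toReal hzT (hbot _), ← EReal.coe_add, ← EReal.coe_add,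
      EReal.coe_le_coe_iff] at h1
    rw [norm_combo_sq w p v t] at h1
    have hta : t * (a - ((b + 2 * (1 / (2 * τ)) * inner ℝ (p - v) (w - p))
        + t * ((1 / (2 * τ)) * ‖w - p‖ ^ 2))) ≤ t * 0 := by nlinarith [h1, hz]
    have := le_of_mul_le_mul_left hta ht0
    linarith
  constructor
  · -- part (i)
    intro ustar hustar k hk
    have hsT : J ustar ≠ ⊤ := ne_top_of_le_ne_top hdom (hustar (u 0))
    set b := (J ustar).toReal with hbdef
    set a : ℕ → ℝ := fun k => (J (u k)).toReal with hadef
    have step : ∀ j, a (j + 1) ≤ b + (1 / (2 * τ)) *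
        (‖u j - ustar‖ ^ 2 - ‖u (j + 1) - ustar‖ ^ 2) := by
      intro j
      have hg := grad (u j) (u (j + 1)) (hiter j) (hfin (j + 1)) ustar hsT
      have h3 := inner_three_point (u (j + 1)) (u j) ustar
      have hrev1 : ‖ustar - u j‖ = ‖u j - ustar‖ := norm_sub_rev _ _
      have hrev2 : ‖ustar - u (j + 1)‖ = ‖u (j + 1) - ustar‖ := norm_sub_rev _ _
      rw [hrev1, hrev2] at h3
      nlinarith [hg, h3, sq_nonneg ‖u (j + 1) - u j‖, hc0]
    have mono : ∀ j, a (j + 1) ≤ a j := by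
      intro j
      have hg := grad (u j) (u (j + 1)) (hiter j) (hfin (j + 1)) (u j) (hfin j)
      have hin : (inner ℝ (u (j + 1) - u j) (u j - u (j + 1)) : ℝ)
          = -‖u (j + 1) - u j‖ ^ 2 := by
        have : u j - u (j + 1) = -(u (j + 1) - u j) := by abel
        rw [this, inner_neg_right, real_inner_self_eq_norm_sq]
      rw [hin] at hg
      nlinarith [sq_nonneg ‖u (j + 1) - u j‖, hc0]
    have lb : ∀ j, b ≤ a j := fun j =>
      EReal.toReal_le_toReal (hustar (u j)) (hbot ustar) (hfin j)
    have hsum : ∀ k : ℕ, (k : ℝ) * a k ≤ (k : ℝ) * b + (1 / (2 * τ)) *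
        (‖u 0 - ustar‖ ^ 2 - ‖u k - ustar‖ ^ 2) := by
      intro k
      induction k with
      | zero => simp
      | succ n ih =>
        have h1 : (n : ℝ) * a (n + 1) ≤ (n : ℝ) * a n :=
          mul_le_mul_of_nonneg_left (mono n) (Nat.cast_nonneg n)
        have h2 := step n
        push_cast
        nlinarith [ih]
    have hk1 : (1 : ℝ) ≤ (k : ℝ) := by exact_mod_cast hk
    have hkpos : (0 : ℝ) < (k : ℝ) := by linarith
    have h2τk : (0 : ℝ) < 2 * τ * (k : ℝ) := by positivity
    have h1 : (k : ℝ) * (a k - b) ≤ (1 / (2 * τ)) * ‖u 0 - ustar‖ ^ 2 := by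
      have := hsum k
      nlinarith [mul_nonneg hc0.le (sq_nonneg ‖u k - ustar‖)]
    have hfinal : a k ≤ b + ‖u 0 - ustar‖ ^ 2 / (2 * τ * (k : ℝ)) := by
      have h3 : a k - b ≤ ‖u 0 - ustar‖ ^ 2 / (2 * τ * (k : ℝ)) := by
        rw [le_div_iff₀ h2τk]
        have h4 : (1 / (2 * τ)) * ‖u 0 - ustar‖ ^ 2 * (2 * τ) = ‖u 0 - ustar‖ ^ 2 := by
          field_simp
        nlinarith [mul_le_mul_of_nonneg_right h1 (by positivity : (0:ℝ) ≤ 2 * τ)]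
      linarith
    rw [← EReal.coe_toReal (hfin k) (hbot _), ← EReal.coe_toReal hsT (hbot _),
      ← EReal.coe_add, EReal.coe_le_coe_iff]
    exact hfinal
  · -- part (ii)
    intro ν hν hsconv ustar hustar k
    have hsT : J ustar ≠ ⊤ := ne_top_of_le_ne_top hdom (hustar (u 0))
    have h1ντ : (0 : ℝ) < 1 + ν * τ := by positivity
    set b := (J ustar).toReal with hbdef
    -- strong gradient inequality
    have gradS : ∀ v p : H, (∀ w, moreauYosida J τ v p ≤ moreauYosida J τ v w) →
        J p ≠ ⊤ → ∀ w : H, J w ≠ ⊤ →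
        (J p).toReal + (ν / 2) * ‖w - p‖ ^ 2 ≤
          (J w).toReal + 2 * (1 / (2 * τ)) * inner ℝ (p - v) (w - p) := by
      intro v p hp hpT w hwT
      set a := (J p).toReal with ha
      set bw := (J w).toReal with hbw
      have hpe : J p = (a : EReal) := (EReal.coe_toReal hpT (hbot p)).symm
      have hwe : J w = (bw : EReal) := (EReal.coe_toReal hwT (hbot w)).symm
      apply aux_le_of_small (C := (1 / (2 * τ)) * ‖w - p‖ ^ 2 + (ν / 2) * ‖w - p‖ ^ 2)
      intro t ht0 ht1
      have h2 := hsconv w p t ht0 ht1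
      rw [hpe, hwe, ← EReal.coe_mul, ← EReal.coe_mul, ← EReal.coe_add] at h2
      have hzT : J (t • w + (1 - t) • p) ≠ ⊤ := by
        intro htop
        rw [htop, EReal.top_add_of_ne_bot (EReal.coe_ne_bot _)] at h2
        exact (EReal.coe_lt_top _).not_ge h2
      rw [← EReal.coe_toReal hzT (hbot _), ← EReal.coe_add, EReal.coe_le_coe_iff] at h2
      have h1 := hp (t • w + (1 - t) • p)
      unfold moreauYosida at h1
      rw [hpe, ← EReal.coe_toReal hzT (hbot _), ← EReal.coe_add, ← EReal.coe_add,
        EReal.coe_le_coe_iff] at h1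
      rw [norm_combo_sq w p v t] at h1
      have hta : t * (a + (ν / 2) * ‖w - p‖ ^ 2 -
          ((bw + 2 * (1 / (2 * τ)) * inner ℝ (p - v) (w - p))
            + t * ((1 / (2 * τ)) * ‖w - p‖ ^ 2 + (ν / 2) * ‖w - p‖ ^ 2))) ≤ t * 0 := by
        nlinarith [h1, h2]
      have := le_of_mul_le_mul_left hta ht0
      linarith
    -- strong minimality inequality at ustar
    have Mineq : ∀ w : H, J w ≠ ⊤ → b + (ν / 2) * ‖w - ustar‖ ^ 2 ≤ (J w).toReal := by
      intro w hwT
      set bw := (J w).toReal with hbw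
      have hse : J ustar = (b : EReal) := (EReal.coe_toReal hsT (hbot ustar)).symm
      have hwe : J w = (bw : EReal) := (EReal.coe_toReal hwT (hbot w)).symm
      apply aux_le_of_small (C := (ν / 2) * ‖w - ustar‖ ^ 2)
      intro t ht0 ht1
      have h2 := hsconv w ustar t ht0 ht1
      rw [hse, hwe, ← EReal.coe_mul, ← EReal.coe_mul, ← EReal.coe_add] at h2
      have h3 := (hustar (t • w + (1 - t) • ustar))
      rw [hse] at h3
      have h4 : ((b : ℝ) : EReal) + ((ν / 2 * (t * (1 - t)) * ‖w - ustar‖ ^ 2 : ℝ) : EReal)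
          ≤ ((t * bw + (1 - t) * b : ℝ) : EReal) :=
        le_trans (add_le_add_left h3 _) h2
      rw [← EReal.coe_add, EReal.coe_le_coe_iff] at h4
      have hta : t * (b + (ν / 2) * ‖w - ustar‖ ^ 2 -
          (bw + t * ((ν / 2) * ‖w - ustar‖ ^ 2))) ≤ t * 0 := by nlinarith [h4]
      have := le_of_mul_le_mul_left hta ht0
      linarith
    -- one-step contraction
    have step2 : ∀ j, ‖u (j + 1) - ustar‖ ≤ (1 + ν * τ)⁻¹ * ‖u j - ustar‖ := by
      intro j
      have hg := gradS (u j) (u (j + 1)) (hiter j) (hfin (j + 1)) ustar hsT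
      have hm := Mineq (u (j + 1)) (hfin (j + 1))
      have hrev : ‖ustar - u (j + 1)‖ = ‖u (j + 1) - ustar‖ := norm_sub_rev _ _
      rw [hrev] at hg
      -- ν ‖p - u*‖² ≤ (1/τ) ⟪p - v, u* - p⟫
      have h5 : ν * ‖u (j + 1) - ustar‖ ^ 2 ≤
          2 * (1 / (2 * τ)) * inner ℝ (u (j + 1) - u j) (ustar - u (j + 1)) := by linarith
      have h6 : ν * τ * ‖u (j + 1) - ustar‖ ^ 2 ≤
          (inner ℝ (u (j + 1) - u j) (ustar - u (j + 1)) : ℝ) := by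
        have h7 : 2 * (1 / (2 * τ)) * (inner ℝ (u (j + 1) - u j) (ustar - u (j + 1)) : ℝ) * τ
            = inner ℝ (u (j + 1) - u j) (ustar - u (j + 1)) := by field_simp
        nlinarith [mul_le_mul_of_nonneg_right h5 hτ.le]
      have hin1 : (inner ℝ (u (j + 1) - u j) (ustar - u (j + 1)) : ℝ)
          = inner ℝ (u j - u (j + 1)) (u (j + 1) - ustar) := by
        have e1 : u (j + 1) - u j = -(u j - u (j + 1)) := by abel
        have e2 : ustar - u (j + 1) = -(u (j + 1) - ustar) := by abel
        rw [e1, e2, inner_neg_neg]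
      have hin2 : (inner ℝ (u j - ustar) (u (j + 1) - ustar) : ℝ)
          = inner ℝ (u j - u (j + 1)) (u (j + 1) - ustar) + ‖u (j + 1) - ustar‖ ^ 2 := by
        have e3 : u j - ustar = (u j - u (j + 1)) + (u (j + 1) - ustar) := by abel
        rw [e3, inner_add_left, real_inner_self_eq_norm_sq]
      have hI : (1 + ν * τ) * ‖u (j + 1) - ustar‖ ^ 2 ≤
          (inner ℝ (u j - ustar) (u (j + 1) - ustar) : ℝ) := by
        rw [hin2, ← hin1]; nlinarith [h6]
      have hCS := real_inner_le_norm (u j - ustar) (u (j + 1) - ustar)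
      rcases eq_or_lt_of_le (norm_nonneg (u (j + 1) - ustar)) with h0 | h0
      · rw [← h0]; positivity
      · rw [inv_mul_eq_div, le_div_iff₀ h1ντ]
        nlinarith [hI, hCS, h0]
    induction k with
    | zero => simp
    | succ n ih =>
      calc ‖u (n + 1) - ustar‖ ≤ (1 + ν * τ)⁻¹ * ‖u n - ustar‖ := step2 n
        _ ≤ (1 + ν * τ)⁻¹ * (((1 + ν * τ) ^ n)⁻¹ * ‖u 0 - ustar‖) :=
            mul_le_mul_of_nonneg_left ih (by positivity)
        _ = ((1 + ν * τ) ^ (n + 1))⁻¹ * ‖u 0 - ustar‖ := by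
            rw [pow_succ, mul_inv]; ring
end

section
/- (Convergence of proximal gradient descent) Let H, G : ℝⁿ → ℝ ∪ {+∞} be proper, convex and lower-semicontinuous, with H real-valued, differentiable, and having L-Lipschitz continuous gradient, and set J := H + G. Assume J has a global minimizer u*. Let 0 < τ ≤ 1/L and let (u^k) be the proximal gradient iterates u^{k+1} = prox_{τG}( u^k − τ ∇H(u^k) ) from an arbitrary initial point u^0. Then for every k ≥ 1, J(u^k) − J(u*) ≤ ‖u^0 − u*‖² / (2τk). -/
open scoped Topology RealInnerProductSpace

variable {n : ℕ}
local notation "E" => EuclideanSpace ℝ (Fin n)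

lemma line_deriv (H : E → ℝ) (gH : E → E) (hgrad : ∀ x, HasGradientAt H (gH x) x)
    (c d : E) (t : ℝ) :
    HasDerivAt (fun s : ℝ => H (c + s • d)) ⟪gH (c + t • d), d⟫ t := by
  have hline : HasDerivAt (fun s : ℝ => c + s • d) d t := by
    simpa using ((hasDerivAt_id t).smul_const d).const_add c
  have hH : HasFDerivAt H (InnerProductSpace.toDual ℝ _ (gH (c + t • d))) (c + t • d) :=
    (hgrad (c + t • d))
  have := hH.comp_hasDerivAt t hline
  simp only [InnerProductSpace.toDual_apply_apply] at this
  exact this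

lemma descent (H : E → ℝ) (gH : E → E) (hgrad : ∀ x, HasGradientAt H (gH x) x)
    (L : ℝ) (hL : 0 < L) (hlip : ∀ x y, ‖gH x - gH y‖ ≤ L * ‖x - y‖) (x d : E) :
    H (x + d) ≤ H x + ⟪gH x, d⟫ + L / 2 * ‖d‖ ^ 2 := by
  set χ : ℝ → ℝ := fun t => H x + t * ⟪gH x, d⟫ + L * t ^ 2 / 2 * ‖d‖ ^ 2 - H (x + t • d) with hχ
  have hd : ∀ t : ℝ, HasDerivAt χ (⟪gH x, d⟫ + L * t * ‖d‖ ^ 2 - ⟪gH (x + t • d), d⟫) t := by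
    intro t
    have h1 : HasDerivAt (fun s : ℝ => H x + s * ⟪gH x, d⟫ + L * s ^ 2 / 2 * ‖d‖ ^ 2)
        (⟪gH x, d⟫ + L * t * ‖d‖ ^ 2) t := by
      have := (((hasDerivAt_id t).mul_const ⟪gH x, d⟫).const_add (H x)).add
        (((hasDerivAt_pow 2 t).const_mul L).div_const 2 |>.mul_const (‖d‖ ^ 2))
      convert this using 1
      · rfl
      · rfl
      · funext s; simp
      · ring
    exact h1.sub (line_deriv H gH hgrad x d t)
  have hmono : MonotoneOn χ (Set.Icc 0 1) := by
    apply monotoneOn_of_deriv_nonneg (convex_Icc 0 1)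
    · exact fun t _ => ((hd t).differentiableAt).continuousAt.continuousWithinAt
    · exact fun t _ => ((hd t).differentiableAt).differentiableWithinAt
    · intro t ht
      rw [interior_Icc] at ht
      rw [(hd t).deriv]
      have h2 : ⟪gH (x + t • d) - gH x, d⟫ ≤ ‖gH (x + t • d) - gH x‖ * ‖d‖ :=
        real_inner_le_norm _ _
      have h3 : ‖gH (x + t • d) - gH x‖ ≤ L * (t * ‖d‖) := by
        have := hlip (x + t • d) x
        simpa [norm_smul, abs_of_pos ht.1] using this
      have h4 : ⟪gH (x + t • d) - gH x, d⟫ = ⟪gH (x + t • d), d⟫ - ⟪gH x, d⟫ :=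
        inner_sub_left _ _ _
      nlinarith [norm_nonneg d, norm_nonneg (gH (x + t • d) - gH x)]
  have h01 := hmono (Set.mem_Icc.2 ⟨le_refl 0, zero_le_one⟩)
    (Set.mem_Icc.2 ⟨zero_le_one, le_refl 1⟩) zero_le_one
  simp only [hχ] at h01
  simp only [zero_smul, add_zero, one_smul, one_pow, mul_one, zero_mul, mul_zero,
    ne_eq, OfNat.ofNat_ne_zero, not_false_eq_true, zero_pow, sub_self] at h01
  -- h01 : 0 ≤ H x + ⟪gH x, d⟫ + L/2 * ‖d‖^2 - H (x + d) roughly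
  nlinarith [h01]

lemma grad_convex (H : E → ℝ) (gH : E → E) (hgrad : ∀ x, HasGradientAt H (gH x) x)
    (hHconv : ConvexOn ℝ Set.univ H) (x w : E) :
    H x + ⟪gH x, w - x⟫ ≤ H w := by
  set φ : ℝ → ℝ := fun t => H (x + t • (w - x)) with hφ
  have hder : HasDerivAt φ ⟪gH x, w - x⟫ 0 := by
    simpa using line_deriv H gH hgrad x (w - x) 0
  have htend : Filter.Tendsto (slope φ 0) (𝓝[>] 0) (𝓝 ⟪gH x, w - x⟫) :=
    (hasDerivAt_iff_tendsto_slope.1 hder).mono_left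
      (nhdsWithin_mono 0 (fun t ht => ne_of_gt ht))
  have hb : ∀ᶠ t in 𝓝[>] (0:ℝ), slope φ 0 t ≤ H w - H x := by
    filter_upwards [Ioo_mem_nhdsGT_of_mem (Set.mem_Ico.2 ⟨le_refl 0, zero_lt_one⟩)] with t ht
    have hcomb : x + t • (w - x) = (1 - t) • x + t • w := by
      rw [smul_sub, sub_smul, one_smul]; abel
    have := hHconv.2 (Set.mem_univ x) (Set.mem_univ w) (by linarith [ht.2] : (0:ℝ) ≤ 1 - t)
      (le_of_lt ht.1) (by ring)
    rw [slope_def_field]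
    have hφt : φ t ≤ (1 - t) * H x + t * H w := by rw [hφ]; simpa [hcomb] using this
    have hφ0 : φ 0 = H x := by simp [hφ]
    rw [sub_zero, div_le_iff₀ ht.1]
    nlinarith [hφt, hφ0]
  exact by linarith [le_of_tendsto htend hb]

lemma prox_ineq (G : E → EReal) (hGbot : ∀ x, G x ≠ ⊥)
    (hGconv : ∀ x y : E, ∀ t : ℝ, 0 < t → t < 1 →
      G (t • x + (1 - t) • y) ≤ (t : EReal) * G x + ((1 - t : ℝ) : EReal) * G y)
    (τ : ℝ) (hτ0 : 0 < τ) (up v w : E) (hup : G up ≠ ⊤) (hw : G w ≠ ⊤)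
    (hiter : ∀ z, G up + ((1 / (2 * τ) * ‖up - v‖ ^ 2 : ℝ) : EReal) ≤
      G z + ((1 / (2 * τ) * ‖z - v‖ ^ 2 : ℝ) : EReal)) :
    (G up).toReal ≤ (G w).toReal + (1 / τ) * ⟪v - up, up - w⟫ := by
  set a := (G up).toReal with ha
  set b := (G w).toReal with hb
  have hcup : G up = (a : EReal) := (EReal.coe_toReal hup (hGbot up)).symm
  have hcw : G w = (b : EReal) := (EReal.coe_toReal hw (hGbot w)).symm
  set d := w - up with hd
  set p := up - v with hp
  have main : ∀ t : ℝ, 0 < t → t < 1 →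
      a - b - (1 / τ) * ⟪p, d⟫ ≤ t * (‖d‖ ^ 2 / (2 * τ)) := by
    intro t ht0 ht1
    set z := t • w + (1 - t) • up with hz
    have hconv := hGconv w up t ht0 ht1
    have hrhs : (t : EReal) * G w + ((1 - t : ℝ) : EReal) * G up
        = ((t * b + (1 - t) * a : ℝ) : EReal) := by
      rw [hcup, hcw, ← EReal.coe_mul, ← EReal.coe_mul, ← EReal.coe_add]
    rw [hrhs] at hconv
    have hznetop : G z ≠ ⊤ := ne_top_of_le_ne_top (EReal.coe_ne_top _) hconv
    have hcz : G z = (((G z).toReal : ℝ) : EReal) := (EReal.coe_toReal hznetop (hGbot z)).symm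
    set gz := (G z).toReal with hgz
    have hgzle : gz ≤ t * b + (1 - t) * a := by
      rw [hcz] at hconv; exact_mod_cast hconv
    have hit := hiter z
    rw [hcup, hcz, ← EReal.coe_add, ← EReal.coe_add] at hit
    have hit' : a + 1 / (2 * τ) * ‖up - v‖ ^ 2 ≤ gz + 1 / (2 * τ) * ‖z - v‖ ^ 2 :=
      by exact_mod_cast hit
    have hzv : z - v = p + t • d := by
      rw [hz, hp, hd]
      rw [smul_sub, sub_smul, one_smul]; abel
    have hnorm : ‖z - v‖ ^ 2 = ‖p‖ ^ 2 + 2 * (t * ⟪p, d⟫) + t ^ 2 * ‖d‖ ^ 2 := by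
      rw [hzv, norm_add_sq_real, real_inner_smul_right, norm_smul]
      simp [mul_pow, abs_of_pos ht0]
    have hupv : up - v = p := hp.symm
    rw [hupv, hnorm] at hit'
    have hτ2 : 0 < 2 * τ := by linarith
    have h5 : t * (a - b) ≤ 2 * (1 / (2 * τ)) * (t * ⟪p, d⟫)
        + t ^ 2 * ‖d‖ ^ 2 * (1 / (2 * τ)) := by linarith [hit', hgzle]
    have heq : 2 * (1 / (2 * τ)) * (t * ⟪p, d⟫) + t ^ 2 * ‖d‖ ^ 2 * (1 / (2 * τ))
        = t * ((1 / τ) * ⟪p, d⟫ + t * (‖d‖ ^ 2 / (2 * τ))) := by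
      field_simp
    rw [heq] at h5
    have h6 := le_of_mul_le_mul_left h5 ht0
    linarith [h6]
  -- pass to the limit t → 0⁺
  by_contra hcon
  push_neg at hcon
  set X := a - b - (1 / τ) * ⟪p, d⟫ with hX
  have hXpos : 0 < X := by
    rw [hX]
    have : ⟪v - up, up - w⟫ = ⟪p, d⟫ := by rw [hp, hd, ← inner_neg_neg]; simp
    linarith [hcon, this ▸ hcon]
  set D := ‖d‖ ^ 2 / (2 * τ) with hD
  have hD0 : 0 ≤ D := by positivity
  set t0 := min (1/2) (X / (D + 1)) with ht0def
  have ht00 : 0 < t0 := lt_min (by norm_num) (div_pos hXpos (by linarith))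
  have ht01 : t0 < 1 := lt_of_le_of_lt (min_le_left _ _) (by norm_num)
  have := main t0 ht00 ht01
  have h6 : t0 * D ≤ (X / (D + 1)) * D := mul_le_mul_of_nonneg_right (min_le_right _ _) hD0
  have h7 : (X / (D + 1)) * D < X := by
    rw [div_mul_eq_mul_div, div_lt_iff₀ (by linarith)]
    nlinarith
  exact absurd ((this.trans h6).trans_lt h7) (lt_irrefl X)

lemma key_step (H : E → ℝ) (G : E → EReal) (gH : E → E)
    (hGbot : ∀ x, G x ≠ ⊥)
    (hGconv : ∀ x y : E, ∀ t : ℝ, 0 < t → t < 1 →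
      G (t • x + (1 - t) • y) ≤ (t : EReal) * G x + ((1 - t : ℝ) : EReal) * G y)
    (hHconv : ConvexOn ℝ Set.univ H)
    (hgrad : ∀ x, HasGradientAt H (gH x) x)
    (L : ℝ) (hL : 0 < L) (hlip : ∀ x y, ‖gH x - gH y‖ ≤ L * ‖x - y‖)
    (τ : ℝ) (hτ0 : 0 < τ) (hτL : τ ≤ 1 / L)
    (x up w : E) (hup : G up ≠ ⊤) (hw : G w ≠ ⊤)
    (hiter : ∀ z : E, G up + ((1 / (2 * τ) * ‖up - (x - τ • gH x)‖ ^ 2 : ℝ) : EReal) ≤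
      G z + ((1 / (2 * τ) * ‖z - (x - τ • gH x)‖ ^ 2 : ℝ) : EReal)) :
    H up + (G up).toReal ≤ H w + (G w).toReal
      + 1 / (2 * τ) * (‖w - x‖ ^ 2 - ‖w - up‖ ^ 2) := by
  set v := x - τ • gH x with hv
  set c : ℝ := 1 / (2 * τ) with hc
  set g := gH x with hg
  -- descent lemma
  have hdes : H up ≤ H x + ⟪g, up - x⟫ + L / 2 * ‖up - x‖ ^ 2 := by
    have := descent H gH hgrad L hL hlip x (up - x)
    simpa using this
  have hLτ : L / 2 ≤ c := by
    rw [le_div_iff₀ hL] at hτL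
    rw [hc, div_le_div_iff₀ (by norm_num) (by linarith)]
    nlinarith
  have hdes2 : H up ≤ H x + ⟪g, up - x⟫ + c * ‖up - x‖ ^ 2 :=
    hdes.trans (by nlinarith [sq_nonneg ‖up - x‖, hLτ])
  -- convexity
  have hconv : H x + ⟪g, w - x⟫ ≤ H w := grad_convex H gH hgrad hHconv x w
  -- prox inequality
  have hprox : (G up).toReal ≤ (G w).toReal + (1 / τ) * ⟪v - up, up - w⟫ :=
    prox_ineq G hGbot hGconv τ hτ0 up v w hup hw hiter
  have hsplit : ⟪v - up, up - w⟫ = ⟪x - up, up - w⟫ - τ * ⟪g, up - w⟫ := by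
    rw [hv]
    have : x - τ • g - up = (x - up) - τ • g := by abel
    rw [this, inner_sub_left, real_inner_smul_left]
  have hτne : τ ≠ 0 := ne_of_gt hτ0
  have hfield : (1 / τ) * (⟪x - up, up - w⟫ - τ * ⟪g, up - w⟫)
      = 2 * c * ⟪x - up, up - w⟫ - ⟪g, up - w⟫ := by
    rw [hc]; field_simp
  have hprox2 : (G up).toReal ≤ (G w).toReal + 2 * c * ⟪x - up, up - w⟫ - ⟪g, up - w⟫ := by
    rw [hsplit, hfield] at hprox; linarith
  -- norm identity (pre-multiplied by c)
  have hnormid : c * ‖w - x‖ ^ 2 = c * ‖w - up‖ ^ 2 + 2 * (c * ⟪w - up, up - x⟫)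
      + c * ‖up - x‖ ^ 2 := by
    have h1 : w - x = (w - up) + (up - x) := by abel
    rw [h1, norm_add_sq_real]; ring
  -- orientation facts
  have hrev : ⟪x - up, up - w⟫ = ⟪w - up, up - x⟫ := by
    rw [show x - up = -(up - x) by abel, show up - w = -(w - up) by abel,
      inner_neg_neg, real_inner_comm]
  rw [hrev] at hprox2
  have hgoal : c * (‖w - x‖ ^ 2 - ‖w - up‖ ^ 2)
      = 2 * (c * ⟪w - up, up - x⟫) + c * ‖up - x‖ ^ 2 := by linarith [hnormid]
  have hgzero : ⟪g, up - x⟫ - ⟪g, w - x⟫ - ⟪g, up - w⟫ = 0 := by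
    simp only [inner_sub_right]; ring
  linarith [hdes2, hconv, hprox2, hgoal, hgzero]

/-- Convergence of proximal gradient descent: for `J = H + G` with `H : ℝⁿ → ℝ` convex,
differentiable with `L`-Lipschitz gradient `gH`, `G : ℝⁿ → ℝ ∪ {+∞}` proper, convex,
lsc, a global minimizer `u*` of `J`, step size `0 < τ ≤ 1/L`, and iterates
`u^{k+1} = prox_{τG}(u^k − τ gH(u^k))`, one has `J(u^k) − J(u*) ≤ ‖u⁰ − u*‖²/(2τk)` for
all `k ≥ 1` (stated as `J(u^k) ≤ J(u*) + ‖u⁰ − u*‖²/(2τk)`). -/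
theorem stmt_16 {n : ℕ} (H : EuclideanSpace ℝ (Fin n) → ℝ)
    (G : EuclideanSpace ℝ (Fin n) → EReal)
    (gH : EuclideanSpace ℝ (Fin n) → EuclideanSpace ℝ (Fin n))
    (hGbot : ∀ x, G x ≠ ⊥) (hGproper : ∃ x, G x ≠ ⊤)
    (hGconv : ∀ x y : EuclideanSpace ℝ (Fin n), ∀ t : ℝ, 0 < t → t < 1 →
      G (t • x + (1 - t) • y) ≤ (t : EReal) * G x + ((1 - t : ℝ) : EReal) * G y)
    (hGlsc : LowerSemicontinuous G)
    (hHconv : ConvexOn ℝ Set.univ H)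
    (hgrad : ∀ x, HasGradientAt H (gH x) x)
    (L : ℝ) (hL : 0 < L)
    (hlip : ∀ x y, ‖gH x - gH y‖ ≤ L * ‖x - y‖)
    (ustar : EuclideanSpace ℝ (Fin n))
    (hmin : ∀ w, (H ustar : EReal) + G ustar ≤ (H w : EReal) + G w)
    (τ : ℝ) (hτ0 : 0 < τ) (hτL : τ ≤ 1 / L)
    (u : ℕ → EuclideanSpace ℝ (Fin n))
    (hiter : ∀ k : ℕ, ∀ w : EuclideanSpace ℝ (Fin n),
      G (u (k + 1)) +
          ((1 / (2 * τ) * ‖u (k + 1) - (u k - τ • gH (u k))‖ ^ 2 : ℝ) : EReal) ≤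
        G w + ((1 / (2 * τ) * ‖w - (u k - τ • gH (u k))‖ ^ 2 : ℝ) : EReal)) :
    ∀ k : ℕ, 1 ≤ k →
      (H (u k) : EReal) + G (u k) ≤
        (H ustar : EReal) + G ustar + ((‖u 0 - ustar‖ ^ 2 / (2 * τ * (k : ℝ)) : ℝ) : EReal) := by
  obtain ⟨x₀, hx₀⟩ := hGproper
  have hGustar : G ustar ≠ ⊤ := by
    intro htop
    have h1 := hmin x₀
    rw [htop, EReal.add_top_of_ne_bot (EReal.coe_ne_bot _)] at h1
    exact absurd (top_le_iff.1 h1) (EReal.add_lt_top (EReal.coe_ne_top _) hx₀).ne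
  have hGuk : ∀ k, G (u (k + 1)) ≠ ⊤ := by
    intro k htop
    have h := hiter k ustar
    rw [htop, EReal.top_add_of_ne_bot (EReal.coe_ne_bot _)] at h
    exact absurd (top_le_iff.1 h) (EReal.add_lt_top hGustar (EReal.coe_ne_top _)).ne
  set A : ℕ → ℝ := fun k => H (u k) + (G (u k)).toReal with hA
  set S : ℝ := H ustar + (G ustar).toReal with hS
  set c : ℝ := 1 / (2 * τ) with hc
  have hc0 : 0 ≤ c := by positivity
  have hkey : ∀ k : ℕ, ∀ w, G w ≠ ⊤ →
      A (k + 1) ≤ H w + (G w).toReal + c * (‖w - u k‖ ^ 2 - ‖w - u (k + 1)‖ ^ 2) :=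
    fun k w hw => key_step H G gH hGbot hGconv hHconv hgrad L hL hlip τ hτ0 hτL
      (u k) (u (k + 1)) w (hGuk k) hw (hiter k)
  have hkeyS : ∀ k : ℕ, A (k + 1) ≤ S + c * (‖ustar - u k‖ ^ 2 - ‖ustar - u (k + 1)‖ ^ 2) :=
    fun k => hkey k ustar hGustar
  have hdec : ∀ k : ℕ, 1 ≤ k → A (k + 1) ≤ A k := by
    intro k hk
    match k, hk with
    | (m + 1), _ =>
      have h1 := hkey (m + 1) (u (m + 1)) (hGuk m)
      have h0 : ‖u (m + 1) - u (m + 1)‖ = 0 := by simp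
      rw [h0] at h1
      have h2 : 0 ≤ c * ‖u (m + 1) - u (m + 1 + 1)‖ ^ 2 :=
        mul_nonneg hc0 (sq_nonneg _)
      have : A (m + 1 + 1) ≤ A (m + 1) + c * (0 ^ 2 - ‖u (m + 1) - u (m + 1 + 1)‖ ^ 2) := h1
      nlinarith [this, h2]
  have htel : ∀ k : ℕ, 1 ≤ k →
      (k : ℝ) * (A k - S) + c * ‖ustar - u k‖ ^ 2 ≤ c * ‖ustar - u 0‖ ^ 2 := by
    intro k hk
    induction k, hk using Nat.le_induction with
    | base =>
      have := hkeyS 0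
      push_cast
      nlinarith [this]
    | succ k hk ih =>
      have h1 := hkeyS k
      have h2 := hdec k hk
      have h4 : (k : ℝ) * (A (k + 1) - S) ≤ (k : ℝ) * (A k - S) :=
        mul_le_mul_of_nonneg_left (by linarith) (Nat.cast_nonneg k)
      push_cast
      nlinarith [ih, h1, h4]
  intro k hk
  have hkpos : (0 : ℝ) < (k : ℝ) := by exact_mod_cast Nat.pos_of_ne_zero (by omega)
  have htel' := htel k hk
  have h5 : A k - S ≤ c * ‖ustar - u 0‖ ^ 2 / (k : ℝ) := by
    rw [le_div_iff₀ hkpos]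
    nlinarith [htel', mul_nonneg hc0 (sq_nonneg ‖ustar - u k‖)]
  have h6 : c * ‖ustar - u 0‖ ^ 2 / (k : ℝ) = ‖u 0 - ustar‖ ^ 2 / (2 * τ * (k : ℝ)) := by
    rw [norm_sub_rev, hc]
    field_simp
  have hreal : H (u k) + (G (u k)).toReal ≤
      H ustar + (G ustar).toReal + ‖u 0 - ustar‖ ^ 2 / (2 * τ * (k : ℝ)) := by
    have : A k ≤ S + ‖u 0 - ustar‖ ^ 2 / (2 * τ * (k : ℝ)) := by
      rw [← h6]; linarith
    simpa [hA, hS] using this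
  have hGk : G (u k) ≠ ⊤ := by
    match k, hk with
    | (m + 1), _ => exact hGuk m
  rw [← EReal.coe_toReal hGk (hGbot _), ← EReal.coe_toReal hGustar (hGbot _)]
  exact_mod_cast hreal
end

section
/- Let H be a real Hilbert space and M : H → 2^H a set-valued operator. Then M is maximal monotone if and only if there exists a nonexpansive (i.e. 1-Lipschitz) map Q : H → H such that the resolvent (I + M)^{-1} equals (1/2)(I + Q); explicitly, M is maximal monotone if and only if there exists a 1-Lipschitz Q : H → H such that for all x, u ∈ H: (x − u ∈ M(u)) ⟺ (u = (x + Q(x))/2). -/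
open scoped Topology RealInnerProductSpace

section Aux
variable {H : Type*} [NormedAddCommGroup H] [InnerProductSpace ℝ H]

lemma my_polar (a b : H) : (⟪a - b, a + b⟫ : ℝ) = ‖a‖^2 - ‖b‖^2 := by
  rw [inner_sub_left, inner_add_right, inner_add_right,
    real_inner_self_eq_norm_sq, real_inner_self_eq_norm_sq, real_inner_comm b a]
  ring

lemma my_quarter (x y qx qy : H) :
    (⟪(2:ℝ)⁻¹ • (x - qx) - (2:ℝ)⁻¹ • (y - qy), (2:ℝ)⁻¹ • (x + qx) - (2:ℝ)⁻¹ • (y + qy)⟫ : ℝ)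
      = (4:ℝ)⁻¹ * (‖x - y‖^2 - ‖qx - qy‖^2) := by
  have h1 : (2:ℝ)⁻¹ • (x - qx) - (2:ℝ)⁻¹ • (y - qy) = (2:ℝ)⁻¹ • ((x - y) - (qx - qy)) := by
    module
  have h2 : (2:ℝ)⁻¹ • (x + qx) - (2:ℝ)⁻¹ • (y + qy) = (2:ℝ)⁻¹ • ((x - y) + (qx - qy)) := by
    module
  rw [h1, h2, real_inner_smul_left, real_inner_smul_right, my_polar]
  ring

lemma my_doubleSum {ι : Type*} (t : Finset ι) (c : ι → ℝ) (v : ι → H) :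
    ∑ i ∈ t, ∑ j ∈ t, c i * c j * ‖v i - v j‖^2
      = 2 * ((∑ i ∈ t, c i) * (∑ i ∈ t, c i * ‖v i‖^2)) - 2 * ‖∑ i ∈ t, c i • v i‖^2 := by
  have h2 : ‖∑ i ∈ t, c i • v i‖^2 = ∑ i ∈ t, ∑ j ∈ t, c i * c j * ⟪v i, v j⟫ := by
    rw [← real_inner_self_eq_norm_sq, sum_inner]
    refine Finset.sum_congr rfl fun i _ => ?_
    rw [real_inner_smul_left, inner_sum, Finset.mul_sum]
    refine Finset.sum_congr rfl fun j _ => ?_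
    rw [real_inner_smul_right]; ring
  have e0 : ∑ i ∈ t, ∑ j ∈ t, c i * c j * ‖v i - v j‖^2
      = ∑ i ∈ t, ∑ j ∈ t, (c i * c j * ‖v i‖^2 + c i * c j * ‖v j‖^2
          - 2*(c i * c j * ⟪v i, v j⟫)) := by
    refine Finset.sum_congr rfl fun i _ => Finset.sum_congr rfl fun j _ => ?_
    rw [@norm_sub_sq_real]; ring
  have e1 : ∑ i ∈ t, ∑ j ∈ t, c i * c j * ‖v i‖^2
      = (∑ i ∈ t, c i * ‖v i‖^2) * (∑ j ∈ t, c j) := by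
    rw [Finset.sum_mul]
    refine Finset.sum_congr rfl fun i _ => ?_
    rw [Finset.mul_sum]
    exact Finset.sum_congr rfl fun j _ => by ring
  have e2 : ∑ i ∈ t, ∑ j ∈ t, c i * c j * ‖v j‖^2
      = (∑ i ∈ t, c i) * (∑ j ∈ t, c j * ‖v j‖^2) := by
    rw [Finset.sum_mul]
    refine Finset.sum_congr rfl fun i _ => ?_
    rw [Finset.mul_sum]
    exact Finset.sum_congr rfl fun j _ => by ring
  rw [e0]
  simp only [Finset.sum_sub_distrib, Finset.sum_add_distrib, ← Finset.mul_sum]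
  rw [e1, e2, h2]
  ring

variable {H : Type*} [NormedAddCommGroup H] [InnerProductSpace ℝ H] [CompleteSpace H]

lemma my_finKirsz {n : ℕ} (hn : n ≠ 0) (a b : Fin n → H)
    (hab : ∀ i j, ‖b i - b j‖ ≤ ‖a i - a j‖) (p : H) :
    ∃ y : H, ∀ i, ‖y - b i‖ ≤ ‖p - a i‖ := by
  haveI : Nonempty (Fin n) := ⟨⟨0, Nat.pos_of_ne_zero hn⟩⟩
  set g : Fin n → H → ℝ := fun i y => ‖y - b i‖^2 - ‖p - a i‖^2 with hg
  set φ : H → ℝ := fun y => Finset.univ.sup' Finset.univ_nonempty (fun i => g i y) with hφ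
  have hgcont : ∀ i : Fin n, Continuous (g i) := by
    intro i
    show Continuous fun y => ‖y - b i‖^2 - ‖p - a i‖^2
    fun_prop
  have hφcont : Continuous φ := by
    rw [hφ]
    exact Continuous.finset_sup'_apply Finset.univ_nonempty fun i _ => hgcont i
  -- the compact convex hull of the b i
  set K : Set H := convexHull ℝ (Set.range b) with hK
  have hKcomp : IsCompact K := (Set.finite_range b).isCompact_convexHull ℝ
  have hKconv : Convex ℝ K := convex_convexHull ℝ _
  have hKne : K.Nonempty := ⟨b ⟨0, Nat.pos_of_ne_zero hn⟩,
    subset_convexHull ℝ _ (Set.mem_range_self _)⟩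
  have hbK : ∀ i, b i ∈ K := fun i => subset_convexHull ℝ _ (Set.mem_range_self i)
  -- projection onto K decreases φ
  have hproj : ∀ z : H, ∃ z' ∈ K, φ z' ≤ φ z := by
    intro z
    obtain ⟨v, hvK, hv⟩ := exists_norm_eq_iInf_of_complete_convex hKne
      (hKcomp.isClosed.isComplete) hKconv z
    rw [norm_eq_iInf_iff_real_inner_le_zero hKconv hvK] at hv
    refine ⟨v, hvK, ?_⟩
    apply Finset.sup'_le
    intro i _
    refine le_trans ?_ (Finset.le_sup' (fun i => g i z) (Finset.mem_univ i))
    simp only [hg, sub_le_sub_iff_right]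
    have h1 : z - b i = (z - v) + (v - b i) := by abel
    have h2 : (0:ℝ) ≤ ⟪z - v, v - b i⟫ := by
      have h4 := hv (b i) (hbK i)
      have h3 : (⟪z - v, v - b i⟫ : ℝ) = - ⟪z - v, b i - v⟫ := by
        rw [← inner_neg_right, neg_sub]
      rw [h3]; linarith
    calc ‖v - b i‖^2 ≤ ‖z - v‖^2 + 2 * ⟪z - v, v - b i⟫ + ‖v - b i‖^2 := by
          nlinarith [sq_nonneg ‖z - v‖]
      _ = ‖z - b i‖^2 := by rw [h1, @norm_add_sq_real]
  -- minimize φ over K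
  obtain ⟨y0, hy0K, hy0min⟩ := hKcomp.exists_isMinOn hKne hφcont.continuousOn
  set m : ℝ := φ y0 with hm
  -- key claim : m ≤ 0
  have hmle : m ≤ 0 := by
    by_contra hmpos
    push_neg at hmpos
    -- active set
    set A : Finset (Fin n) := Finset.univ.filter (fun i => g i y0 = m) with hA
    have hAne : A.Nonempty := by
      obtain ⟨i, _, hi⟩ := Finset.exists_mem_eq_sup' Finset.univ_nonempty (fun i => g i y0)
      exact ⟨i, Finset.mem_filter.mpr ⟨Finset.mem_univ i, hi.symm⟩⟩
    have hActive : ∀ i ∈ A, ‖y0 - b i‖^2 = m + ‖p - a i‖^2 := by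
      intro i hi
      have := (Finset.mem_filter.mp hi).2
      simp only [hg] at this
      linarith
    -- y0 lies in the convex hull of active b i's
    have hy0hull : y0 ∈ convexHull ℝ (b '' (A : Set (Fin n))) := by
      by_contra hout
      obtain ⟨f, u, hfy0, hfz⟩ := geometric_hahn_banach_point_closed
        ((convex_convexHull ℝ _))
        (((A.finite_toSet.image b).isCompact_convexHull ℝ).isClosed) hout
      set d : H := (InnerProductSpace.toDual ℝ H).symm f with hd
      have hdinner : ∀ z : H, (⟪d, z⟫ : ℝ) = f z := fun z =>
        InnerProductSpace.toDual_symm_apply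
      set ε : ℝ := u - f y0 with hε
      have hεpos : 0 < ε := by simp only [hε]; linarith
      have hdact : ∀ i ∈ A, ε ≤ (⟪d, b i - y0⟫ : ℝ) := by
        intro i hi
        have hbi : b i ∈ convexHull ℝ (b '' (A : Set (Fin n))) :=
          subset_convexHull ℝ _ ⟨i, hi, rfl⟩
        have := hfz _ hbi
        rw [hdinner, map_sub]
        simp only [hε]; linarith
      have hdne : d ≠ 0 := by
        intro h0
        obtain ⟨i, hi⟩ := hAne
        have := hdact i hi
        rw [h0, inner_zero_left] at this
        linarith
      have hC : (0:ℝ) < ‖d‖^2 := by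
        have := norm_pos_iff.mpr hdne
        positivity
      -- eventually along 𝓝[>] 0, moving y0 by t • d strictly decreases all g i
      have hev : ∀ i : Fin n, ∀ᶠ t in 𝓝[>] (0:ℝ), g i (y0 + t • d) < m := by
        intro i
        have hexp : ∀ t : ℝ, g i (y0 + t • d)
            = g i y0 + t * (2 * ⟪y0 - b i, d⟫ + t * ‖d‖^2) := by
          intro t
          simp only [hg]
          have : y0 + t • d - b i = (y0 - b i) + t • d := by abel
          rw [this, @norm_add_sq_real, real_inner_smul_right, norm_smul]
          simp [mul_pow]
          ring
        by_cases hiA : i ∈ A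
        · -- active index
          have hI : Set.Ioo (0:ℝ) (ε / ‖d‖^2) ∈ 𝓝[>] (0:ℝ) :=
            Ioo_mem_nhdsGT (div_pos hεpos hC)
          filter_upwards [hI] with t ht
          rw [hexp]
          have hgm : g i y0 = m := (Finset.mem_filter.mp hiA).2
          have h1 : (⟪y0 - b i, d⟫ : ℝ) = - ⟪d, b i - y0⟫ := by
            rw [real_inner_comm, ← inner_neg_right, neg_sub]
          have h2 : t * ‖d‖^2 < ε := by
            rw [← lt_div_iff₀ hC]; exact ht.2
          have h3 := hdact i hiA
          have ht0 : 0 < t := ht.1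
          nlinarith
        · -- inactive index
          have hlt : g i y0 < m := by
            have hle : g i y0 ≤ m := Finset.le_sup' (fun i => g i y0) (Finset.mem_univ i)
            rcases lt_or_eq_of_le hle with h | h
            · exact h
            · exact absurd (Finset.mem_filter.mpr ⟨Finset.mem_univ i, h⟩) hiA
          have hcont : ContinuousAt (fun t : ℝ => g i (y0 + t • d)) 0 := by
            simp only [hg]; fun_prop
          have h0 : (fun t : ℝ => g i (y0 + t • d)) 0 = g i y0 := by simp
          have h5 := hcont.tendsto
          simp only [zero_smul, add_zero] at h5
          exact (h5.eventually_lt_const hlt).filter_mono nhdsWithin_le_nhds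
        -- combine
      have hall : ∀ᶠ t in 𝓝[>] (0:ℝ), ∀ i, g i (y0 + t • d) < m :=
        Filter.eventually_all.mpr hev
      obtain ⟨t, ht⟩ := hall.exists
      have hφlt : φ (y0 + t • d) < m := by
        apply (Finset.sup'_lt_iff Finset.univ_nonempty).mpr
        intro i _
        exact ht i
      obtain ⟨z', hz'K, hz'le⟩ := hproj (y0 + t • d)
      have := hy0min hz'K
      simp only [Set.mem_setOf_eq] at this
      have : m ≤ φ z' := this
      linarith
    -- barycentric representation and the contradiction
    classical
    rw [convexHull_eq] at hy0hull
    obtain ⟨ι', s, w, z, hw0, hw1, hzmem, hcm⟩ := hy0hull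
    rw [Finset.centerMass_eq_of_sum_1 _ _ hw1] at hcm
    have hzmem' : ∀ i ∈ s, ∃ k : Fin n, k ∈ A ∧ b k = z i := by
      intro i hi
      obtain ⟨k, hk1, hk2⟩ := hzmem i hi
      exact ⟨k, hk1, hk2⟩
    set σ : ι' → Fin n := fun i =>
      if h : ∃ k : Fin n, k ∈ A ∧ b k = z i then h.choose else Classical.arbitrary _ with hσdef
    have hσA : ∀ i ∈ s, σ i ∈ A := by
      intro i hi
      simp only [hσdef]
      rw [dif_pos (hzmem' i hi)]
      exact (hzmem' i hi).choose_spec.1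
    have hσb : ∀ i ∈ s, b (σ i) = z i := by
      intro i hi
      simp only [hσdef]
      rw [dif_pos (hzmem' i hi)]
      exact (hzmem' i hi).choose_spec.2
    -- double sum for the b side
    have hSb : ∑ i ∈ s, ∑ j ∈ s, w i * w j * ‖z i - z j‖^2
        = 2 * ((∑ i ∈ s, w i) * (∑ i ∈ s, w i * ‖z i - y0‖^2))
          - 2 * ‖∑ i ∈ s, w i • (z i - y0)‖^2 := by
      have h := my_doubleSum s w (fun i => z i - y0)
      simp only [sub_sub_sub_cancel_right] at h
      exact h
    have hzero : ∑ i ∈ s, w i • (z i - y0) = 0 := by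
      simp only [smul_sub, Finset.sum_sub_distrib, ← Finset.sum_smul, hw1, one_smul, hcm,
        sub_self]
    have hSb2 : ∑ i ∈ s, w i * ‖z i - y0‖^2
        = m + ∑ i ∈ s, w i * ‖p - a (σ i)‖^2 := by
      have h1 : ∀ i ∈ s, w i * ‖z i - y0‖^2 = w i * m + w i * ‖p - a (σ i)‖^2 := by
        intro i hi
        have h2 : ‖z i - y0‖^2 = m + ‖p - a (σ i)‖^2 := by
          rw [← hσb i hi, norm_sub_rev]
          exact hActive _ (hσA i hi)
        rw [h2]; ring
      rw [Finset.sum_congr rfl h1, Finset.sum_add_distrib, ← Finset.sum_mul, hw1, one_mul]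
    -- double sum for the a side
    have hSa : ∑ i ∈ s, ∑ j ∈ s, w i * w j * ‖a (σ i) - a (σ j)‖^2
        = 2 * ((∑ i ∈ s, w i) * (∑ i ∈ s, w i * ‖a (σ i) - p‖^2))
          - 2 * ‖∑ i ∈ s, w i • (a (σ i) - p)‖^2 := by
      have h := my_doubleSum s w (fun i => a (σ i) - p)
      simp only [sub_sub_sub_cancel_right] at h
      exact h
    -- comparison
    have hcomp : ∑ i ∈ s, ∑ j ∈ s, w i * w j * ‖z i - z j‖^2
        ≤ ∑ i ∈ s, ∑ j ∈ s, w i * w j * ‖a (σ i) - a (σ j)‖^2 := by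
      refine Finset.sum_le_sum fun i hi => Finset.sum_le_sum fun j hj => ?_
      have hz : ‖z i - z j‖ ≤ ‖a (σ i) - a (σ j)‖ := by
        rw [← hσb i hi, ← hσb j hj]
        exact hab (σ i) (σ j)
      have hsq : ‖z i - z j‖^2 ≤ ‖a (σ i) - a (σ j)‖^2 :=
        pow_le_pow_left₀ (norm_nonneg _) hz 2
      exact mul_le_mul_of_nonneg_left hsq (mul_nonneg (hw0 i hi) (hw0 j hj))
    have hrev : ∀ i ∈ s, w i * ‖a (σ i) - p‖^2 = w i * ‖p - a (σ i)‖^2 := fun i _ => by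
      rw [norm_sub_rev]
    rw [hSb, hSa, hzero, hw1, hSb2, Finset.sum_congr rfl hrev] at hcomp
    simp only [norm_zero] at hcomp
    nlinarith [sq_nonneg ‖∑ i ∈ s, w i • (a (σ i) - p)‖, hmpos]
  -- conclude
  refine ⟨y0, fun i => ?_⟩
  have hle : g i y0 ≤ m := Finset.le_sup' (fun i => g i y0) (Finset.mem_univ i)
  have : ‖y0 - b i‖^2 ≤ ‖p - a i‖^2 := by simp only [hg] at hle; linarith
  exact le_of_pow_le_pow_left₀ two_ne_zero (norm_nonneg _) this


set_option maxHeartbeats 1000000 in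
lemma my_projIneq {Cs : Set H} (hconv : Convex ℝ Cs) {p u v : H}
    (hu : u ∈ Cs) (hv : v ∈ Cs) (hmin : ∀ w ∈ Cs, ‖p - u‖ ≤ ‖p - w‖) :
    ‖u - v‖^2 ≤ 2 * (‖p - v‖^2 - ‖p - u‖^2) := by
  have hz : (2⁻¹:ℝ) • u + (2⁻¹:ℝ) • v ∈ Cs :=
    hconv hu hv (by norm_num) (by norm_num) (by norm_num)
  have hmid := hmin _ hz
  have hpar := parallelogram_law_with_norm ℝ (p - u) (p - v)
  have h1 : (p - u) - (p - v) = v - u := by abel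
  have h2 : (p - u) + (p - v) = (2:ℝ) • (p - ((2⁻¹:ℝ) • u + (2⁻¹:ℝ) • v)) := by module
  rw [h1, h2] at hpar
  have h3 : ‖(2:ℝ) • (p - ((2⁻¹:ℝ) • u + (2⁻¹:ℝ) • v))‖
      = 2 * ‖p - ((2⁻¹:ℝ) • u + (2⁻¹:ℝ) • v)‖ := by
    rw [norm_smul]; simp
  rw [h3] at hpar
  have h4 : ‖u - v‖ = ‖v - u‖ := norm_sub_rev _ _
  have h5 : (0:ℝ) ≤ ‖p - u‖ := norm_nonneg _
  rw [pow_two, pow_two, pow_two, h4]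
  nlinarith [hpar, mul_self_le_mul_self h5 hmid]


lemma my_onePoint (G : Set (H × H))
    (hG : ∀ g ∈ G, ∀ g' ∈ G, ‖(g.2 : H) - g'.2‖ ≤ ‖g.1 - g'.1‖) (p : H) :
    ∃ y : H, ∀ g ∈ G, ‖y - g.2‖ ≤ ‖p - g.1‖ := by
  classical
  rcases G.eq_empty_or_nonempty with rfl | ⟨g0, hg0⟩
  · exact ⟨p, fun g hg => absurd hg (Set.notMem_empty g)⟩
  set C : Finset (H × H) → Set H :=
    fun F => ⋂ g ∈ F, Metric.closedBall g.2 ‖p - g.1‖ with hC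
  have hCconv : ∀ F, Convex ℝ (C F) :=
    fun F => convex_iInter fun g => convex_iInter fun _ => convex_closedBall _ _
  have hCclosed : ∀ F, IsClosed (C F) :=
    fun F => isClosed_biInter fun g _ => Metric.isClosed_closedBall
  have hCmono : ∀ {F F' : Finset (H × H)}, F ⊆ F' → C F' ⊆ C F := by
    intro F F' hFF'
    exact Set.biInter_subset_biInter_left hFF'
  have hmemC : ∀ {x : H} {F : Finset (H × H)},
      x ∈ C F ↔ ∀ g ∈ F, ‖x - g.2‖ ≤ ‖p - g.1‖ := by
    intro x F
    simp only [hC, Set.mem_iInter, Metric.mem_closedBall, dist_eq_norm]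
  -- nonemptiness via the finite Kirszbraun lemma
  have hCne : ∀ F : Finset (H × H), ↑F ⊆ G → F.Nonempty → (C F).Nonempty := by
    intro F hFG hFne
    have hcard : F.card ≠ 0 := Finset.card_ne_zero.mpr hFne
    set e : Fin F.card ≃ {x // x ∈ F} := F.equivFin.symm with he
    obtain ⟨y, hy⟩ := my_finKirsz hcard (fun i => ((e i : H × H)).1)
      (fun i => ((e i : H × H)).2)
      (fun i j => hG _ (hFG (e i).2) _ (hFG (e j).2)) p
    refine ⟨y, hmemC.mpr fun g hg => ?_⟩
    have := hy (F.equivFin ⟨g, hg⟩)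
    rwa [he, Equiv.symm_apply_apply] at this
  -- admissible finsets and their projections
  set Adm : Finset (H × H) → Prop := fun F => ↑F ⊆ G ∧ g0 ∈ F with hAdm
  have hAdmNe : ∀ {F}, Adm F → (C F).Nonempty :=
    fun {F} hF => hCne F hF.1 ⟨g0, hF.2⟩
  have hproj : ∀ F : Finset (H × H), Adm F →
      ∃ y ∈ C F, ∀ w ∈ C F, ‖p - y‖ ≤ ‖p - w‖ := by
    intro F hF
    obtain ⟨v, hvK, hv⟩ := exists_norm_eq_iInf_of_complete_convex (hAdmNe hF)
      ((hCclosed F).isComplete) (hCconv F) p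
    refine ⟨v, hvK, fun w hw => ?_⟩
    rw [hv]
    exact ciInf_le ⟨0, Set.forall_mem_range.2 fun _ => norm_nonneg _⟩ (⟨w, hw⟩ : C F)
  choose proj hprojMem hprojMin using hproj
  set δ : ∀ F : Finset (H × H), Adm F → ℝ := fun F hF => ‖p - proj F hF‖ with hδ
  have hδnonneg : ∀ F hF, 0 ≤ δ F hF := fun F hF => norm_nonneg _
  have hδmono : ∀ F F' (hF : Adm F) (hF' : Adm F'), F ⊆ F' → δ F hF ≤ δ F' hF' := by
    intro F F' hF hF' hsub
    exact hprojMin F hF _ (hCmono hsub (hprojMem F' hF'))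
  -- the sup of the projection distances
  set D : Set ℝ := {r | ∃ F hF, δ F hF = r} with hD
  have hDne : D.Nonempty := by
    refine ⟨δ {g0} ⟨by simpa using hg0, Finset.mem_singleton_self g0⟩, _, _, rfl⟩
  have hDbdd : BddAbove D := by
    refine ⟨‖p - g0.2‖ + ‖p - g0.1‖, fun r hr => ?_⟩
    obtain ⟨F, hF, rfl⟩ := hr
    have hmem := hmemC.mp (hprojMem F hF) g0 hF.2
    calc ‖p - proj F hF‖ ≤ ‖p - g0.2‖ + ‖g0.2 - proj F hF‖ := by
          have : p - proj F hF = (p - g0.2) + (g0.2 - proj F hF) := by abel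
          rw [this]; exact norm_add_le _ _
      _ ≤ ‖p - g0.2‖ + ‖p - g0.1‖ := by
          rw [norm_sub_rev] at hmem ⊢
          linarith [hmem]
  set m : ℝ := sSup D with hm
  have hδlem : ∀ F hF, δ F hF ≤ m := fun F hF => le_csSup hDbdd ⟨F, hF, rfl⟩
  have hmnonneg : 0 ≤ m := le_trans (hδnonneg _ _)
    (hδlem {g0} ⟨by simpa using hg0, Finset.mem_singleton_self g0⟩)
  -- choose a sequence of finsets approaching the sup
  have hseq : ∀ k : ℕ, ∃ F, ∃ hF : Adm F, m - 1/(k+1) < δ F hF := by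
    intro k
    have hlt : m - 1/(k+1) < m := by
      have : (0:ℝ) < 1/(k+1) := by positivity
      linarith
    obtain ⟨r, hrD, hrlt⟩ := exists_lt_of_lt_csSup hDne hlt
    obtain ⟨F, hF, rfl⟩ := hrD
    exact ⟨F, hF, hrlt⟩
  choose Fs hFs hFslt using hseq
  set T : ℕ → Finset (H × H) := fun k => (Finset.range (k+1)).biUnion Fs with hT
  have hTAdm : ∀ k, Adm (T k) := by
    intro k
    constructor
    · intro g hg
      simp only [hT, Finset.coe_biUnion, Set.mem_iUnion, Finset.mem_coe] at hg
      obtain ⟨j, _, hj⟩ := hg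
      exact (hFs j).1 hj
    · exact Finset.mem_biUnion.mpr ⟨0, Finset.mem_range.mpr (Nat.succ_pos k), (hFs 0).2⟩
  have hTsub : ∀ k, Fs k ⊆ T k := fun k =>
    Finset.subset_biUnion_of_mem Fs (Finset.mem_range.mpr (Nat.lt_succ_self k))
  have hTmono : ∀ {k l : ℕ}, k ≤ l → T k ⊆ T l := by
    intro k l hkl
    exact Finset.biUnion_subset_biUnion_of_subset_left Fs
      (Finset.range_subset_range.mpr (by omega))
  set d : ℕ → ℝ := fun k => δ (T k) (hTAdm k) with hd
  have hdlb : ∀ k, m - 1/(k+1) < d k := fun k =>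
    lt_of_lt_of_le (hFslt k) (hδmono _ _ _ _ (hTsub k))
  have hdub : ∀ k, d k ≤ m := fun k => hδlem _ _
  have hdnn : ∀ k, 0 ≤ d k := fun k => hδnonneg _ _
  set y : ℕ → H := fun k => proj (T k) (hTAdm k) with hy
  -- the key squared-distance bound
  have hkey : ∀ {F F' : Finset (H × H)} (hF : Adm F) (hF' : Adm F'), F ⊆ F' →
      ‖proj F hF - proj F' hF'‖^2 ≤ 2 * ((δ F' hF')^2 - (δ F hF)^2) := by
    intro F F' hF hF' hsub
    exact my_projIneq (hCconv F) (hprojMem F hF) (hCmono hsub (hprojMem F' hF'))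
      (hprojMin F hF)
  -- Cauchy
  have hsqbound : ∀ N k l : ℕ, N ≤ k → k ≤ l → ‖y k - y l‖^2 ≤ 4 * m / (N+1) := by
    intro N k l hNk hkl
    have h1 := hkey (hTAdm k) (hTAdm l) (hTmono hkl)
    have h2 : d k ≤ d l := hδmono _ _ _ _ (hTmono hkl)
    have hmono : (1:ℝ)/(k+1) ≤ 1/(N+1) := by
      apply one_div_le_one_div_of_le
      · positivity
      · have : (N:ℝ) ≤ (k:ℝ) := Nat.cast_le.mpr hNk
        linarith
    have h3 : m - 1/(N+1) < d k := by
      have := hdlb k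
      linarith
    have h4 : d l ≤ m := hdub l
    have h5 : (0:ℝ) ≤ d k := hdnn k
    have h6 : (0:ℝ) < 1/((N:ℝ)+1) := by positivity
    calc ‖y k - y l‖^2 ≤ 2 * ((d l)^2 - (d k)^2) := h1
      _ ≤ 4 * m / (N+1) := by
          have hexp : (d l)^2 - (d k)^2 = (d l - d k) * (d l + d k) := by ring
          have h7 : d l - d k ≤ 1/(N+1) := by linarith
          have h8 : d l + d k ≤ 2 * m := by linarith
          have h9 : (0:ℝ) ≤ d l + d k := by linarith
          rw [hexp]
          rw [div_eq_mul_inv]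
          have := mul_le_mul h7 h8 h9 (le_of_lt h6)
          calc 2 * ((d l - d k) * (d l + d k)) ≤ 2 * (1/(N+1) * (2*m)) := by nlinarith
            _ = 4 * m * ((N:ℝ)+1)⁻¹ := by field_simp; ring
  have hsqbound' : ∀ N k l : ℕ, N ≤ k → N ≤ l → ‖y k - y l‖^2 ≤ 4 * m / (N+1) := by
    intro N k l hNk hNl
    rcases le_total k l with h | h
    · exact hsqbound N k l hNk h
    · rw [norm_sub_rev]; exact hsqbound N l k hNl h
  have hcauchy : CauchySeq y := by
    apply cauchySeq_of_le_tendsto_0 (s := y) (fun N : ℕ => Real.sqrt (4 * m / (N+1)))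
    · intro k l N hNk hNl
      rw [dist_eq_norm]
      have h := hsqbound' N k l hNk hNl
      have : (0:ℝ) ≤ 4 * m / (N+1) := by positivity
      rw [show ‖y k - y l‖ = Real.sqrt (‖y k - y l‖^2) by
        rw [Real.sqrt_sq (norm_nonneg _)]]
      exact Real.sqrt_le_sqrt h
    · have h0 : Filter.Tendsto (fun N : ℕ => 4 * m / ((N:ℝ)+1)) Filter.atTop (𝓝 0) := by
        have := tendsto_one_div_add_atTop_nhds_zero_nat (𝕜 := ℝ)
        have h2 := this.const_mul (4*m)
        simp only [mul_zero] at h2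
        convert h2 using 2 with N
        field_simp
      have hs := (Real.continuous_sqrt.tendsto 0).comp h0
      simpa [Function.comp_def] using hs
  obtain ⟨ylim, hylim⟩ := cauchySeq_tendsto_of_complete hcauchy
  refine ⟨ylim, fun g hg => ?_⟩
  -- enlarge each T k by g
  have hAdm' : ∀ k, Adm (insert g (T k)) := by
    intro k
    refine ⟨?_, Finset.mem_insert_of_mem (hTAdm k).2⟩
    intro x hx
    simp only [Finset.coe_insert, Set.mem_insert_iff] at hx
    rcases hx with rfl | hx
    · exact hg
    · exact (hTAdm k).1 hx
  set z : ℕ → H := fun k => proj (insert g (T k)) (hAdm' k) with hz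
  have hzball : ∀ k, ‖z k - g.2‖ ≤ ‖p - g.1‖ := fun k =>
    hmemC.mp (hprojMem _ (hAdm' k)) g (Finset.mem_insert_self g _)
  have hyz : ∀ k, ‖y k - z k‖^2 ≤ 4 * m / (k+1) := by
    intro k
    have h1 := hkey (hTAdm k) (hAdm' k) (Finset.subset_insert g (T k))
    have h2 : δ (insert g (T k)) (hAdm' k) ≤ m := hδlem _ _
    have h3 : d k ≤ δ (insert g (T k)) (hAdm' k) :=
      hδmono _ _ _ _ (Finset.subset_insert g (T k))
    have h4 : m - 1/(k+1) < d k := hdlb k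
    have h5 : (0:ℝ) ≤ d k := hdnn k
    have h6 : (0:ℝ) < 1/((k:ℝ)+1) := by positivity
    set A : ℝ := δ (insert g (T k)) (hAdm' k) with hA
    have h7 : A - d k ≤ 1/(k+1) := by linarith
    have h8 : A + d k ≤ 2*m := by linarith
    have h9 : (0:ℝ) ≤ A + d k := by
      linarith [hδnonneg (insert g (T k)) (hAdm' k)]
    have h10 : (A - d k) * (A + d k) ≤ 1/(k+1) * (2*m) := mul_le_mul h7 h8 h9 (le_of_lt h6)
    calc ‖y k - z k‖^2 ≤ 2 * (A^2 - (d k)^2) := h1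
      _ = 2 * ((A - d k) * (A + d k)) := by ring
      _ ≤ 2 * (1/(k+1) * (2*m)) := by linarith
      _ = 4 * m / (k+1) := by field_simp; ring
  -- conclusion by epsilon argument
  apply le_of_forall_sub_le
  intro ε hε
  have htends : Filter.Tendsto (fun k => ‖ylim - y k‖) Filter.atTop (𝓝 0) := by
    have := hylim
    rw [Metric.tendsto_atTop] at this
    rw [Metric.tendsto_atTop]
    intro e he
    obtain ⟨N, hN⟩ := this e he
    exact ⟨N, fun n hn => by
      have := hN n hn
      rw [dist_eq_norm] at this ⊢
      simpa [norm_sub_rev] using this⟩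
  have htends2 : Filter.Tendsto (fun k : ℕ => 4 * m / ((k:ℝ)+1)) Filter.atTop (𝓝 0) := by
    have := tendsto_one_div_add_atTop_nhds_zero_nat (𝕜 := ℝ)
    have h2 := this.const_mul (4*m)
    simp only [mul_zero] at h2
    convert h2 using 2 with N
    field_simp
  have hev1 : ∀ᶠ k in Filter.atTop, ‖ylim - y k‖ < ε/2 :=
    htends.eventually_lt_const (by positivity)
  have hev2 : ∀ᶠ k : ℕ in Filter.atTop, 4 * m / ((k:ℝ)+1) < (ε/2)^2 :=
    htends2.eventually_lt_const (by positivity)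
  obtain ⟨k, hk1, hk2⟩ := (hev1.and hev2).exists
  have hyzk : ‖y k - z k‖ < ε/2 := by
    have h := hyz k
    have h2 : ‖y k - z k‖^2 < (ε/2)^2 := lt_of_le_of_lt h hk2
    by_contra hcon
    push_neg at hcon
    have : (ε/2)^2 ≤ ‖y k - z k‖^2 := by
      apply pow_le_pow_left₀ (by positivity) hcon
    linarith
  have hfinal : ‖ylim - g.2‖ ≤ ‖p - g.1‖ + ε := by
    calc ‖ylim - g.2‖ ≤ ‖ylim - y k‖ + ‖y k - z k‖ + ‖z k - g.2‖ := by
          have : ylim - g.2 = (ylim - y k) + (y k - z k) + (z k - g.2) := by abel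
          rw [this]
          exact le_trans (norm_add_le _ _) (by linarith [norm_add_le (ylim - y k) (y k - z k)])
      _ ≤ ‖p - g.1‖ + ε := by
          have := hzball k
          linarith
  linarith

lemma my_kirszbraun (G0 : Set (H × H))
    (h0 : ∀ g ∈ G0, ∀ g' ∈ G0, ‖(g.2 : H) - g'.2‖ ≤ ‖g.1 - g'.1‖) :
    ∃ Q : H → H, LipschitzWith 1 Q ∧ ∀ g ∈ G0, Q g.1 = g.2 := by
  classical
  set S : Set (Set (H × H)) :=
    {G | G0 ⊆ G ∧ ∀ g ∈ G, ∀ g' ∈ G, ‖(g.2 : H) - g'.2‖ ≤ ‖g.1 - g'.1‖} with hS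
  have hchain : ∀ c ⊆ S, IsChain (· ⊆ ·) c → c.Nonempty →
      ∃ ub ∈ S, ∀ s ∈ c, s ⊆ ub := by
    intro c hcS hchain hcne
    refine ⟨⋃₀ c, ⟨?_, ?_⟩, fun s hs => Set.subset_sUnion_of_mem hs⟩
    · obtain ⟨t, ht⟩ := hcne
      exact (hcS ht).1.trans (Set.subset_sUnion_of_mem ht)
    · rintro g hg g' hg'
      obtain ⟨t, htc, hgt⟩ := hg
      obtain ⟨t', ht'c, hgt'⟩ := hg'
      rcases hchain.total htc ht'c with h | h
      · exact (hcS ht'c).2 g (h hgt) g' hgt'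
      · exact (hcS htc).2 g hgt g' (h hgt')
  obtain ⟨Gm, hsub, hmaxP⟩ := zorn_subset_nonempty S hchain G0 ⟨subset_rfl, h0⟩
  have hGm : Gm ∈ S := hmaxP.1
  have htotal : ∀ p : H, ∃ y, (p, y) ∈ Gm := by
    intro p
    obtain ⟨y, hy⟩ := my_onePoint Gm hGm.2 p
    refine ⟨y, ?_⟩
    have hins : insert (p,y) Gm ∈ S := by
      refine ⟨hGm.1.trans (Set.subset_insert _ _), ?_⟩
      rintro g hg g' hg'
      rcases hg with rfl | hg <;> rcases hg' with rfl | hg'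
      · simp
      · simpa using hy g' hg'
      · have h1 := hy g hg
        show ‖g.2 - y‖ ≤ ‖g.1 - p‖
        rw [norm_sub_rev g.2 y, norm_sub_rev g.1 p]
        exact h1
      · exact hGm.2 g hg g' hg'
    have hsubm : Gm ⊆ insert (p,y) Gm := Set.subset_insert _ _
    have := hmaxP.2 hins hsubm
    exact this (Set.mem_insert _ _)
  choose Q hQmem using htotal
  refine ⟨Q, ?_, ?_⟩
  · apply LipschitzWith.of_dist_le_mul
    intro x y
    simp only [NNReal.coe_one, one_mul, dist_eq_norm]
    exact hGm.2 (x, Q x) (hQmem x) (y, Q y) (hQmem y)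
  · intro g hg
    have h1 := hGm.2 (g.1, Q g.1) (hQmem g.1) g (hsub hg)
    simp only [sub_self, norm_zero] at h1
    have h2 : ‖Q g.1 - g.2‖ = 0 := le_antisymm h1 (norm_nonneg _)
    rw [norm_eq_zero, sub_eq_zero] at h2
    exact h2

lemma my_resolventIneq (Q : H → H) (hQ : LipschitzWith 1 Q) (x y : H) :
    0 ≤ (⟪(2:ℝ)⁻¹ • (x - Q x) - (2:ℝ)⁻¹ • (y - Q y),
          (2:ℝ)⁻¹ • (x + Q x) - (2:ℝ)⁻¹ • (y + Q y)⟫ : ℝ) := by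
  rw [my_quarter]
  have h : ‖Q x - Q y‖ ≤ ‖x - y‖ := by
    have := hQ.dist_le_mul x y
    simpa [dist_eq_norm] using this
  have h2 : ‖Q x - Q y‖^2 ≤ ‖x - y‖^2 := pow_le_pow_left₀ (norm_nonneg _) h 2
  nlinarith

end Aux

/-- (Minty-type characterization) A set-valued operator `M` on a real Hilbert space is
maximal monotone iff there exists a nonexpansive (1-Lipschitz) map `Q` such that the
resolvent `(I + M)⁻¹` equals `(1/2)(I + Q)`, i.e. for all `x, u`:
`x − u ∈ M(u)` iff `u = (x + Q(x))/2`. -/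
theorem stmt_18 {H : Type*} [NormedAddCommGroup H] [InnerProductSpace ℝ H]
    [CompleteSpace H] (M : H → Set H) :
    ((∀ u u2 v v2 : H, v ∈ M u → v2 ∈ M u2 → 0 ≤ (⟪v - v2, u - u2⟫ : ℝ)) ∧
      (∀ u v : H, (∀ u2 v2 : H, v2 ∈ M u2 → 0 ≤ (⟪v - v2, u - u2⟫ : ℝ)) → v ∈ M u)) ↔
    (∃ Q : H → H, LipschitzWith 1 Q ∧
      ∀ x u : H, (x - u ∈ M u ↔ u = (2 : ℝ)⁻¹ • (x + Q x))) := by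
  constructor
  · rintro ⟨hmono, hmax⟩
    set G0 : Set (H × H) := {q | ∃ u v : H, v ∈ M u ∧ q.1 = u + v ∧ q.2 = u - v} with hG0
    have hG0ne : ∀ g ∈ G0, ∀ g' ∈ G0, ‖(g.2 : H) - g'.2‖ ≤ ‖g.1 - g'.1‖ := by
      rintro g ⟨u, v, hv, hg1, hg2⟩ g' ⟨u2, v2, hv2, hg1', hg2'⟩
      rw [hg1, hg2, hg1', hg2']
      have hin := hmono u u2 v v2 hv hv2
      have hsq : ‖(u - v) - (u2 - v2)‖^2 ≤ ‖(u + v) - (u2 + v2)‖^2 := by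
        have e1 : ((u - v) - (u2 - v2)) = (u - u2) - (v - v2) := by abel
        have e2 : ((u + v) - (u2 + v2)) = (u - u2) + (v - v2) := by abel
        rw [e1, e2, @norm_sub_sq_real, @norm_add_sq_real]
        have e3 : (⟪u - u2, v - v2⟫ : ℝ) = ⟪v - v2, u - u2⟫ := real_inner_comm _ _
        linarith [hin, e3.ge, e3.le]
      exact le_of_pow_le_pow_left₀ two_ne_zero (norm_nonneg _) hsq
    obtain ⟨Q, hQlip, hQagree⟩ := my_kirszbraun G0 hG0ne
    refine ⟨Q, hQlip, fun x u => ?_⟩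
    constructor
    · intro hxu
      have hmem : ((u + (x - u), u - (x - u)) : H × H) ∈ G0 := ⟨u, x - u, hxu, rfl, rfl⟩
      have hQx := hQagree _ hmem
      simp only at hQx
      have e1 : u + (x - u) = x := by abel
      rw [e1] at hQx
      rw [hQx]
      module
    · intro hu
      apply hmax
      intro u2 v2 hv2
      have hQy := hQagree ((u2 + v2, u2 - v2) : H × H) ⟨u2, v2, hv2, rfl, rfl⟩
      simp only at hQy
      have e1 : (x - u) - v2
          = (2:ℝ)⁻¹ • (x - Q x) - (2:ℝ)⁻¹ • ((u2 + v2) - Q (u2 + v2)) := by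
        rw [hu, hQy]; module
      have e2 : u - u2
          = (2:ℝ)⁻¹ • (x + Q x) - (2:ℝ)⁻¹ • ((u2 + v2) + Q (u2 + v2)) := by
        rw [hu, hQy]; module
      rw [e1, e2]
      exact my_resolventIneq Q hQlip x (u2 + v2)
  · rintro ⟨Q, hQlip, hiff⟩
    constructor
    · intro u u2 v v2 hv hv2
      have h1 : u = (2:ℝ)⁻¹ • ((u + v) + Q (u + v)) :=
        (hiff (u + v) u).mp (by rwa [add_sub_cancel_left])
      have h2 : u2 = (2:ℝ)⁻¹ • ((u2 + v2) + Q (u2 + v2)) :=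
        (hiff (u2 + v2) u2).mp (by rwa [add_sub_cancel_left])
      have hQ1 : Q (u + v) = u - v := by
        have h3 : (2:ℝ) • u = (u + v) + Q (u + v) := by
          calc (2:ℝ) • u = (2:ℝ) • ((2:ℝ)⁻¹ • ((u + v) + Q (u + v))) := by rw [← h1]
            _ = (u + v) + Q (u + v) := by rw [smul_smul]; norm_num
        have h4 := eq_sub_of_add_eq' h3.symm
        rw [h4]; module
      have hQ2 : Q (u2 + v2) = u2 - v2 := by
        have h3 : (2:ℝ) • u2 = (u2 + v2) + Q (u2 + v2) := by
          calc (2:ℝ) • u2 = (2:ℝ) • ((2:ℝ)⁻¹ • ((u2 + v2) + Q (u2 + v2))) := by rw [← h2]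
            _ = (u2 + v2) + Q (u2 + v2) := by rw [smul_smul]; norm_num
        have h4 := eq_sub_of_add_eq' h3.symm
        rw [h4]; module
      have e1 : v - v2
          = (2:ℝ)⁻¹ • ((u + v) - Q (u + v)) - (2:ℝ)⁻¹ • ((u2 + v2) - Q (u2 + v2)) := by
        rw [hQ1, hQ2]; module
      have e2 : u - u2
          = (2:ℝ)⁻¹ • ((u + v) + Q (u + v)) - (2:ℝ)⁻¹ • ((u2 + v2) + Q (u2 + v2)) := by
        rw [hQ1, hQ2]; module
      rw [e1, e2]
      exact my_resolventIneq Q hQlip (u + v) (u2 + v2)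
    · intro u v h
      have hv' : (u + v) - ((2:ℝ)⁻¹ • ((u + v) + Q (u + v)))
          ∈ M ((2:ℝ)⁻¹ • ((u + v) + Q (u + v))) := (hiff _ _).mpr rfl
      have h0 := h _ _ hv'
      have e : u - (2:ℝ)⁻¹ • ((u + v) + Q (u + v))
          = -(v - ((u + v) - (2:ℝ)⁻¹ • ((u + v) + Q (u + v)))) := by module
      rw [e, inner_neg_right] at h0
      have h5 : (⟪v - ((u + v) - (2:ℝ)⁻¹ • ((u + v) + Q (u + v))),
          v - ((u + v) - (2:ℝ)⁻¹ • ((u + v) + Q (u + v)))⟫ : ℝ) = 0 := by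
        have := real_inner_self_nonneg (x := v - ((u + v) - (2:ℝ)⁻¹ • ((u + v) + Q (u + v))))
        linarith
      have h6 : v - ((u + v) - (2:ℝ)⁻¹ • ((u + v) + Q (u + v))) = 0 :=
        inner_self_eq_zero.mp h5
      have h7 : (2:ℝ)⁻¹ • ((u + v) + Q (u + v)) = u := by
        apply sub_eq_zero.mp
        have e2 : (2:ℝ)⁻¹ • ((u + v) + Q (u + v)) - u
            = (v - ((u + v) - (2:ℝ)⁻¹ • ((u + v) + Q (u + v)))) + 0 := by module
        rw [e2, h6]
        abel
      rw [h7] at hv'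
      rwa [add_sub_cancel_left] at hv'
end

section
/- (Continuity of the learned MSE-optimal spectral reconstruction) Let U and V be real Hilbert spaces, (u_n)_{n∈ℕ} an orthonormal family in U, (v_n)_{n∈ℕ} an orthonormal family in V, (σ_n)_{n∈ℕ} a sequence of positive reals with σ_n → 0, and (Δ_n)_{n∈ℕ}, (Π_n)_{n∈ℕ} sequences of positive reals. Define the MSE-optimal spectral coefficients θ_n := σ_n / (σ_n² + Δ_n/Π_n). Then the map f ↦ Σ_{n=1}^∞ θ_n ⟨f, v_n⟩ u_n defines a continuous (bounded) linear operator V → U if and only if there exists a constant c > 0 such that Δ_n ≥ c σ_n Π_n for all but finitely many n. In particular, this condition is fulfilled if there exist c > 0 and n₀ ∈ ℕ such that Δ_n ≥ c Π_n for all n ≥ n₀. -/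
open scoped Topology RealInnerProductSpace ENNReal
open Filter

private lemma aux_bounded_op {U V : Type*}
    [NormedAddCommGroup U] [InnerProductSpace ℝ U] [CompleteSpace U]
    [NormedAddCommGroup V] [InnerProductSpace ℝ V]
    (u : ℕ → U) (v : ℕ → V)
    (hu : Orthonormal ℝ u) (hv : Orthonormal ℝ v)
    (θ : ℕ → ℝ) (M : ℝ) (hM : 0 ≤ M) (hθ : ∀ n, |θ n| ≤ M) :
    ∃ T : V →L[ℝ] U, ∀ f : V, HasSum (fun n => (θ n * ⟪f, v n⟫) • u n) (T f) := by
  classical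
  have hfam : OrthogonalFamily ℝ (fun _ : ℕ => ℝ)
      (fun n => LinearIsometry.toSpanSingleton ℝ U (hu.1 n)) := hu.orthogonalFamily
  have key : ∀ f : V, Summable fun n => ‖θ n * ⟪f, v n⟫‖ ^ 2 := by
    intro f
    have h1 : Summable fun n => M ^ 2 * ‖⟪v n, f⟫‖ ^ 2 :=
      (hv.inner_products_summable f).mul_left _
    refine h1.of_nonneg_of_le (fun n => by positivity) fun n => ?_
    rw [norm_mul, mul_pow, real_inner_comm f (v n)]
    have hθn : ‖θ n‖ ^ 2 ≤ M ^ 2 := by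
      have := hθ n
      rw [Real.norm_eq_abs]
      nlinarith [abs_nonneg (θ n)]
    exact mul_le_mul_of_nonneg_right hθn (by positivity)
  have hmem : ∀ f : V, Memℓp (fun n => θ n * ⟪f, v n⟫) 2 := by
    intro f
    refine memℓp_gen ?_
    have h2 : ((2 : ℝ≥0∞).toReal) = ((2 : ℕ) : ℝ) := by norm_num
    simp only [h2, Real.rpow_natCast]
    exact key f
  let Cfun : V → lp (fun _ : ℕ => ℝ) 2 := fun f => ⟨fun n => θ n * ⟪f, v n⟫, hmem f⟩
  have Cnorm : ∀ f, ‖Cfun f‖ ≤ M * ‖f‖ := by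
    intro f
    have hp2 : (0 : ℝ) < (2 : ℝ≥0∞).toReal := by norm_num
    have hsq : ‖Cfun f‖ ^ (2 : ℕ) = ∑' n, ‖θ n * ⟪f, v n⟫‖ ^ (2 : ℕ) := by
      have h := lp.norm_rpow_eq_tsum hp2 (Cfun f)
      rw [show ((2 : ℝ≥0∞).toReal) = ((2 : ℕ) : ℝ) by norm_num] at h
      simp only [Real.rpow_natCast] at h
      exact h
    have h1 : ‖Cfun f‖ ^ (2 : ℕ) ≤ (M * ‖f‖) ^ (2 : ℕ) := by
      rw [hsq]
      have hbound : ∑' n, ‖θ n * ⟪f, v n⟫‖ ^ 2 ≤ ∑' n, M ^ 2 * ‖⟪v n, f⟫‖ ^ 2 := by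
        refine Summable.tsum_le_tsum (fun n => ?_) (key f) ((hv.inner_products_summable f).mul_left _)
        rw [norm_mul, mul_pow, real_inner_comm f (v n)]
        have hθn : ‖θ n‖ ^ 2 ≤ M ^ 2 := by
          have := hθ n
          rw [Real.norm_eq_abs]
          nlinarith [abs_nonneg (θ n)]
        exact mul_le_mul_of_nonneg_right hθn (by positivity)
      refine hbound.trans ?_
      rw [tsum_mul_left]
      have hb := hv.tsum_inner_products_le f
      calc M ^ 2 * ∑' n, ‖⟪v n, f⟫‖ ^ 2 ≤ M ^ 2 * ‖f‖ ^ 2 :=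
            mul_le_mul_of_nonneg_left hb (by positivity)
        _ = (M * ‖f‖) ^ 2 := by ring
    have h2 := Real.sqrt_le_sqrt h1
    rwa [Real.sqrt_sq (norm_nonneg _), Real.sqrt_sq (by positivity)] at h2
  let Clin : V →ₗ[ℝ] lp (fun _ : ℕ => ℝ) 2 :=
    { toFun := Cfun
      map_add' := by
        intro f g
        apply Subtype.ext
        funext n
        show θ n * ⟪f + g, v n⟫ = (Cfun f + Cfun g : lp (fun _ : ℕ => ℝ) 2) n
        rw [lp.coeFn_add]
        show θ n * ⟪f + g, v n⟫ = θ n * ⟪f, v n⟫ + θ n * ⟪g, v n⟫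
        rw [inner_add_left]; ring
      map_smul' := by
        intro c f
        apply Subtype.ext
        funext n
        show θ n * ⟪c • f, v n⟫ = (c • Cfun f : lp (fun _ : ℕ => ℝ) 2) n
        rw [lp.coeFn_smul]
        show θ n * ⟪c • f, v n⟫ = c • (θ n * ⟪f, v n⟫)
        rw [real_inner_smul_left]
        simp [mul_comm, mul_left_comm] }
  let Ccont : V →L[ℝ] lp (fun _ : ℕ => ℝ) 2 := Clin.mkContinuous M Cnorm
  refine ⟨(hfam.linearIsometry.toContinuousLinearMap).comp Ccont, fun f => ?_⟩
  have h := hfam.hasSum_linearIsometry (Cfun f)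
  have happ : ∀ n, (LinearIsometry.toSpanSingleton ℝ U (hu.1 n)) ((Cfun f : ∀ _ : ℕ, ℝ) n)
      = (θ n * ⟪f, v n⟫) • u n := by
    intro n
    rw [LinearIsometry.toSpanSingleton_apply]
  simp only [happ] at h
  exact h

/-- Continuity of the learned MSE-optimal spectral reconstruction: with orthonormal
families `(u_n)`, `(v_n)`, positive singular values `σ_n → 0` and positive noise/data
variances `Δ_n`, `Π_n`, the map `f ↦ Σ_n (σ_n/(σ_n² + Δ_n/Π_n)) ⟨f, v_n⟩ u_n` defines a
continuous (bounded) linear operator `V → U` iff there is `c > 0` with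
`Δ_n ≥ c σ_n Π_n` for all but finitely many `n`; in particular this holds if
`Δ_n ≥ c Π_n` for some `c > 0` and all sufficiently large `n`. -/
theorem stmt_19 {U V : Type*}
    [NormedAddCommGroup U] [InnerProductSpace ℝ U] [CompleteSpace U]
    [NormedAddCommGroup V] [InnerProductSpace ℝ V] [CompleteSpace V]
    (u : ℕ → U) (v : ℕ → V)
    (hu : Orthonormal ℝ u) (hv : Orthonormal ℝ v)
    (σ Δ P : ℕ → ℝ)
    (hσ : ∀ n, 0 < σ n) (hσ0 : Tendsto σ atTop (𝓝 0))
    (hΔ : ∀ n, 0 < Δ n) (hP : ∀ n, 0 < P n) :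
    ((∃ T : V →L[ℝ] U, ∀ f : V,
        HasSum (fun n => ((σ n / (σ n ^ 2 + Δ n / P n)) * ⟪f, v n⟫) • u n) (T f)) ↔
      ∃ c > (0 : ℝ), ∃ N : ℕ, ∀ n ≥ N, Δ n ≥ c * (σ n * P n)) ∧
    ((∃ c > (0 : ℝ), ∃ N : ℕ, ∀ n ≥ N, Δ n ≥ c * P n) →
      ∃ T : V →L[ℝ] U, ∀ f : V,
        HasSum (fun n => ((σ n / (σ n ^ 2 + Δ n / P n)) * ⟪f, v n⟫) • u n) (T f)) := by
  classical
  set θ : ℕ → ℝ := fun n => σ n / (σ n ^ 2 + Δ n / P n) with hθdef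
  have hd : ∀ n, 0 < σ n ^ 2 + Δ n / P n := fun n =>
    add_pos_of_nonneg_of_pos (sq_nonneg _) (div_pos (hΔ n) (hP n))
  have hθpos : ∀ n, 0 < θ n := fun n => div_pos (hσ n) (hd n)
  have main : (∃ T : V →L[ℝ] U, ∀ f : V,
        HasSum (fun n => (θ n * ⟪f, v n⟫) • u n) (T f)) ↔
      ∃ c > (0 : ℝ), ∃ N : ℕ, ∀ n ≥ N, Δ n ≥ c * (σ n * P n) := by
    constructor
    · rintro ⟨T, hT⟩
      -- θ is bounded by ‖T‖
      have hθle : ∀ m, θ m ≤ ‖T‖ := by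
        intro m
        have hs := hT (v m)
        have h0 : (fun n => (θ n * ⟪v m, v n⟫) • u n)
            = fun n => if n = m then θ m • u m else 0 := by
          funext n
          rcases eq_or_ne n m with rfl | h
          · simp [orthonormal_iff_ite.mp hv n n, hv.1 n]
          · simp [orthonormal_iff_ite.mp hv m n, Ne.symm h, h]
        rw [h0] at hs
        have heq : θ m • u m = T (v m) := (hasSum_ite_eq m (θ m • u m)).unique hs
        have h1 : ‖T (v m)‖ ≤ ‖T‖ * ‖v m‖ := T.le_opNorm _
        rw [hv.1 m, mul_one, ← heq, norm_smul, hu.1 m, mul_one, Real.norm_eq_abs,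
          abs_of_pos (hθpos m)] at h1
        exact h1
      set M := ‖T‖ with hMdef
      have hM0 : 0 < M := lt_of_lt_of_le (hθpos 0) (hθle 0)
      have hev : ∀ᶠ n in atTop, σ n < 1 / (2 * M) :=
        hσ0.eventually_lt_const (by positivity)
      obtain ⟨N, hN⟩ := eventually_atTop.mp hev
      refine ⟨1 / (2 * M), by positivity, N, fun n hn => ?_⟩
      have hσn := hN n hn
      have h1 : σ n ≤ M * (σ n ^ 2 + Δ n / P n) := by
        have := hθle n
        rw [hθdef] at this
        have := (div_le_iff₀ (hd n)).mp this
        linarith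
      have hM' : 0 < 2 * M := by positivity
      have h2 : σ n * (1 / (2 * M)) ≤ Δ n / P n := by
        have h5 : σ n * (2 * M) < 1 := (lt_div_iff₀ hM').mp hσn
        have hD : 0 < Δ n / P n := div_pos (hΔ n) (hP n)
        rw [mul_one_div, div_le_iff₀ hM']
        nlinarith [hσ n, h1, h5, hD]
      have h4 := (le_div_iff₀ (hP n)).mp h2
      show Δ n ≥ 1 / (2 * M) * (σ n * P n)
      nlinarith [h4]
    · rintro ⟨c, hc, N, hN⟩
      have hθbd : ∀ n, |θ n| ≤ 1 / c + ∑ k ∈ Finset.range N, θ k := by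
        intro n
        rw [abs_of_pos (hθpos n)]
        rcases lt_or_ge n N with h | h
        · calc θ n ≤ ∑ k ∈ Finset.range N, θ k :=
              Finset.single_le_sum (fun i _ => (hθpos i).le) (Finset.mem_range.mpr h)
            _ ≤ _ := le_add_of_nonneg_left (by positivity)
        · have h2 : c * σ n ≤ Δ n / P n := (le_div_iff₀ (hP n)).mpr (by nlinarith [hN n h])
          have h3 : θ n ≤ 1 / c := by
            rw [hθdef]
            dsimp only
            rw [div_le_div_iff₀ (hd n) hc]
            nlinarith [sq_nonneg (σ n)]
          exact h3.trans (le_add_of_nonneg_right (Finset.sum_nonneg fun i _ => (hθpos i).le))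
      exact aux_bounded_op u v hu hv θ _
        (le_trans (abs_nonneg _) (hθbd 0)) hθbd
  refine ⟨main, fun h => main.mpr ?_⟩
  obtain ⟨c, hc, N, hN⟩ := h
  have hev : ∀ᶠ n in atTop, σ n < 1 := hσ0.eventually_lt_const one_pos
  obtain ⟨N1, hN1⟩ := eventually_atTop.mp hev
  refine ⟨c, hc, max N N1, fun n hn => ?_⟩
  have h1 := hN n (le_trans (le_max_left _ _) hn)
  have h2 := hN1 n (le_trans (le_max_right _ _) hn)
  have key : (0:ℝ) ≤ c * P n * (1 - σ n) :=
    mul_nonneg (mul_nonneg hc.le (hP n).le) (by linarith)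
  nlinarith [key]
end
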